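/- arXiv:1610.01278 — 3 statements merged into one kernel-verified Lean document; each statement's English description precedes it below -/
import Mathlib

section
/- Let G/K be a generalized flag manifold with exactly two isotropy summands 𝔪 = 𝔪₁ ⊕ 𝔪₂ (with the convention [𝔪₁, 𝔪₁] ⊆ 𝔨 ⊕ 𝔪₂), and let G/K₁ be the corresponding M-space. Suppose there exists j ∈ {1, 2} such that 𝔪ⱼ is reducible as an Ad(K₁)-module while 𝔪ᵢ (i ≠ j) is irreducible as an Ad(K₁)-module. If (G/K₁, g) is a g.o. space, then g = ⟨·,·⟩ = μ B(·,·)|_{𝔰 ⊕ 𝔪ⱼ} + μᵢ B(·,·)|_{𝔪ᵢ} for some μ, μᵢ > 0. -/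
open Module

/-- A submodule `W` of a Lie algebra is invariant under the (infinitesimal) adjoint action
of the Lie subalgebra `k`.  For a connected Lie group this corresponds to `Ad(K)`-invariance. -/
def AdInvariant {𝔤 : Type*} [LieRing 𝔤] [LieAlgebra ℝ 𝔤]
    (k : LieSubalgebra ℝ 𝔤) (W : Submodule ℝ 𝔤) : Prop :=
  ∀ x ∈ k, ∀ w ∈ W, ⁅x, w⁆ ∈ W

/-- `W` is a nonzero irreducible module for the adjoint action of `k`
(i.e. an irreducible `Ad(K)`-module). -/
def AdIrreducible {𝔤 : Type*} [LieRing 𝔤] [LieAlgebra ℝ 𝔤]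
    (k : LieSubalgebra ℝ 𝔤) (W : Submodule ℝ 𝔤) : Prop :=
  AdInvariant k W ∧ W ≠ ⊥ ∧
    ∀ U : Submodule ℝ 𝔤, U ≤ W → AdInvariant k U → U = ⊥ ∨ U = W

/-- `W` is a reducible `Ad(K)`-module: invariant, with a proper nonzero invariant submodule. -/
def AdReducible {𝔤 : Type*} [LieRing 𝔤] [LieAlgebra ℝ 𝔤]
    (k : LieSubalgebra ℝ 𝔤) (W : Submodule ℝ 𝔤) : Prop :=
  AdInvariant k W ∧ ∃ U : Submodule ℝ 𝔤, U ≤ W ∧ AdInvariant k U ∧ U ≠ ⊥ ∧ U ≠ W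

/-- Equivalence of two `Ad(K)`-modules `U` and `V`: an injective intertwining linear map
carrying `U` onto `V`. -/
def AdEquiv {𝔤 : Type*} [LieRing 𝔤] [LieAlgebra ℝ 𝔤]
    (k : LieSubalgebra ℝ 𝔤) (U V : Submodule ℝ 𝔤) : Prop :=
  ∃ f : 𝔤 →ₗ[ℝ] 𝔤, Submodule.map f U = V ∧ (∀ u ∈ U, f u = 0 → u = 0) ∧
    ∀ x ∈ k, ∀ u ∈ U, f ⁅x, u⁆ = ⁅x, f u⁆

/-- The g.o. property of the `G`-invariant metric with associated operator `Λ` on the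
homogeneous space with isotropy algebra `k` and tangent space `n`: every geodesic through
the origin is homogeneous, i.e. (by the standard criterion) for every `x ∈ n` there is
`a ∈ k` such that `⁅a + x, Λ x⁆ ∈ k`. -/
def IsGOMetric {𝔤 : Type*} [LieRing 𝔤] [LieAlgebra ℝ 𝔤]
    (k : LieSubalgebra ℝ 𝔤) (n : Submodule ℝ 𝔤) (Λ : 𝔤 →ₗ[ℝ] 𝔤) : Prop :=
  ∀ x ∈ n, ∃ a ∈ k, ⁅a + x, Λ x⁆ ∈ k.toSubmodule

open Polynomial in

private lemma quad_contra_pos (a b c A B C : ℝ) (ha : 0 < a) (hC : 0 < C)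
    (hCS : B ^ 2 ≤ A * C) (hrel : a * A + b * B + c * C = 0)
    (hnoroot : ∀ t : ℝ, a * t ^ 2 + b * t + c ≠ 0) : False := by
  have hdisc : b ^ 2 - 4 * a * c < 0 := by
    by_contra hd
    push_neg at hd
    set s := Real.sqrt (b ^ 2 - 4 * a * c) with hs_def
    have hs : s ^ 2 = b ^ 2 - 4 * a * c := Real.sq_sqrt (by linarith)
    set t := (-b + s) / (2 * a) with ht_def
    have h2at : 2 * a * t = -b + s := by
      rw [ht_def]
      field_simp
    have hkey : 4 * a * (a * t ^ 2 + b * t + c) = 0 := by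
      have h1 : 4 * a * (a * t ^ 2 + b * t + c)
          = (2 * a * t) ^ 2 + 2 * b * (2 * a * t) + 4 * a * c := by ring
      rw [h1, h2at]
      nlinarith [hs]
    have := mul_eq_zero.mp hkey
    rcases this with h | h
    · linarith
    · exact hnoroot t h
  -- Cauchy–Schwarz contradiction
  have h0 : a * A * C + b * B * C + c * C * C = 0 := by
    have := congrArg (· * C) hrel
    simpa [add_mul, mul_assoc] using this
  have h1 : a * B ^ 2 + b * B * C + c * C ^ 2 ≤ 0 := by
    nlinarith [mul_le_mul_of_nonneg_left hCS ha.le, h0]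
  have h2 : 4 * a * (a * B ^ 2 + b * B * C + c * C ^ 2) ≤ 0 := by nlinarith [h1, ha]
  nlinarith [h2, sq_nonneg (2 * a * B + b * C), hdisc, mul_pos hC hC]

private lemma quad_contra (a b c A B C : ℝ) (ha : a ≠ 0) (hC : 0 < C)
    (hCS : B ^ 2 ≤ A * C) (hrel : a * A + b * B + c * C = 0)
    (hnoroot : ∀ t : ℝ, a * t ^ 2 + b * t + c ≠ 0) : False := by
  rcases ha.lt_or_gt with h | h
  · exact quad_contra_pos (-a) (-b) (-c) A B C (by linarith) hC hCS
      (by linarith) (fun t ht => hnoroot t (by linarith))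
  · exact quad_contra_pos a b c A B C h hC hCS hrel hnoroot

open Polynomial in


lemma exists_real_eigenvector {V : Type*} [AddCommGroup V] [Module ℝ V]
    [FiniteDimensional ℝ V] [Nontrivial V]
    (Φ : V →ₗ[ℝ] V →ₗ[ℝ] ℝ) (hsymm : ∀ x y, Φ x y = Φ y x)
    (hpos : ∀ x, x ≠ 0 → 0 < Φ x x)
    (f : Module.End ℝ V) (hf : ∀ x y, Φ (f x) y = Φ x (f y)) :
    ∃ (c : ℝ) (x : V), x ≠ 0 ∧ f x = c • x := by
  have hΦnonneg : ∀ x, 0 ≤ Φ x x := by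
    intro x
    rcases eq_or_ne x 0 with h | h
    · simp [h]
    · exact (hpos x h).le
  have hnontrivEnd : Nontrivial (Module.End ℝ V) := by
    obtain ⟨v, hv⟩ := exists_ne (0 : V)
    exact ⟨0, 1, fun h => hv (by simpa using (LinearMap.ext_iff.mp h.symm v))⟩
  have hint : IsIntegral ℝ f := Algebra.IsIntegral.isIntegral f
  have hm0 : minpoly ℝ f ≠ 0 := minpoly.ne_zero hint
  have hmdeg : 0 < (minpoly ℝ f).natDegree := minpoly.natDegree_pos hint
  have hmnu : ¬ IsUnit (minpoly ℝ f) := by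
    intro h
    have := Polynomial.natDegree_eq_zero_of_isUnit h
    omega
  obtain ⟨p, hp_irr, hp_dvd⟩ := WfDvdMonoid.exists_irreducible_factor hmnu hm0
  have hdeg1 : 0 < p.natDegree := by
    rcases Nat.eq_zero_or_pos p.natDegree with h | h
    · exfalso
      apply hp_irr.not_isUnit
      have hpC : p = C (p.coeff 0) := Polynomial.eq_C_of_natDegree_eq_zero h
      rw [hpC]
      refine Polynomial.isUnit_C.mpr (IsUnit.mk0 _ ?_)
      intro hc
      exact hp_irr.ne_zero (by rw [hpC, hc, map_zero])
    · exact h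
  -- the kernel of `aeval f p` is nonzero
  have hker : LinearMap.ker (Polynomial.aeval f p) ≠ ⊥ := by
    intro hbot
    obtain ⟨q, hq⟩ := hp_dvd
    have hq0 : q ≠ 0 := by
      intro h; rw [h, mul_zero] at hq; exact hm0 hq
    have haq : Polynomial.aeval f q = 0 := by
      have h1 : Polynomial.aeval f (minpoly ℝ f) = 0 := minpoly.aeval ℝ f
      rw [hq, map_mul] at h1
      ext x
      have h2 : (Polynomial.aeval f p) ((Polynomial.aeval f q) x) = 0 := by
        have := LinearMap.ext_iff.mp h1 x
        simpa [Module.End.mul_apply] using this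
      have hx : (Polynomial.aeval f q) x ∈ LinearMap.ker (Polynomial.aeval f p) := h2
      rw [hbot] at hx
      simpa using hx
    have hdvd2 : minpoly ℝ f ∣ q := minpoly.dvd ℝ f haq
    have h1 : (minpoly ℝ f).natDegree ≤ q.natDegree := Polynomial.natDegree_le_of_dvd hdvd2 hq0
    have h2 : (minpoly ℝ f).natDegree = p.natDegree + q.natDegree := by
      rw [hq, Polynomial.natDegree_mul hp_irr.ne_zero hq0]
    omega
  obtain ⟨x, hxmem, hx0⟩ := (Submodule.ne_bot_iff _).mp hker
  have hxker : (Polynomial.aeval f p) x = 0 := hxmem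
  have hdeg2 : p.natDegree ≤ 2 := hp_irr.natDegree_le_two
  have hdegor : p.natDegree = 1 ∨ p.natDegree = 2 := by omega
  rcases hdegor with hdeg | hdeg
  · -- degree one
    have hp_eq : p = C (p.coeff 1) * X + C (p.coeff 0) :=
      Polynomial.eq_X_add_C_of_natDegree_le_one (by omega)
    have ha : p.coeff 1 ≠ 0 := by
      intro h
      rw [hp_eq, h, map_zero, zero_mul, zero_add] at hdeg
      simp [Polynomial.natDegree_C] at hdeg
    have hx : p.coeff 1 • f x + p.coeff 0 • x = 0 := by
      rw [hp_eq] at hxker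
      simpa [map_add, map_mul, Polynomial.aeval_C, Polynomial.aeval_X,
        Module.End.mul_apply, LinearMap.add_apply, Module.algebraMap_end_apply,
        Algebra.smul_def] using hxker
    refine ⟨-(p.coeff 0) / p.coeff 1, x, hx0, ?_⟩
    have h1 : p.coeff 1 • f x = (-(p.coeff 0)) • x := by
      rw [neg_smul]
      exact eq_neg_of_add_eq_zero_left hx
    have h2 : f x = (p.coeff 1)⁻¹ • ((-(p.coeff 0)) • x) := by
      rw [← h1, smul_smul, inv_mul_cancel₀ ha, one_smul]
    rw [h2, smul_smul, div_eq_inv_mul]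
  · -- degree two: derive a contradiction
    exfalso
    have ha0 : p.coeff 2 ≠ 0 := by
      have h : p.leadingCoeff ≠ 0 := Polynomial.leadingCoeff_ne_zero.mpr hp_irr.ne_zero
      rwa [Polynomial.leadingCoeff, hdeg] at h
    obtain ⟨c0, hc0⟩ : ∃ z, p.coeff 0 = z := ⟨_, rfl⟩
    obtain ⟨c1, hc1⟩ : ∃ z, p.coeff 1 = z := ⟨_, rfl⟩
    obtain ⟨c2, hc2⟩ : ∃ z, p.coeff 2 = z := ⟨_, rfl⟩
    have ha : c2 ≠ 0 := hc2 ▸ ha0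
    have hp_eq : p = Polynomial.monomial 0 c0 + Polynomial.monomial 1 c1
        + Polynomial.monomial 2 c2 := by
      have h3 : p = ∑ i ∈ Finset.range 3, Polynomial.monomial i (p.coeff i) :=
        p.as_sum_range' 3 (by omega)
      rw [Finset.sum_range_succ, Finset.sum_range_succ, Finset.sum_range_one,
        hc0, hc1, hc2] at h3
      exact h3
    have heq : c2 • (f (f x)) + c1 • (f x) + c0 • x = 0 := by
      rw [hp_eq] at hxker
      simpa [map_add, Polynomial.aeval_monomial, Module.End.mul_apply,
        LinearMap.add_apply, Module.algebraMap_end_apply, pow_succ, pow_zero,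
        Module.End.one_apply, add_comm, add_left_comm, add_assoc] using hxker
    have hrel : c2 * (Φ (f x) (f x)) + c1 * (Φ (f x) x) + c0 * (Φ x x) = 0 := by
      have h4 := congrArg (fun z => Φ z x) heq
      simpa [map_add, map_smul, LinearMap.add_apply, LinearMap.smul_apply,
        smul_eq_mul, hf (f x) x] using h4
    have hCv : 0 < Φ x x := hpos x hx0
    have hCS : (Φ (f x) x) ^ 2 ≤ (Φ (f x) (f x)) * (Φ x x) := by
      rcases eq_or_ne (f x) 0 with h | h
      · simp [h]
      · have hApos : 0 < Φ (f x) (f x) := hpos _ h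
        have hexp : 0 ≤ Φ ((Φ (f x) (f x)) • x - (Φ (f x) x) • f x)
            ((Φ (f x) (f x)) • x - (Φ (f x) x) • f x) := hΦnonneg _
        have hsx : Φ x (f x) = Φ (f x) x := hsymm x (f x)
        simp only [map_sub, map_smul, LinearMap.sub_apply, LinearMap.smul_apply,
          smul_eq_mul, hsx] at hexp
        nlinarith [hexp, hApos, hCv]
    have hnoroot : ∀ t : ℝ, c2 * t ^ 2 + c1 * t + c0 ≠ 0 := by
      intro t ht
      have hroot : p.IsRoot t := by
        have hev : p.eval t = c0 + c1 * t + c2 * t ^ 2 := by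
          rw [hp_eq]
          simp [Polynomial.eval_monomial]
          try ring
        have : p.eval t = 0 := by rw [hev]; linarith [ht]
        exact this
      obtain ⟨g, hg⟩ := (Polynomial.dvd_iff_isRoot).mpr hroot
      rcases hp_irr.isUnit_or_isUnit hg with h | h
      · exact Polynomial.not_isUnit_X_sub_C t h
      · have hg0 : g ≠ 0 := by
          intro h0; rw [h0, mul_zero] at hg; exact hp_irr.ne_zero hg
        have : p.natDegree = 1 := by
          rw [hg, Polynomial.natDegree_mul (Polynomial.X_sub_C_ne_zero t) hg0,
            Polynomial.natDegree_X_sub_C, Polynomial.natDegree_eq_zero_of_isUnit h]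
        omega
    exact quad_contra c2 c1 c0 (Φ (f x) (f x)) (Φ (f x) x) (Φ x x) ha hCv hCS hrel hnoroot

lemma killing_scalar {𝔤 : Type*} [LieRing 𝔤] [LieAlgebra ℝ 𝔤] [FiniteDimensional ℝ 𝔤]
    (hcompact : ∀ x : 𝔤, x ≠ 0 → killingForm ℝ 𝔤 x x < 0)
    (𝔨 : LieSubalgebra ℝ 𝔤) (W : Submodule ℝ 𝔤) (hW : AdIrreducible 𝔨 W)
    (T : 𝔤 →ₗ[ℝ] 𝔤) (hTW : ∀ x ∈ W, T x ∈ W)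
    (hsym : ∀ x ∈ W, ∀ y ∈ W, killingForm ℝ 𝔤 (T x) y = killingForm ℝ 𝔤 x (T y))
    (hequiv : ∀ k ∈ 𝔨, ∀ x ∈ W, T ⁅k, x⁆ = ⁅k, T x⁆) :
    ∃ c : ℝ, ∀ x ∈ W, T x = c • x := by
  haveI : Nontrivial W := Submodule.nontrivial_iff_ne_bot.mpr hW.2.1
  let Φ : ↥W →ₗ[ℝ] ↥W →ₗ[ℝ] ℝ := LinearMap.mk₂ ℝ
    (fun x y => -killingForm ℝ 𝔤 (x : 𝔤) (y : 𝔤))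
    (by intro x x' y; simp [map_add]; ring)
    (by intro a x y; simp)
    (by intro x y y'; simp [map_add]; ring)
    (by intro a x y; simp)
  have hΦ_apply : ∀ x y : ↥W, Φ x y = -killingForm ℝ 𝔤 (x : 𝔤) (y : 𝔤) := fun x y => rfl
  let f : Module.End ℝ ↥W := T.restrict hTW
  have hf_apply : ∀ x : ↥W, (f x : 𝔤) = T (x : 𝔤) := fun x => rfl
  obtain ⟨c, x, hx0, heig⟩ := exists_real_eigenvector Φ
    (fun x y => by simp only [hΦ_apply]; rw [LieModule.traceForm_comm])
    (fun x hx => by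
      have hx' : (x : 𝔤) ≠ 0 := fun h => hx (Subtype.ext h)
      have := hcompact _ hx'
      simp only [hΦ_apply]; linarith)
    f
    (fun x y => by
      simp only [hΦ_apply, hf_apply]
      rw [hsym _ x.2 _ y.2])
  refine ⟨c, ?_⟩
  have hinv : AdInvariant 𝔨 (W ⊓ LinearMap.ker (T - c • LinearMap.id)) := by
    intro k hk w hw
    obtain ⟨hwW, hwker⟩ := Submodule.mem_inf.mp hw
    have hTw : T w = c • w := by
      have := LinearMap.mem_ker.mp hwker
      simp only [LinearMap.sub_apply, LinearMap.smul_apply, LinearMap.id_apply] at this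
      exact sub_eq_zero.mp this
    exact Submodule.mem_inf.mpr ⟨hW.1 k hk w hwW, LinearMap.mem_ker.mpr (by
      simp only [LinearMap.sub_apply, LinearMap.smul_apply, LinearMap.id_apply]
      rw [hequiv k hk w hwW, hTw, lie_smul, sub_self])⟩
  rcases hW.2.2 _ inf_le_left hinv with hbot | heq
  · exfalso
    have hxmem : (x : 𝔤) ∈ W ⊓ LinearMap.ker (T - c • LinearMap.id) := by
      refine Submodule.mem_inf.mpr ⟨x.2, LinearMap.mem_ker.mpr ?_⟩
      have : T (x : 𝔤) = c • (x : 𝔤) := by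
        rw [← hf_apply, heig]
        simp
      simp only [LinearMap.sub_apply, LinearMap.smul_apply, LinearMap.id_apply, this, sub_self]
    rw [hbot] at hxmem
    exact hx0 (Subtype.ext (by simpa using hxmem))
  · intro y hy
    have hymem : y ∈ W ⊓ LinearMap.ker (T - c • LinearMap.id) := by rw [heq]; exact hy
    have := LinearMap.mem_ker.mp (Submodule.mem_inf.mp hymem).2
    simp only [LinearMap.sub_apply, LinearMap.smul_apply, LinearMap.id_apply] at this
    exact sub_eq_zero.mp this

lemma killing_skew_prop {𝔤 : Type*} [LieRing 𝔤] [LieAlgebra ℝ 𝔤] [FiniteDimensional ℝ 𝔤]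
    (hcompact : ∀ x : 𝔤, x ≠ 0 → killingForm ℝ 𝔤 x x < 0)
    (𝔨 : LieSubalgebra ℝ 𝔤) (W : Submodule ℝ 𝔤) (hW : AdIrreducible 𝔨 W)
    (S Tm : 𝔤 →ₗ[ℝ] 𝔤)
    (hSW : ∀ x ∈ W, S x ∈ W) (hTW : ∀ x ∈ W, Tm x ∈ W)
    (hSskew : ∀ x ∈ W, ∀ y ∈ W, killingForm ℝ 𝔤 (S x) y = -killingForm ℝ 𝔤 x (S y))
    (hTskew : ∀ x ∈ W, ∀ y ∈ W, killingForm ℝ 𝔤 (Tm x) y = -killingForm ℝ 𝔤 x (Tm y))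
    (hSequiv : ∀ k ∈ 𝔨, ∀ x ∈ W, S ⁅k, x⁆ = ⁅k, S x⁆)
    (hTequiv : ∀ k ∈ 𝔨, ∀ x ∈ W, Tm ⁅k, x⁆ = ⁅k, Tm x⁆)
    (hcomm : ∀ x ∈ W, S (Tm x) = Tm (S x))
    (hS0 : ∃ x ∈ W, S x ≠ 0) :
    ∃ ρ : ℝ, ∀ x ∈ W, Tm x = ρ • S x := by
  obtain ⟨x₀, hx₀W, hSx₀⟩ := hS0
  obtain ⟨c, hc⟩ := killing_scalar hcompact 𝔨 W hW (S ∘ₗ S)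
    (fun x hx => hSW _ (hSW _ hx))
    (fun x hx y hy => by
      simp only [LinearMap.comp_apply]
      rw [hSskew _ (hSW _ hx) _ hy, hSskew _ hx _ (hSW _ hy)]
      ring)
    (fun k hk x hx => by
      simp only [LinearMap.comp_apply]
      rw [hSequiv k hk x hx, hSequiv k hk _ (hSW _ hx)])
  obtain ⟨e, he⟩ := killing_scalar hcompact 𝔨 W hW (S ∘ₗ Tm)
    (fun x hx => hSW _ (hTW _ hx))
    (fun x hx y hy => by
      simp only [LinearMap.comp_apply]
      rw [hSskew _ (hTW _ hx) _ hy, hTskew _ hx _ (hSW _ hy), hcomm _ hy]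
      ring)
    (fun k hk x hx => by
      simp only [LinearMap.comp_apply]
      rw [hTequiv k hk x hx, hSequiv k hk _ (hTW _ hx)])
  have hcS : ∀ x ∈ W, S (S x) = c • x := by
    intro x hx
    have := hc x hx
    simpa using this
  have heS : ∀ x ∈ W, S (Tm x) = e • x := by
    intro x hx
    have := he x hx
    simpa using this
  have hx₀0 : x₀ ≠ 0 := fun h => hSx₀ (by rw [h, map_zero])
  have hcneg : c < 0 := by
    have h1 : killingForm ℝ 𝔤 (S (S x₀)) x₀ = -killingForm ℝ 𝔤 (S x₀) (S x₀) :=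
      hSskew _ (hSW _ hx₀W) _ hx₀W
    have h2 : killingForm ℝ 𝔤 (S x₀) (S x₀) < 0 := hcompact _ hSx₀
    have h3 : killingForm ℝ 𝔤 x₀ x₀ < 0 := hcompact _ hx₀0
    rw [hcS _ hx₀W] at h1
    simp only [map_smul, LinearMap.smul_apply, smul_eq_mul] at h1
    nlinarith [h1, h2, h3]
  have hker : W ⊓ LinearMap.ker S = ⊥ := by
    rcases hW.2.2 (W ⊓ LinearMap.ker S) inf_le_left (by
      intro k hk w hw
      obtain ⟨hwW, hwker⟩ := Submodule.mem_inf.mp hw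
      refine Submodule.mem_inf.mpr ⟨hW.1 k hk w hwW, LinearMap.mem_ker.mpr ?_⟩
      rw [hSequiv k hk w hwW, LinearMap.mem_ker.mp hwker, lie_zero]) with h | h
    · exact h
    · exfalso
      have : x₀ ∈ W ⊓ LinearMap.ker S := by rw [h]; exact hx₀W
      exact hSx₀ (LinearMap.mem_ker.mp (Submodule.mem_inf.mp this).2)
  refine ⟨e / c, fun x hx => ?_⟩
  have hd : Tm x - (e / c) • S x ∈ W ⊓ LinearMap.ker S := by
    refine Submodule.mem_inf.mpr ⟨Submodule.sub_mem _ (hTW _ hx)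
      (Submodule.smul_mem _ _ (hSW _ hx)), LinearMap.mem_ker.mpr ?_⟩
    rw [map_sub, map_smul, heS _ hx, hcS _ hx, smul_smul, div_mul_cancel₀ e hcneg.ne,
      sub_self]
  rw [hker] at hd
  have hz := (Submodule.mem_bot ℝ).mp hd
  exact sub_eq_zero.mp hz

/-- **Theorem 2, part 2)** (Arvanitoyeorgos–Wang–Zhao).
Let `G/K` be a generalized flag manifold with two isotropy summands `𝔪 = 𝔪₁ ⊕ 𝔪₂`
(with `[𝔪₁, 𝔪₁] ⊆ 𝔨 ⊕ 𝔪₂`) and `G/K₁` the corresponding `M`-space.  Suppose `𝔪ⱼ` is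
reducible and `𝔪ᵢ` (`i ≠ j`) is irreducible as `Ad(K₁)`-modules.  If `(G/K₁, g)` is a
g.o. space then `g = μ B(·,·)|_{𝔰 ⊕ 𝔪ⱼ} + μᵢ B(·,·)|_{𝔪ᵢ}` for some `μ, μᵢ > 0`. -/
theorem goMetric_of_two_summands_one_reducible
    {𝔤 : Type*} [LieRing 𝔤] [LieAlgebra ℝ 𝔤] [FiniteDimensional ℝ 𝔤]
    -- `G` is a compact simple Lie group: `𝔤` is simple with negative definite Killing form
    [LieAlgebra.IsSimple ℝ 𝔤]
    (hcompact : ∀ x : 𝔤, x ≠ 0 → killingForm ℝ 𝔤 x x < 0)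
    (𝔨 𝔨₁ 𝔰 : LieSubalgebra ℝ 𝔤)
    -- `S` is a torus in `G` and `K = C(S)` is its centralizer
    (h𝔰ab : ∀ x ∈ 𝔰, ∀ y ∈ 𝔰, ⁅x, y⁆ = (0 : 𝔤))
    (h𝔨cent : ∀ x : 𝔤, x ∈ 𝔨 ↔ ∀ s ∈ 𝔰, ⁅s, x⁆ = 0)
    -- `K = S × K₁`, `K₁` being the semisimple part of `K`
    (h𝔰𝔨 : 𝔰 ≤ 𝔨) (h𝔨₁𝔨 : 𝔨₁ ≤ 𝔨)
    (h𝔨sum : 𝔰.toSubmodule ⊔ 𝔨₁.toSubmodule = 𝔨.toSubmodule)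
    (h𝔨disj : Disjoint 𝔰.toSubmodule 𝔨₁.toSubmodule)
    (h𝔰𝔨₁ : ∀ s ∈ 𝔰, ∀ k ∈ 𝔨₁, ⁅s, k⁆ = (0 : 𝔤))
    (hder : ∀ x ∈ 𝔨, ∀ y ∈ 𝔨, ⁅x, y⁆ ∈ 𝔨₁)
    -- the `B`-orthogonal reductive decomposition `𝔤 = 𝔨 ⊕ 𝔪`, where `B = -Killing form`
    (𝔪 : Submodule ℝ 𝔤)
    (h𝔪compl : IsCompl 𝔨.toSubmodule 𝔪)
    (h𝔪orth : ∀ x ∈ 𝔨, ∀ y ∈ 𝔪, killingForm ℝ 𝔤 x y = 0)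
    (h𝔪inv : AdInvariant 𝔨 𝔪)
    -- the decomposition `𝔪 = 𝔪₁ ⊕ 𝔪₂`, `B`-orthogonal, into two pairwise inequivalent
    -- irreducible `Ad(K)`-submodules, with the convention `[𝔪 0, 𝔪 0] ⊆ 𝔨 ⊕ 𝔪 1`
    (m : Fin 2 → Submodule ℝ 𝔤)
    (hmsub : ∀ i, m i ≤ 𝔪)
    (hmsum : m 0 ⊔ m 1 = 𝔪)
    (hmorth : ∀ x ∈ m 0, ∀ y ∈ m 1, killingForm ℝ 𝔤 x y = 0)
    (hmirr : ∀ i, AdIrreducible 𝔨 (m i))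
    (hmineq : ¬ AdEquiv 𝔨 (m 0) (m 1))
    (hconv : ∀ x ∈ m 0, ∀ y ∈ m 0, ⁅x, y⁆ ∈ 𝔨.toSubmodule ⊔ m 1)
    -- `𝔪ⱼ` is reducible and `𝔪ᵢ` is irreducible as `Ad(K₁)`-modules
    (j i : Fin 2) (hij : i ≠ j)
    (hred : AdReducible 𝔨₁ (m j))
    (hirr : AdIrreducible 𝔨₁ (m i))
    -- `Λ` is the associated operator of the `G`-invariant metric `g` on the `M`-space
    -- `G/K₁`, whose tangent space at the origin is `𝔫 = 𝔰 ⊕ 𝔪`: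
    -- positive definite, symmetric w.r.t. `B = -Killing`, and `Ad(K₁)`-equivariant
    (Λ : 𝔤 →ₗ[ℝ] 𝔤)
    (hΛ𝔫 : ∀ x ∈ 𝔰.toSubmodule ⊔ 𝔪, Λ x ∈ 𝔰.toSubmodule ⊔ 𝔪)
    (hΛsym : ∀ x ∈ 𝔰.toSubmodule ⊔ 𝔪, ∀ y ∈ 𝔰.toSubmodule ⊔ 𝔪,
      killingForm ℝ 𝔤 (Λ x) y = killingForm ℝ 𝔤 x (Λ y))
    (hΛpos : ∀ x ∈ 𝔰.toSubmodule ⊔ 𝔪, x ≠ 0 → 0 < -(killingForm ℝ 𝔤 (Λ x) x))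
    (hΛequiv : ∀ k ∈ 𝔨₁, ∀ x ∈ 𝔰.toSubmodule ⊔ 𝔪, Λ ⁅k, x⁆ = ⁅k, Λ x⁆)
    -- `(G/K₁, g)` is a g.o. space
    (hgo : IsGOMetric 𝔨₁ (𝔰.toSubmodule ⊔ 𝔪) Λ) :
    ∃ μ μᵢ : ℝ, 0 < μ ∧ 0 < μᵢ ∧
      (∀ x ∈ 𝔰.toSubmodule ⊔ m j, Λ x = μ • x) ∧
      (∀ x ∈ m i, Λ x = μᵢ • x) := by
  classical
  -- ## Basic facts about the Killing form
  have hKcomm : ∀ x y : 𝔤, killingForm ℝ 𝔤 x y = killingForm ℝ 𝔤 y x := fun x y =>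
    LieModule.traceForm_comm ℝ 𝔤 𝔤 x y
  have hKinv : ∀ x y z : 𝔤, killingForm ℝ 𝔤 ⁅x, y⁆ z = killingForm ℝ 𝔤 x ⁅y, z⁆ :=
    fun x y z => LieModule.traceForm_apply_lie_apply ℝ 𝔤 𝔤 x y z
  have hKad : ∀ w u v : 𝔤, killingForm ℝ 𝔤 ⁅w, u⁆ v = -killingForm ℝ 𝔤 u ⁅w, v⁆ := by
    intro w u v
    have h1 := hKinv u w v
    have h2 : (⁅w, u⁆ : 𝔤) = -⁅u, w⁆ := (lie_skew w u).symm
    rw [h2, map_neg, LinearMap.neg_apply, h1]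
  have hKzero : ∀ x : 𝔤, killingForm ℝ 𝔤 x x = 0 → x = 0 := by
    intro x hx
    by_contra h
    exact absurd hx (ne_of_lt (hcompact x h))
  -- ## Membership utilities
  have h𝔨𝔪zero : ∀ x : 𝔤, x ∈ 𝔨.toSubmodule → x ∈ 𝔪 → x = 0 := by
    intro x h1 h2
    have hx : x ∈ 𝔨.toSubmodule ⊓ 𝔪 := ⟨h1, h2⟩
    rw [h𝔪compl.inf_eq_bot] at hx
    simpa using hx
  have hm01zero : ∀ x : 𝔤, x ∈ m 0 → x ∈ m 1 → x = 0 := fun x h0 h1 =>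
    hKzero x (hmorth x h0 x h1)
  have h𝔰n : 𝔰.toSubmodule ≤ 𝔰.toSubmodule ⊔ 𝔪 := le_sup_left
  have h𝔪n : 𝔪 ≤ 𝔰.toSubmodule ⊔ 𝔪 := le_sup_right
  -- i/j cover the two indices
  have hij' : (j = 0 ∧ i = 1) ∨ (j = 1 ∧ i = 0) := by
    have h1 : i.val < 2 := i.isLt
    have h2 : j.val < 2 := j.isLt
    have h3 : i.val ≠ j.val := fun h => hij (Fin.ext h)
    have h4 : (j.val = 0 ∧ i.val = 1) ∨ (j.val = 1 ∧ i.val = 0) := by omega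
    rcases h4 with ⟨ha, hb⟩ | ⟨ha, hb⟩
    · exact Or.inl ⟨Fin.ext ha, Fin.ext hb⟩
    · exact Or.inr ⟨Fin.ext ha, Fin.ext hb⟩
  have hmorth_ji : ∀ x ∈ m j, ∀ y ∈ m i, killingForm ℝ 𝔤 x y = 0 := by
    rcases hij' with ⟨hj, hi⟩ | ⟨hj, hi⟩ <;> subst hj <;> subst hi
    · exact hmorth
    · intro x hx y hy
      rw [hKcomm]
      exact hmorth y hy x hx
  have hmijzero : ∀ x : 𝔤, x ∈ m i → x ∈ m j → x = 0 := by
    rcases hij' with ⟨hj, hi⟩ | ⟨hj, hi⟩ <;> subst hj <;> subst hi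
    · intro x h1 h2; exact hm01zero x h2 h1
    · intro x h1 h2; exact hm01zero x h1 h2
  have hcover : ∀ y ∈ 𝔪, ∃ yi ∈ m i, ∃ yj ∈ m j, y = yi + yj := by
    intro y hy
    rw [← hmsum] at hy
    obtain ⟨a, ha, b, hb, hab⟩ := Submodule.mem_sup.mp hy
    rcases hij' with ⟨hj, hi⟩ | ⟨hj, hi⟩ <;> subst hj <;> subst hi
    · exact ⟨b, hb, a, ha, by rw [← hab]; abel⟩
    · exact ⟨a, ha, b, hb, hab.symm⟩
  have dec𝔤 : ∀ x : 𝔤, ∃ k ∈ 𝔨.toSubmodule, ∃ y ∈ 𝔪, x = k + y := by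
    intro x
    have hx : x ∈ 𝔨.toSubmodule ⊔ 𝔪 := by rw [h𝔪compl.sup_eq_top]; trivial
    obtain ⟨k, hk, y, hy, h⟩ := Submodule.mem_sup.mp hx
    exact ⟨k, hk, y, hy, h.symm⟩
  -- ## centrality of 𝔰 in 𝔨
  have hcentral : ∀ s ∈ 𝔰, ∀ k ∈ 𝔨, ⁅s, k⁆ = (0 : 𝔤) := by
    intro s hs k hk
    have hk' : k ∈ 𝔰.toSubmodule ⊔ 𝔨₁.toSubmodule := by rw [h𝔨sum]; exact hk
    obtain ⟨s', hs', k₁, hk₁, hk2⟩ := Submodule.mem_sup.mp hk'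
    rw [← hk2, lie_add, h𝔰ab s hs s' hs', h𝔰𝔨₁ s hs k₁ hk₁, add_zero]
  have hcentral' : ∀ s ∈ 𝔰, ∀ k ∈ 𝔨, ⁅k, s⁆ = (0 : 𝔤) := fun s hs k hk => by
    rw [← lie_skew, hcentral s hs k hk, neg_zero]
  have hbrk𝔪 : ∀ k ∈ 𝔨, ∀ x ∈ 𝔰.toSubmodule ⊔ 𝔪, ⁅k, x⁆ ∈ 𝔪 := by
    intro k hk x hx
    obtain ⟨s, hs, y, hy, hxd⟩ := Submodule.mem_sup.mp hx
    rw [← hxd, lie_add, hcentral' s hs k hk, zero_add]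
    exact h𝔪inv k hk y hy
  -- ## Part A: Λ commutes with ad k for all k ∈ 𝔨 on n
  have hKrefl : (killingForm ℝ 𝔤).IsRefl := fun x y h => by rw [hKcomm]; exact h
  have hKnd : ((killingForm ℝ 𝔤).restrict 𝔨₁.toSubmodule).Nondegenerate := by
    refine (fun h : LinearMap.SeparatingLeft ((killingForm ℝ 𝔤).restrict 𝔨₁.toSubmodule) =>
      ⟨h, fun x hx => h x (fun y => (hKcomm (x : 𝔤) (y : 𝔤)).trans (hx y))⟩) ?_
    intro x hx
    have h1 := hx x
    rw [LinearMap.BilinForm.restrict_apply] at h1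
    have hx0 : (x : 𝔤) = 0 := by
      by_contra h
      exact absurd h1 (ne_of_lt (hcompact _ h))
    exact Subtype.ext hx0
  have hcomplK : IsCompl 𝔨₁.toSubmodule
      ((killingForm ℝ 𝔤).orthogonal 𝔨₁.toSubmodule) :=
    LinearMap.BilinForm.isCompl_orthogonal_of_restrict_nondegenerate hKrefl hKnd
  have hcommW : ∀ w : 𝔤, w ∈ 𝔨 → (∀ a ∈ 𝔨₁, killingForm ℝ 𝔤 a w = 0) →
      ∀ y ∈ 𝔰.toSubmodule ⊔ 𝔪, Λ ⁅w, y⁆ = ⁅w, Λ y⁆ := by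
    intro w hw𝔨 hworth
    have claim1 : ∀ x ∈ 𝔰.toSubmodule ⊔ 𝔪, killingForm ℝ 𝔤 ⁅x, Λ x⁆ w = 0 := by
      intro x hx
      obtain ⟨a, ha, hbr⟩ := hgo x hx
      have hΛx : Λ x ∈ 𝔰.toSubmodule ⊔ 𝔪 := hΛ𝔫 x hx
      have haΛx : ⁅a, Λ x⁆ ∈ 𝔪 := by
        obtain ⟨σ, hσ, mm, hmm', hd⟩ := Submodule.mem_sup.mp hΛx
        have h1 : ⁅a, σ⁆ = (0 : 𝔤) := by
          rw [← lie_skew, h𝔰𝔨₁ σ hσ a ha, neg_zero]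
        rw [← hd, lie_add, h1, zero_add]
        exact h𝔪inv a (h𝔨₁𝔨 ha) mm hmm'
      have h2 : killingForm ℝ 𝔤 ⁅a + x, Λ x⁆ w = 0 := hworth _ hbr
      have h3 : killingForm ℝ 𝔤 ⁅a, Λ x⁆ w = 0 := by
        rw [hKcomm]
        exact h𝔪orth w hw𝔨 _ haΛx
      rw [add_lie] at h2
      simp only [map_add, LinearMap.add_apply] at h2
      linarith
    have claim2 : ∀ x ∈ 𝔰.toSubmodule ⊔ 𝔪, ∀ y ∈ 𝔰.toSubmodule ⊔ 𝔪,
        killingForm ℝ 𝔤 ⁅x, Λ y⁆ w + killingForm ℝ 𝔤 ⁅y, Λ x⁆ w = 0 := by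
      intro x hx y hy
      have hxy := claim1 (x + y) (add_mem hx hy)
      have hx' := claim1 x hx
      have hy' := claim1 y hy
      have hex : ⁅x + y, Λ (x + y)⁆
          = ⁅x, Λ x⁆ + (⁅x, Λ y⁆ + (⁅y, Λ x⁆ + ⁅y, Λ y⁆)) := by
        rw [map_add, add_lie, lie_add, lie_add]
        abel
      rw [hex] at hxy
      simp only [map_add, LinearMap.add_apply] at hxy
      linarith
    intro y hy
    have hΛy := hΛ𝔫 y hy
    have hwy𝔪 : ⁅w, y⁆ ∈ 𝔪 := hbrk𝔪 w hw𝔨 y hy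
    have hwΛy𝔪 : ⁅w, Λ y⁆ ∈ 𝔪 := hbrk𝔪 w hw𝔨 _ hΛy
    have key : ∀ x ∈ 𝔰.toSubmodule ⊔ 𝔪,
        killingForm ℝ 𝔤 (⁅w, Λ y⁆ - Λ ⁅w, y⁆) x = 0 := by
      intro x hx
      have h1 := claim2 x hx y hy
      have h2 : killingForm ℝ 𝔤 ⁅x, Λ y⁆ w = -killingForm ℝ 𝔤 x ⁅w, Λ y⁆ := by
        rw [hKinv x (Λ y) w]
        have h4 : (⁅Λ y, w⁆ : 𝔤) = -⁅w, Λ y⁆ := (lie_skew (Λ y) w).symm.trans ?_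
        · rw [h4, map_neg]
        · rw [lie_skew]
      have h3 : killingForm ℝ 𝔤 ⁅y, Λ x⁆ w = killingForm ℝ 𝔤 x (Λ ⁅w, y⁆) := by
        have h5 : killingForm ℝ 𝔤 ⁅y, Λ x⁆ w = -killingForm ℝ 𝔤 y ⁅w, Λ x⁆ := by
          rw [hKinv y (Λ x) w]
          have h4 : (⁅Λ x, w⁆ : 𝔤) = -⁅w, Λ x⁆ := by rw [← lie_skew]
          rw [h4, map_neg]
        have h6 : killingForm ℝ 𝔤 ⁅w, y⁆ (Λ x) = -killingForm ℝ 𝔤 y ⁅w, Λ x⁆ :=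
          hKad w y (Λ x)
        have h7 : killingForm ℝ 𝔤 ⁅w, y⁆ (Λ x)
            = killingForm ℝ 𝔤 x (Λ ⁅w, y⁆) := by
          rw [hKcomm]
          exact hΛsym x hx _ (h𝔪n hwy𝔪)
        rw [h5, ← h6, h7]
      have h8 : killingForm ℝ 𝔤 x (⁅w, Λ y⁆ - Λ ⁅w, y⁆) = 0 := by
        have h9 : killingForm ℝ 𝔤 x ⁅w, Λ y⁆ - killingForm ℝ 𝔤 x (Λ ⁅w, y⁆)
            = killingForm ℝ 𝔤 x (⁅w, Λ y⁆ - Λ ⁅w, y⁆) := by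
          rw [map_sub]
        rw [← h9]
        rw [h2, h3] at h1
        linarith
      rw [hKcomm] at h8
      exact h8
    have hdiff : ⁅w, Λ y⁆ - Λ ⁅w, y⁆ ∈ 𝔰.toSubmodule ⊔ 𝔪 :=
      sub_mem (h𝔪n hwΛy𝔪) (hΛ𝔫 _ (h𝔪n hwy𝔪))
    have h0 := hKzero _ (key _ hdiff)
    exact (sub_eq_zero.mp h0).symm
  have hcommK : ∀ k ∈ 𝔨, ∀ y ∈ 𝔰.toSubmodule ⊔ 𝔪, Λ ⁅k, y⁆ = ⁅k, Λ y⁆ := by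
    intro k hk y hy
    have hk2 : k ∈ 𝔨₁.toSubmodule ⊔ (killingForm ℝ 𝔤).orthogonal 𝔨₁.toSubmodule := by
      rw [hcomplK.sup_eq_top]; trivial
    obtain ⟨a, ha, w, hwmem, hkd⟩ := Submodule.mem_sup.mp hk2
    have hw𝔨 : w ∈ 𝔨 := by
      have hwd : w = k - a := by rw [← hkd]; abel
      rw [hwd]
      exact sub_mem hk (h𝔨₁𝔨 ha)
    have hworth : ∀ a' ∈ 𝔨₁, killingForm ℝ 𝔤 a' w = 0 := by
      intro a' ha'
      exact (LinearMap.BilinForm.mem_orthogonal_iff.mp hwmem) a' ha'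
    rw [← hkd, add_lie, add_lie, map_add, hΛequiv a ha y hy, hcommW w hw𝔨 hworth y hy]
  have hcommS : ∀ s ∈ 𝔰, ∀ y ∈ 𝔰.toSubmodule ⊔ 𝔪, Λ ⁅s, y⁆ = ⁅s, Λ y⁆ :=
    fun s hs => hcommK s (h𝔰𝔨 hs)
  -- ## Part B: block structure of Λ
  have hΛ𝔰 : ∀ s ∈ 𝔰, Λ s ∈ 𝔰.toSubmodule := by
    intro s hs
    have hsn : s ∈ 𝔰.toSubmodule ⊔ 𝔪 := h𝔰n hs
    have hΛs : Λ s ∈ 𝔰.toSubmodule ⊔ 𝔪 := hΛ𝔫 s hsn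
    have hcent : ∀ s' ∈ 𝔰, ⁅s', Λ s⁆ = (0 : 𝔤) := by
      intro s' hs'
      rw [← hcommS s' hs' s hsn, h𝔰ab s' hs' s hs, map_zero]
    have hΛs𝔨 : Λ s ∈ 𝔨 := (h𝔨cent (Λ s)).mpr hcent
    obtain ⟨σ, hσ, mm, hmm', hd⟩ := Submodule.mem_sup.mp hΛs
    have hmm0 : mm = 0 := by
      refine h𝔨𝔪zero mm ?_ hmm'
      have h1 : mm = Λ s - σ := by rw [← hd]; abel
      rw [h1]
      exact sub_mem hΛs𝔨 (h𝔰𝔨 hσ)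
    rw [← hd, hmm0, add_zero]
    exact hσ
  have hΛ𝔪 : ∀ y ∈ 𝔪, Λ y ∈ 𝔪 := by
    intro y hy
    have hΛy : Λ y ∈ 𝔰.toSubmodule ⊔ 𝔪 := hΛ𝔫 y (h𝔪n hy)
    obtain ⟨σ, hσ, mm, hmm', hd⟩ := Submodule.mem_sup.mp hΛy
    have hKσ : killingForm ℝ 𝔤 (Λ y) σ = 0 := by
      rw [hΛsym y (h𝔪n hy) σ (h𝔰n hσ), hKcomm]
      exact h𝔪orth (Λ σ) (h𝔰𝔨 (hΛ𝔰 σ hσ)) y hy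
    have h2 : killingForm ℝ 𝔤 (Λ y) σ = killingForm ℝ 𝔤 σ σ := by
      rw [← hd]
      simp only [map_add, LinearMap.add_apply]
      have h3 : killingForm ℝ 𝔤 mm σ = 0 := by
        rw [hKcomm]
        exact h𝔪orth σ (h𝔰𝔨 hσ) mm hmm'
      rw [h3, add_zero]
    have hσ0 : σ = 0 := hKzero σ (by linarith [hKσ, h2])
    rw [← hd, hσ0, zero_add]
    exact hmm'
  -- projection onto m 1
  have hcompl01 : IsCompl (m 1) (𝔨.toSubmodule ⊔ m 0) := by
    constructor
    · rw [disjoint_iff]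
      rw [eq_bot_iff]
      rintro x ⟨hx1, hx2⟩
      obtain ⟨k, hk, y0, hy0, hd⟩ := Submodule.mem_sup.mp hx2
      have hk0 : k = 0 := by
        refine h𝔨𝔪zero k hk ?_
        have h1 : k = x - y0 := by rw [← hd]; abel
        rw [h1]
        exact sub_mem (hmsub 1 hx1) (hmsub 0 hy0)
      have hx0 : x = y0 := by rw [← hd, hk0, zero_add]
      have := hm01zero x (hx0 ▸ hy0) hx1
      simpa using this
    · rw [codisjoint_iff, eq_top_iff]
      intro x _
      obtain ⟨k, hk, y, hy, hd⟩ := dec𝔤 x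
      rw [← hmsum] at hy
      obtain ⟨y0, hy0, y1, hy1, hd2⟩ := Submodule.mem_sup.mp hy
      have : x = y1 + (k + y0) := by rw [hd, ← hd2]; abel
      rw [this]
      exact add_mem (Submodule.mem_sup_left hy1)
        (Submodule.mem_sup_right (add_mem (Submodule.mem_sup_left hk)
          (Submodule.mem_sup_right hy0)))
  set π1 : 𝔤 →ₗ[ℝ] 𝔤 :=
    (m 1).subtype ∘ₗ ((m 1).projectionOnto _ hcompl01) with hπ1_def
  have hπ1_mem : ∀ x : 𝔤, π1 x ∈ m 1 := by
    intro x
    simp only [hπ1_def, LinearMap.comp_apply, Submodule.coe_subtype]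
    exact Submodule.coe_mem _
  have hπ1_left : ∀ u ∈ m 1, π1 u = u := by
    intro u hu
    have := Submodule.projectionOnto_apply_left hcompl01 ⟨u, hu⟩
    simp only [hπ1_def, LinearMap.comp_apply, Submodule.coe_subtype]
    rw [show u = ((⟨u, hu⟩ : m 1) : 𝔤) from rfl, this]
  have hπ1_right : ∀ u ∈ 𝔨.toSubmodule ⊔ m 0, π1 u = 0 := by
    intro u hu
    have := Submodule.projectionOnto_apply_of_mem_right hcompl01 hu
    simp only [hπ1_def, LinearMap.comp_apply, Submodule.coe_subtype, this]
    rfl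
  have hΛm0 : ∀ u ∈ m 0, Λ u ∈ m 0 := by
    set g : 𝔤 →ₗ[ℝ] 𝔤 := π1 ∘ₗ Λ with hg_def
    -- decomposition of Λ u for u ∈ m 0
    have hgu : ∀ u ∈ m 0, Λ u = (Λ u - g u) + g u ∧ (Λ u - g u) ∈ m 0 ∧ g u ∈ m 1 := by
      intro u hu
      have hΛu : Λ u ∈ 𝔪 := hΛ𝔪 u (hmsub 0 hu)
      rw [← hmsum] at hΛu
      obtain ⟨y0, hy0, y1, hy1, hd⟩ := Submodule.mem_sup.mp hΛu
      have hg1 : g u = y1 := by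
        simp only [hg_def, LinearMap.comp_apply]
        rw [← hd, map_add, hπ1_right y0 (Submodule.mem_sup_right hy0),
          hπ1_left y1 hy1, zero_add]
      have hg0 : Λ u - g u = y0 := by rw [hg1, ← hd]; abel
      exact ⟨by abel, hg0 ▸ hy0, hg1 ▸ hy1⟩
    have hgequiv : ∀ k ∈ 𝔨, ∀ u ∈ m 0, g ⁅k, u⁆ = ⁅k, g u⁆ := by
      intro k hk u hu
      obtain ⟨hdec, h0, h1⟩ := hgu u hu
      have hku : ⁅k, u⁆ ∈ m 0 := (hmirr 0).1 k hk u hu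
      obtain ⟨hdec', h0', h1'⟩ := hgu _ hku
      -- Λ ⁅k,u⁆ = ⁅k, Λ u⁆
      have hc : Λ ⁅k, u⁆ = ⁅k, Λ u⁆ := hcommK k hk u (h𝔪n (hmsub 0 hu))
      -- expand both sides
      have hx : ⁅k, Λ u⁆ = ⁅k, Λ u - g u⁆ + ⁅k, g u⁆ := by
        have hxx : Λ u - g u + g u = Λ u := by abel
        rw [← lie_add, hxx]
      calc g ⁅k, u⁆ = π1 ⁅k, Λ u⁆ := by
            simp only [hg_def, LinearMap.comp_apply, hc]
        _ = π1 ⁅k, Λ u - g u⁆ + π1 ⁅k, g u⁆ := by rw [hx, map_add]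
        _ = ⁅k, g u⁆ := by
            rw [hπ1_right _ (Submodule.mem_sup_right ((hmirr 0).1 k hk _ h0)),
              hπ1_left _ ((hmirr 1).1 k hk _ h1), zero_add]
    have hSinv : AdInvariant 𝔨 (m 0 ⊓ LinearMap.ker g) := by
      rintro k hk w ⟨hw0, hwker⟩
      refine ⟨(hmirr 0).1 k hk w hw0, LinearMap.mem_ker.mpr ?_⟩
      rw [hgequiv k hk w hw0, LinearMap.mem_ker.mp hwker, lie_zero]
    rcases (hmirr 0).2.2 (m 0 ⊓ LinearMap.ker g) inf_le_left hSinv with hS | hS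
    · -- g is injective on m 0 : contradiction with inequivalence
      exfalso
      set M1' := Submodule.map g (m 0) with hM1_def
      have hM1le : M1' ≤ m 1 := by
        rintro _ ⟨u, hu, rfl⟩
        exact (hgu u hu).2.2
      have hM1inv : AdInvariant 𝔨 M1' := by
        rintro k hk _ ⟨u, hu, rfl⟩
        rw [← hgequiv k hk u hu]
        exact ⟨⁅k, u⁆, (hmirr 0).1 k hk u hu, rfl⟩
      rcases (hmirr 1).2.2 M1' hM1le hM1inv with hM | hM
      · -- then g vanishes on m 0 ⇒ m 0 = ⊥
        have hz : ∀ u ∈ m 0, g u = 0 := by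
          intro u hu
          have : g u ∈ M1' := ⟨u, hu, rfl⟩
          rw [hM] at this
          simpa using this
        have : m 0 ≤ m 0 ⊓ LinearMap.ker g := fun u hu => ⟨hu, hz u hu⟩
        rw [hS, le_bot_iff] at this
        exact (hmirr 0).2.1 this
      · exact hmineq ⟨g, hM, fun u hu h0 => by
          have : u ∈ m 0 ⊓ LinearMap.ker g := ⟨hu, h0⟩
          rw [hS] at this
          simpa using this, fun x hx u hu => hgequiv x hx u hu⟩
    · intro u hu
      have hker : g u = 0 := by
        have : u ∈ m 0 ⊓ LinearMap.ker g := by rw [hS]; exact hu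
        exact LinearMap.mem_ker.mp this.2
      have := (hgu u hu).2.1
      rwa [hker, sub_zero] at this
  have hΛm1 : ∀ u ∈ m 1, Λ u ∈ m 1 := by
    intro u hu
    have hΛu : Λ u ∈ 𝔪 := hΛ𝔪 u (hmsub 1 hu)
    rw [← hmsum] at hΛu
    obtain ⟨y0, hy0, y1, hy1, hd⟩ := Submodule.mem_sup.mp hΛu
    have hK0 : killingForm ℝ 𝔤 (Λ u) y0 = 0 := by
      rw [hΛsym u (h𝔪n (hmsub 1 hu)) y0 (h𝔪n (hmsub 0 hy0)), hKcomm]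
      exact hmorth _ (hΛm0 y0 hy0) u hu
    have hK1 : killingForm ℝ 𝔤 (Λ u) y0 = killingForm ℝ 𝔤 y0 y0 := by
      rw [← hd]
      simp only [map_add, LinearMap.add_apply]
      have h3 : killingForm ℝ 𝔤 y1 y0 = 0 := by
        rw [hKcomm]
        exact hmorth y0 hy0 y1 hy1
      rw [h3, add_zero]
    have hy00 : y0 = 0 := hKzero y0 (by linarith)
    rw [← hd, hy00, zero_add]
    exact hy1
  have hΛm : ∀ k : Fin 2, ∀ u ∈ m k, Λ u ∈ m k := by
    intro k
    fin_cases k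
    · exact hΛm0
    · exact hΛm1
  have hscalar : ∀ k : Fin 2, ∃ c : ℝ, 0 < c ∧ ∀ u ∈ m k, Λ u = c • u := by
    intro k
    obtain ⟨c, hc⟩ := killing_scalar hcompact 𝔨 (m k) (hmirr k) Λ (hΛm k)
      (fun x hx y hy => hΛsym x (h𝔪n (hmsub k hx)) y (h𝔪n (hmsub k hy)))
      (fun kk hkk x hx => hcommK kk hkk x (h𝔪n (hmsub k hx)))
    refine ⟨c, ?_, hc⟩
    obtain ⟨x, hxmem, hx0⟩ := (Submodule.ne_bot_iff _).mp (hmirr k).2.1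
    have hp := hΛpos x (h𝔪n (hmsub k hxmem)) hx0
    rw [hc x hxmem] at hp
    simp only [map_smul, LinearMap.smul_apply, smul_eq_mul] at hp
    have hKx : killingForm ℝ 𝔤 x x < 0 := hcompact x hx0
    nlinarith [hp, hKx]
  obtain ⟨μj, hμjpos, hμj⟩ := hscalar j
  obtain ⟨μi, hμipos, hμi⟩ := hscalar i
  -- ## surjectivity helper
  have hsurj : ∀ (W : Submodule ℝ 𝔤), AdIrreducible 𝔨 W → ∀ z : 𝔤, z ∈ 𝔰 →
      (∃ x ∈ W, ⁅z, x⁆ ≠ 0) → ∀ y ∈ W, ∃ x ∈ W, ⁅z, x⁆ = y := by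
    intro W hW z hz hne y hy
    have hWinv : ∀ x ∈ W, ⁅z, x⁆ ∈ W := fun x hx => hW.1 z (h𝔰𝔨 hz) x hx
    have hinv : AdInvariant 𝔨 (W ⊓ LinearMap.ker (LieAlgebra.ad ℝ 𝔤 z : 𝔤 →ₗ[ℝ] 𝔤)) := by
      rintro k hk w ⟨hwW, hwker⟩
      refine ⟨hW.1 k hk w hwW, LinearMap.mem_ker.mpr ?_⟩
      have hzw : ⁅z, w⁆ = 0 := by
        simpa [LieAlgebra.ad_apply] using LinearMap.mem_ker.mp hwker
      have h5 : ⁅z, ⁅k, w⁆⁆ = 0 := by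
        rw [leibniz_lie, hcentral z hz k hk, zero_lie, zero_add, hzw, lie_zero]
      simpa [LieAlgebra.ad_apply] using h5
    have hkerbot : W ⊓ LinearMap.ker (LieAlgebra.ad ℝ 𝔤 z : 𝔤 →ₗ[ℝ] 𝔤) = ⊥ := by
      rcases hW.2.2 _ inf_le_left hinv with h | h
      · exact h
      · exfalso
        obtain ⟨x, hxW, hx0⟩ := hne
        have hxm : x ∈ W ⊓ LinearMap.ker (LieAlgebra.ad ℝ 𝔤 z : 𝔤 →ₗ[ℝ] 𝔤) := by
          rw [h]; exact hxW
        exact hx0 (by simpa [LieAlgebra.ad_apply] using LinearMap.mem_ker.mp hxm.2)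
    have hres : ∀ x ∈ W, (LieAlgebra.ad ℝ 𝔤 z : 𝔤 →ₗ[ℝ] 𝔤) x ∈ W := by
      intro x hx
      simpa [LieAlgebra.ad_apply] using hWinv x hx
    set E : ↥W →ₗ[ℝ] ↥W := (LieAlgebra.ad ℝ 𝔤 z : 𝔤 →ₗ[ℝ] 𝔤).restrict hres with hE_def
    have hE_coe : ∀ x : ↥W, (E x : 𝔤) = ⁅z, (x : 𝔤)⁆ := by
      intro x
      simp [hE_def, LinearMap.restrict_apply, LieAlgebra.ad_apply]
    have hEinj : Function.Injective E := by
      rw [← LinearMap.ker_eq_bot, eq_bot_iff]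
      intro x hx
      have hx2 : (x : 𝔤) ∈ W ⊓ LinearMap.ker (LieAlgebra.ad ℝ 𝔤 z : 𝔤 →ₗ[ℝ] 𝔤) := by
        refine ⟨x.2, LinearMap.mem_ker.mpr ?_⟩
        have h6 : (E x : 𝔤) = 0 := by rw [LinearMap.mem_ker.mp hx]; rfl
        rw [hE_coe] at h6
        simpa [LieAlgebra.ad_apply] using h6
      rw [hkerbot] at hx2
      simpa using Subtype.ext (by simpa using hx2)
    obtain ⟨x, hxE⟩ := (LinearMap.injective_iff_surjective).mp hEinj ⟨y, hy⟩
    refine ⟨x, x.2, ?_⟩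
    have := congrArg Subtype.val hxE
    rw [hE_coe] at this
    exact this
  -- ## Part C: Λ = μj on 𝔰
  have hb_zero : ∀ s ∈ 𝔰, Λ s = μj • s := by
    intro s hs
    set bb : 𝔤 := μj • s - Λ s with hbb_def
    have hbb𝔰 : bb ∈ 𝔰.toSubmodule :=
      sub_mem (Submodule.smul_mem _ _ hs) (hΛ𝔰 s hs)
    have hbb𝔰' : bb ∈ 𝔰 := hbb𝔰
    suffices hfin : bb = 0 by
      have h7 : μj • s - Λ s = 0 := by rw [← hbb_def, hfin]
      have := sub_eq_zero.mp h7
      exact this.symm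
    have hΛs𝔰 : Λ s ∈ 𝔰 := hΛ𝔰 s hs
    -- the key consequence of the g.o. condition at s + v
    have hE : ∀ v ∈ m j, ∃ a ∈ 𝔨₁, ⁅bb, v⁆ = -(μj • ⁅a, v⁆) := by
      intro v hv
      have hvn : v ∈ 𝔰.toSubmodule ⊔ 𝔪 := h𝔪n (hmsub j hv)
      have hsv : s + v ∈ 𝔰.toSubmodule ⊔ 𝔪 := add_mem (h𝔰n hs) hvn
      obtain ⟨a, ha, hbr⟩ := hgo (s + v) hsv
      refine ⟨a, ha, ?_⟩
      have hexp : ⁅a + (s + v), Λ (s + v)⁆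
          = μj • ⁅a, v⁆ + (μj • ⁅s, v⁆ + ⁅v, Λ s⁆) := by
        have h1 : ⁅a, Λ s⁆ = (0 : 𝔤) := by
          rw [← lie_skew, h𝔰𝔨₁ _ hΛs𝔰 a ha, neg_zero]
        have h2 : ⁅s, Λ s⁆ = (0 : 𝔤) := h𝔰ab s hs _ hΛs𝔰
        rw [map_add, hμj v hv, add_lie, add_lie, lie_add, lie_add, lie_add,
          lie_smul, lie_smul, lie_smul, h1, h2, lie_self, smul_zero]
        abel
      have hmem : ⁅a + (s + v), Λ (s + v)⁆ ∈ m j := by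
        rw [hexp]
        have hav : ⁅a, v⁆ ∈ m j := (hmirr j).1 a (h𝔨₁𝔨 ha) v hv
        have hsv' : ⁅s, v⁆ ∈ m j := (hmirr j).1 s (h𝔰𝔨 hs) v hv
        have hvs : ⁅v, Λ s⁆ ∈ m j := by
          rw [← lie_skew]
          exact neg_mem ((hmirr j).1 _ (h𝔰𝔨 hΛs𝔰) v hv)
        exact add_mem (Submodule.smul_mem _ _ hav)
          (add_mem (Submodule.smul_mem _ _ hsv') hvs)
      have hbr𝔨 : ⁅a + (s + v), Λ (s + v)⁆ ∈ 𝔨.toSubmodule := by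
        have h𝔨₁le : 𝔨₁.toSubmodule ≤ 𝔨.toSubmodule := fun x hx => h𝔨₁𝔨 hx
        exact h𝔨₁le hbr
      have hzero : ⁅a + (s + v), Λ (s + v)⁆ = 0 :=
        h𝔨𝔪zero _ hbr𝔨 (hmsub j hmem)
      rw [hexp] at hzero
      have hb2 : ⁅bb, v⁆ = μj • ⁅s, v⁆ + ⁅v, Λ s⁆ := by
        rw [hbb_def, sub_lie, smul_lie]
        have h3 : (⁅Λ s, v⁆ : 𝔤) = -⁅v, Λ s⁆ := (lie_skew (Λ s) v).symm
        rw [h3]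
        abel
      rw [hb2]
      exact eq_neg_of_add_eq_zero_right hzero
    have hbb𝔨 : ∀ k ∈ 𝔨, ⁅bb, k⁆ = (0 : 𝔤) := fun k hk => hcentral bb hbb𝔰' k hk
    -- Claim Z : ad bb vanishes on m j
    have hZ : ∀ v ∈ m j, ⁅bb, v⁆ = 0 := by
      by_contra hcon
      push_neg at hcon
      obtain ⟨v₀, hv₀, hbv₀⟩ := hcon
      have hDW : ∀ x ∈ m j, ⁅bb, x⁆ ∈ m j := fun x hx =>
        (hmirr j).1 bb (h𝔰𝔨 hbb𝔰') x hx
      have hDequiv : ∀ k ∈ 𝔨, ∀ x : 𝔤, ⁅bb, ⁅k, x⁆⁆ = ⁅k, ⁅bb, x⁆⁆ := by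
        intro k hk x
        rw [leibniz_lie, hbb𝔨 k hk, zero_lie, zero_add]
      have hprop : ∀ s' ∈ 𝔰, ∃ ρ : ℝ, ∀ x ∈ m j, ⁅s', x⁆ = ρ • ⁅bb, x⁆ := by
        intro s' hs'
        obtain ⟨ρ, hρ⟩ := killing_skew_prop hcompact 𝔨 (m j) (hmirr j)
          (LieAlgebra.ad ℝ 𝔤 bb) (LieAlgebra.ad ℝ 𝔤 s')
          (fun x hx => by simpa [LieAlgebra.ad_apply] using hDW x hx)
          (fun x hx => by
            simpa [LieAlgebra.ad_apply] using (hmirr j).1 s' (h𝔰𝔨 hs') x hx)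
          (fun x _ y _ => by simpa [LieAlgebra.ad_apply] using hKad bb x y)
          (fun x _ y _ => by simpa [LieAlgebra.ad_apply] using hKad s' x y)
          (fun k hk x _ => by simpa [LieAlgebra.ad_apply] using hDequiv k hk x)
          (fun k hk x _ => by
            have h9 : ⁅s', ⁅k, x⁆⁆ = ⁅k, ⁅s', x⁆⁆ := by
              rw [leibniz_lie, hcentral s' hs' k hk, zero_lie, zero_add]
            simpa [LieAlgebra.ad_apply] using h9)
          (fun x _ => by
            have h9 : ⁅bb, ⁅s', x⁆⁆ = ⁅s', ⁅bb, x⁆⁆ := by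
              rw [leibniz_lie, h𝔰ab bb hbb𝔰' s' hs', zero_lie, zero_add]
            simpa [LieAlgebra.ad_apply] using h9)
          ⟨v₀, hv₀, by simpa [LieAlgebra.ad_apply] using hbv₀⟩
        exact ⟨ρ, fun x hx => by simpa [LieAlgebra.ad_apply] using hρ x hx⟩
      obtain ⟨-, U, hUle, hUinv, hUbot, hUne⟩ := hred
      have hUbb : ∀ v ∈ U, ⁅bb, v⁆ ∈ U := by
        intro v hv
        obtain ⟨a, ha, hEq⟩ := hE v (hUle hv)
        rw [hEq]
        exact neg_mem (Submodule.smul_mem _ _ (hUinv a ha v hv))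
      have hU𝔨 : AdInvariant 𝔨 U := by
        intro k hk v hv
        have hk' : k ∈ 𝔰.toSubmodule ⊔ 𝔨₁.toSubmodule := by rw [h𝔨sum]; exact hk
        obtain ⟨s', hs', k₁, hk₁, hkd⟩ := Submodule.mem_sup.mp hk'
        obtain ⟨ρ, hρ⟩ := hprop s' hs'
        rw [← hkd, add_lie]
        refine add_mem ?_ (hUinv k₁ hk₁ v hv)
        rw [hρ v (hUle hv)]
        exact Submodule.smul_mem _ _ (hUbb v hv)
      rcases (hmirr j).2.2 U hUle hU𝔨 with h | h
      · exact hUbot h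
      · exact hUne h
    -- Claim: bb = 0
    by_contra hbbne
    have hDmi : ∃ u ∈ m i, ⁅bb, u⁆ ≠ 0 := by
      by_contra hcon
      push_neg at hcon
      have hallm : ∀ y ∈ 𝔪, ⁅bb, y⁆ = 0 := by
        intro y hy
        obtain ⟨yi, hyi, yjj, hyjj, hyd⟩ := hcover y hy
        rw [hyd, lie_add, hcon yi hyi, hZ yjj hyjj, add_zero]
      have hall : ∀ y : 𝔤, ⁅bb, y⁆ = 0 := by
        intro y
        obtain ⟨k, hk, ym, hym, hyd⟩ := dec𝔤 y
        rw [hyd, lie_add, hbb𝔨 k hk, zero_add, hallm ym hym]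
      have hcentermem : bb ∈ LieAlgebra.center ℝ 𝔤 := by
        intro x
        rw [← lie_skew, hall x, neg_zero]
      rw [LieAlgebra.center_eq_bot ℝ 𝔤] at hcentermem
      exact hbbne (by simpa using hcentermem)
    obtain ⟨u₀, hu₀, hbu₀⟩ := hDmi
    have hs₀ex : ∃ s₀ ∈ 𝔰, ∃ v ∈ m j, ⁅s₀, v⁆ ≠ 0 := by
      by_contra hcon
      push_neg at hcon
      obtain ⟨v, hv, hv0⟩ := (Submodule.ne_bot_iff _).mp (hmirr j).2.1
      have hv𝔨 : v ∈ 𝔨 := (h𝔨cent v).mpr (fun s' hs' => hcon s' hs' v hv)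
      exact hv0 (h𝔨𝔪zero v hv𝔨 (hmsub j hv))
    obtain ⟨s₀, hs₀𝔰, v₁, hv₁, hs₀v₁⟩ := hs₀ex
    have hbb𝔨' : ∀ k ∈ 𝔨, ∀ x : 𝔤, ⁅bb, ⁅k, x⁆⁆ = ⁅k, ⁅bb, x⁆⁆ := by
      intro k hk x
      rw [leibniz_lie, hbb𝔨 k hk, zero_lie, zero_add]
    have hpropi : ∃ ρ : ℝ, ∀ x ∈ m i, ⁅s₀, x⁆ = ρ • ⁅bb, x⁆ := by
      obtain ⟨ρ, hρ⟩ := killing_skew_prop hcompact 𝔨 (m i) (hmirr i)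
        (LieAlgebra.ad ℝ 𝔤 bb) (LieAlgebra.ad ℝ 𝔤 s₀)
        (fun x hx => by
          simpa [LieAlgebra.ad_apply] using (hmirr i).1 bb (h𝔰𝔨 hbb𝔰') x hx)
        (fun x hx => by
          simpa [LieAlgebra.ad_apply] using (hmirr i).1 s₀ (h𝔰𝔨 hs₀𝔰) x hx)
        (fun x _ y _ => by simpa [LieAlgebra.ad_apply] using hKad bb x y)
        (fun x _ y _ => by simpa [LieAlgebra.ad_apply] using hKad s₀ x y)
        (fun k hk x _ => by simpa [LieAlgebra.ad_apply] using hbb𝔨' k hk x)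
        (fun k hk x _ => by
          have h9 : ⁅s₀, ⁅k, x⁆⁆ = ⁅k, ⁅s₀, x⁆⁆ := by
            rw [leibniz_lie, hcentral s₀ hs₀𝔰 k hk, zero_lie, zero_add]
          simpa [LieAlgebra.ad_apply] using h9)
        (fun x _ => by
          have h9 : ⁅bb, ⁅s₀, x⁆⁆ = ⁅s₀, ⁅bb, x⁆⁆ := by
            rw [leibniz_lie, h𝔰ab bb hbb𝔰' s₀ hs₀𝔰, zero_lie, zero_add]
          simpa [LieAlgebra.ad_apply] using h9)
        ⟨u₀, hu₀, by simpa [LieAlgebra.ad_apply] using hbu₀⟩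
      exact ⟨ρ, fun x hx => by simpa [LieAlgebra.ad_apply] using hρ x hx⟩
    obtain ⟨ρ, hρ⟩ := hpropi
    set s₁ : 𝔤 := s₀ - ρ • bb with hs₁_def
    have hs₁𝔰 : s₁ ∈ 𝔰.toSubmodule :=
      sub_mem (by exact hs₀𝔰) (Submodule.smul_mem _ _ hbb𝔰)
    have hs₁𝔰' : s₁ ∈ 𝔰 := hs₁𝔰
    have hs₁mi : ∀ u ∈ m i, ⁅s₁, u⁆ = 0 := by
      intro u hu
      rw [hs₁_def, sub_lie, smul_lie, hρ u hu, sub_self]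
    have hs₁mj : ∀ v ∈ m j, ⁅s₁, v⁆ = ⁅s₀, v⁆ := by
      intro v hv
      rw [hs₁_def, sub_lie, smul_lie, hZ v hv, smul_zero, sub_zero]
    have hs₁v₁ : ⁅s₁, v₁⁆ ≠ 0 := by rw [hs₁mj v₁ hv₁]; exact hs₀v₁
    -- brackets [m j, m i] land in 𝔪
    have hbrji_mem : ∀ v ∈ m j, ∀ u ∈ m i, ⁅v, u⁆ ∈ 𝔪 := by
      intro v hv u hu
      obtain ⟨k, hk, ym, hym, hd⟩ := dec𝔤 ⁅v, u⁆
      have hK : killingForm ℝ 𝔤 ⁅v, u⁆ k = 0 := by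
        rw [hKinv v u k]
        have h1 : (⁅u, k⁆ : 𝔤) = -⁅k, u⁆ := (lie_skew u k).symm
        rw [h1, map_neg]
        have h2 : killingForm ℝ 𝔤 v ⁅k, u⁆ = 0 :=
          hmorth_ji v hv _ ((hmirr i).1 k hk u hu)
        rw [h2, neg_zero]
      have hKk : killingForm ℝ 𝔤 ⁅v, u⁆ k = killingForm ℝ 𝔤 k k := by
        rw [hd]
        simp only [map_add, LinearMap.add_apply]
        have h3 : killingForm ℝ 𝔤 ym k = 0 := by
          rw [hKcomm]
          exact h𝔪orth k hk ym hym
        rw [h3, add_zero]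
      have hk0 : k = 0 := hKzero k (by linarith)
      rw [hd, hk0, zero_add]
      exact hym
    have hbrji_mi : ∀ v ∈ m j, ∀ u ∈ m i, ⁅v, u⁆ ∈ m i := by
      intro v hv u hu
      obtain ⟨u', hu', hEq⟩ := hsurj (m i) (hmirr i) bb hbb𝔰'
        ⟨u₀, hu₀, hbu₀⟩ u hu
      have h1 : ⁅v, u⁆ = ⁅bb, ⁅v, u'⁆⁆ := by
        rw [leibniz_lie, hZ v hv, zero_lie, zero_add, hEq]
      obtain ⟨yi, hyi, yjj, hyjj, hdec⟩ := hcover _ (hbrji_mem v hv u' hu')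
      rw [h1, hdec, lie_add, hZ yjj hyjj, add_zero]
      exact (hmirr i).1 bb (h𝔰𝔨 hbb𝔰') yi hyi
    have hbrji_zero : ∀ v ∈ m j, ∀ u ∈ m i, ⁅v, u⁆ = 0 := by
      intro v hv u hu
      obtain ⟨v', hv', hEv⟩ := hsurj (m j) (hmirr j) s₁ hs₁𝔰'
        ⟨v₁, hv₁, hs₁v₁⟩ v hv
      have h1 : ⁅v, u⁆ = ⁅s₁, ⁅v', u⁆⁆ := by
        rw [leibniz_lie, hs₁mi u hu, lie_zero, add_zero, hEv]
      rw [h1, hs₁mi _ (hbrji_mi v' hv' u hu)]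
    -- [m j, m j] ⊆ 𝔨 ⊕ m j
    have hbrjj : ∀ v ∈ m j, ∀ w ∈ m j, ⁅v, w⁆ ∈ 𝔨.toSubmodule ⊔ m j := by
      intro v hv w hw
      obtain ⟨k, hk, ym, hym, hd⟩ := dec𝔤 ⁅v, w⁆
      obtain ⟨yi, hyi, yjj, hyjj, hd2⟩ := hcover ym hym
      have h1 : killingForm ℝ 𝔤 ⁅v, w⁆ yi = 0 := by
        rw [hKinv v w yi, hbrji_zero w hw yi hyi, map_zero]
      have h2 : killingForm ℝ 𝔤 ⁅v, w⁆ yi = killingForm ℝ 𝔤 yi yi := by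
        rw [hd, hd2]
        simp only [map_add, LinearMap.add_apply]
        have h3 : killingForm ℝ 𝔤 k yi = 0 := h𝔪orth k hk yi (hmsub i hyi)
        have h4 : killingForm ℝ 𝔤 yjj yi = 0 := hmorth_ji yjj hyjj yi hyi
        rw [h3, h4]
        ring
      have hyi0 : yi = 0 := hKzero yi (by linarith)
      have hd3 : ⁅v, w⁆ = k + yjj := by rw [hd, hd2, hyi0, zero_add]
      rw [hd3]
      exact add_mem (Submodule.mem_sup_left hk) (Submodule.mem_sup_right hyjj)
    -- the ideal generated by m j is proper : contradiction with simplicity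
    set BRgen : Set 𝔤 := {z : 𝔤 | ∃ v ∈ m j, ∃ w ∈ m j, z = ⁅v, w⁆} with hBR_def
    set X : Submodule ℝ 𝔤 := m j ⊔ Submodule.span ℝ BRgen with hX_def
    have hXle : X ≤ 𝔨.toSubmodule ⊔ m j := by
      rw [hX_def]
      apply sup_le
      · exact le_sup_right
      · rw [Submodule.span_le]
        rintro z ⟨v, hv, w, hw, rfl⟩
        exact hbrjj v hv w hw
    have hmjX : m j ≤ X := by rw [hX_def]; exact le_sup_left
    have hbrX : ∀ v ∈ m j, ∀ w ∈ m j, ⁅v, w⁆ ∈ X := by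
      intro v hv w hw
      rw [hX_def]
      exact Submodule.mem_sup_right (Submodule.subset_span ⟨v, hv, w, hw, rfl⟩)
    have hlie : ∀ x z : 𝔤, z ∈ X → ⁅x, z⁆ ∈ X := by
      intro x
      obtain ⟨k, hk, ym, hym, hxdec⟩ := dec𝔤 x
      obtain ⟨yi, hyi, yjj, hyjj, hydec⟩ := hcover ym hym
      have hstep1 : ∀ v ∈ m j, ⁅x, v⁆ ∈ X := by
        intro v hv
        rw [hxdec, hydec, add_lie, add_lie]
        refine add_mem ?_ (add_mem ?_ ?_)
        · exact hmjX ((hmirr j).1 k hk v hv)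
        · have h5 : (⁅yi, v⁆ : 𝔤) = -⁅v, yi⁆ := (lie_skew yi v).symm
          rw [h5, hbrji_zero v hv yi hyi, neg_zero]
          exact zero_mem X
        · exact hbrX yjj hyjj v hv
      have hstep2 : ∀ z ∈ 𝔨.toSubmodule ⊔ m j, ∀ w ∈ m j, ⁅z, w⁆ ∈ X := by
        intro z hz w hw
        obtain ⟨k', hk', y', hy', hdz⟩ := Submodule.mem_sup.mp hz
        rw [← hdz, add_lie]
        exact add_mem (hmjX ((hmirr j).1 k' hk' w hw)) (hbrX y' hy' w hw)
      intro z hz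
      have hXle2 : X ≤ Submodule.comap (LieAlgebra.ad ℝ 𝔤 x : 𝔤 →ₗ[ℝ] 𝔤) X := by
        rw [hX_def]
        apply sup_le
        · intro v hv
          rw [Submodule.mem_comap, LieAlgebra.ad_apply]
          exact hstep1 v hv
        · rw [Submodule.span_le]
          rintro zz ⟨v, hv, w, hw, rfl⟩
          have h6 : ⁅x, ⁅v, w⁆⁆ = ⁅⁅x, v⁆, w⁆ + ⁅v, ⁅x, w⁆⁆ := leibniz_lie x v w
          have h7 : ⁅⁅x, v⁆, w⁆ ∈ X := hstep2 _ (hXle (hstep1 v hv)) w hw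
          have h8 : ⁅v, ⁅x, w⁆⁆ ∈ X := by
            obtain ⟨k', hk', y', hy', hdz⟩ := Submodule.mem_sup.mp (hXle (hstep1 w hw))
            rw [← hdz, lie_add]
            refine add_mem ?_ (hbrX v hv y' hy')
            have h9 : (⁅v, k'⁆ : 𝔤) = -⁅k', v⁆ := (lie_skew v k').symm
            rw [h9]
            exact neg_mem (hmjX ((hmirr j).1 k' hk' v hv))
          rw [SetLike.mem_coe, Submodule.mem_comap, LieAlgebra.ad_apply, h6]
          exact add_mem h7 h8
      have h10 := Submodule.mem_comap.mp (hXle2 hz)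
      rwa [LieAlgebra.ad_apply] at h10
    set I : LieIdeal ℝ 𝔤 := { X with lie_mem := fun {x z} hz => hlie x z hz } with hI_def
    have hmemI : ∀ z : 𝔤, z ∈ I ↔ z ∈ X := fun z => Iff.rfl
    rcases LieAlgebra.IsSimple.eq_bot_or_eq_top I with hbot | htop
    · obtain ⟨v, hv, hv0⟩ := (Submodule.ne_bot_iff _).mp (hmirr j).2.1
      have hvI : v ∈ I := (hmemI v).mpr (hmjX hv)
      rw [hbot] at hvI
      exact hv0 (by simpa using hvI)
    · obtain ⟨u, hu, hu0⟩ := (Submodule.ne_bot_iff _).mp (hmirr i).2.1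
      have huI : u ∈ I := by rw [htop]; trivial
      have huX : u ∈ X := (hmemI u).mp huI
      obtain ⟨k, hk, y, hy, hd⟩ := Submodule.mem_sup.mp (hXle huX)
      have hk0 : k = 0 := by
        refine h𝔨𝔪zero k hk ?_
        have h1 : k = u - y := by rw [← hd]; abel
        rw [h1]
        exact sub_mem (hmsub i hu) (hmsub j hy)
      have huy : u = y := by rw [← hd, hk0, zero_add]
      exact hu0 (hmijzero u hu (huy ▸ hy))
  -- ## conclusion
  refine ⟨μj, μi, hμjpos, hμipos, ?_, hμi⟩
  intro x hx
  obtain ⟨s, hs, v, hv, hd⟩ := Submodule.mem_sup.mp hx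
  rw [← hd, map_add, hb_zero s hs, hμj v hv, smul_add]
end

section
/- Let G/K be a generalized flag manifold with exactly two isotropy summands 𝔪 = 𝔪₁ ⊕ 𝔪₂ (with the convention [𝔪₁, 𝔪₁] ⊆ 𝔨 ⊕ 𝔪₂), and let G/K₁ be the corresponding M-space. If both 𝔪₁ and 𝔪₂ are reducible as Ad(K₁)-modules, then (G/K₁, g) is a g.o. space if and only if g is the standard metric. -/
open Module

lemma exists_eigen_aux {E : Type*} [AddCommGroup E] [Module ℝ E] [FiniteDimensional ℝ E]
    [Nontrivial E]
    (b : E →ₗ[ℝ] E →ₗ[ℝ] ℝ) (hsy : ∀ x y, b x y = b y x) (hpos : ∀ x, x ≠ 0 → 0 < b x x)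
    (T : E →ₗ[ℝ] E) (hT : ∀ x y, b (T x) y = b x (T y)) :
    ∃ (μ : ℝ) (v : E), v ≠ 0 ∧ T v = μ • v := by
  letI core : InnerProductSpace.Core ℝ E :=
    { inner := fun x y => b x y
      conj_inner_symm := fun x y => by simpa using hsy y x
      re_inner_nonneg := fun x => by
        rcases eq_or_ne x 0 with h | h
        · simp [h]
        · simpa using (hpos x h).le
      add_left := fun x y z => by simp
      smul_left := fun x y r => by simp [mul_comm]
      definite := fun x hx => by
        by_contra h
        exact absurd hx (ne_of_gt (hpos x h)) }
  letI : NormedAddCommGroup E := core.toNormedAddCommGroup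
  letI : InnerProductSpace ℝ E := InnerProductSpace.ofCore core.toCore
  have hsymm : T.IsSymmetric := by
    intro x y
    exact hT x y
  have := hsymm.hasEigenvalue_iSup_of_finiteDimensional
  obtain ⟨v, hv⟩ := this.exists_hasEigenvector
  exact ⟨_, v, hv.right, by simpa [Module.End.mem_eigenspace_iff] using hv.apply_eq_smul⟩

/-- A symmetric equivariant operator preserving an irreducible invariant submodule
acts on it as a scalar. -/
lemma exists_scalar {𝔤 : Type*} [LieRing 𝔤] [LieAlgebra ℝ 𝔤] [FiniteDimensional ℝ 𝔤]
    (hpos : ∀ x : 𝔤, x ≠ 0 → killingForm ℝ 𝔤 x x < 0)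
    (k : LieSubalgebra ℝ 𝔤) (m : Submodule ℝ 𝔤) (hirr : AdIrreducible k m)
    (T : 𝔤 →ₗ[ℝ] 𝔤) (hTm : ∀ u ∈ m, T u ∈ m)
    (hTsym : ∀ u ∈ m, ∀ v ∈ m, killingForm ℝ 𝔤 (T u) v = killingForm ℝ 𝔤 u (T v))
    (hTequiv : ∀ c ∈ k, ∀ u ∈ m, T ⁅c, u⁆ = ⁅c, T u⁆) :
    ∃ μ : ℝ, ∀ u ∈ m, T u = μ • u := by
  haveI : Nontrivial ↥m := Submodule.nontrivial_iff_ne_bot.mpr hirr.2.1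
  set K := killingForm ℝ 𝔤 with hK
  -- the bilinear form on the submodule
  let b : ↥m →ₗ[ℝ] ↥m →ₗ[ℝ] ℝ := LinearMap.mk₂ ℝ (fun x y => -(K x y))
    (fun x y z => by simp [add_comm])
    (fun r x y => by simp)
    (fun x y z => by simp [add_comm])
    (fun r x y => by simp)
  have hbsy : ∀ x y : ↥m, b x y = b y x := by
    intro x y
    simp only [b, LinearMap.mk₂_apply, neg_inj]
    exact LieModule.traceForm_comm ℝ 𝔤 𝔤 x y
  have hbpos : ∀ x : ↥m, x ≠ 0 → 0 < b x x := by
    intro x hx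
    have hx' : (x : 𝔤) ≠ 0 := fun h => hx (Subtype.coe_injective h)
    simpa [b] using hpos _ hx'
  let T' : ↥m →ₗ[ℝ] ↥m := T.restrict hTm
  have hT' : ∀ x y : ↥m, b (T' x) y = b x (T' y) := by
    intro x y
    simp only [b, LinearMap.mk₂_apply, neg_inj, T', LinearMap.restrict_apply]
    exact hTsym x x.2 y y.2
  obtain ⟨μ, v, hv0, hveq⟩ := exists_eigen_aux b hbsy hbpos T' hT'
  refine ⟨μ, ?_⟩
  have hvg : T (v : 𝔤) = μ • (v : 𝔤) := by
    have := congrArg (Subtype.val) hveq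
    simpa [T', LinearMap.restrict_apply] using this
  -- eigenspace as a submodule of 𝔤
  set E : Submodule ℝ 𝔤 := m ⊓ LinearMap.ker (T - μ • LinearMap.id) with hE
  have hEm : E ≤ m := inf_le_left
  have hEinv : AdInvariant k E := by
    intro c hc w hw
    obtain ⟨hw1, hw2⟩ := Submodule.mem_inf.mp hw
    have hw2' : T w = μ • w := by
      have := LinearMap.mem_ker.mp hw2
      simpa [sub_eq_zero] using this
    refine Submodule.mem_inf.mpr ⟨hirr.1 c hc w hw1, LinearMap.mem_ker.mpr ?_⟩
    simp only [LinearMap.sub_apply, LinearMap.smul_apply, LinearMap.id_apply]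
    rw [hTequiv c hc w hw1, hw2', lie_smul]
    simp
  have hEne : E ≠ ⊥ := by
    intro h
    apply hv0
    have hvE : (v : 𝔤) ∈ E := by
      refine Submodule.mem_inf.mpr ⟨v.2, LinearMap.mem_ker.mpr ?_⟩
      simp [hvg]
    rw [h] at hvE
    exact Subtype.coe_injective (by simpa using hvE)
  have : E = m := (hirr.2.2 E hEm hEinv).resolve_left hEne
  intro u hu
  have huE : u ∈ E := this ▸ hu
  have := (Submodule.mem_inf.mp huE).2
  have := LinearMap.mem_ker.mp this
  simpa [sub_eq_zero] using this

set_option maxHeartbeats 1000000 in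
/-- The action of an abelian `s` central in `k` on a `k`-irreducible module `m` on which
some element of `s` acts nontrivially is through multiples of a fixed complex structure. -/
lemma s_action {𝔤 : Type*} [LieRing 𝔤] [LieAlgebra ℝ 𝔤] [FiniteDimensional ℝ 𝔤]
    (hpos : ∀ x : 𝔤, x ≠ 0 → killingForm ℝ 𝔤 x x < 0)
    (k s : LieSubalgebra ℝ 𝔤) (hsk : s ≤ k)
    (hcent : ∀ z ∈ s, ∀ c ∈ k, ⁅z, c⁆ = (0 : 𝔤))
    (m : Submodule ℝ 𝔤) (hirr : AdIrreducible k m)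
    (sb : 𝔤) (hsb : sb ∈ s) (hDne : ∃ u ∈ m, ⁅sb, u⁆ ≠ 0) :
    ∃ J : 𝔤 →ₗ[ℝ] 𝔤,
      (∀ u ∈ m, J u ∈ m) ∧ (∀ u ∈ m, J (J u) = -u) ∧
      (∀ z ∈ s, ∃ c : ℝ, ∀ u ∈ m, ⁅z, u⁆ = c • J u) := by
  set K := killingForm ℝ 𝔤 with hK
  have κ' : ∀ a x y : 𝔤, K ⁅a, x⁆ y = -(K x ⁅a, y⁆) := fun a x y =>
    LieModule.traceForm_apply_lie_apply' ℝ 𝔤 𝔤 a x y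
  have hsbk : sb ∈ k := hsk hsb
  have hDm : ∀ u ∈ m, ⁅sb, u⁆ ∈ m := fun u hu => hirr.1 sb hsbk u hu
  -- the kernel of ad sb on m is trivial
  have kerD : ∀ u ∈ m, ⁅sb, u⁆ = 0 → u = 0 := by
    set Kd : Submodule ℝ 𝔤 := m ⊓ LinearMap.ker (LieAlgebra.ad ℝ 𝔤 sb) with hKd
    have hKdinv : AdInvariant k Kd := by
      intro c hc w hw
      obtain ⟨hw1, hw2⟩ := Submodule.mem_inf.mp hw
      have hw2' : ⁅sb, w⁆ = 0 := by simpa [LieAlgebra.ad_apply] using hw2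
      refine Submodule.mem_inf.mpr ⟨hirr.1 c hc w hw1, LinearMap.mem_ker.mpr ?_⟩
      have : ⁅sb, ⁅c, w⁆⁆ = ⁅⁅sb, c⁆, w⁆ + ⁅c, ⁅sb, w⁆⁆ := leibniz_lie sb c w
      have hzc : ⁅sb, c⁆ = 0 := hcent sb hsb c hc
      simp [LieAlgebra.ad_apply, this, hzc, hw2']
    have hKdne : Kd ≠ m := by
      obtain ⟨u, hu, hune⟩ := hDne
      intro h
      have : u ∈ Kd := h ▸ hu
      exact hune (by simpa [LieAlgebra.ad_apply] using (Submodule.mem_inf.mp this).2)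
    have hKdbot : Kd = ⊥ := (hirr.2.2 Kd inf_le_left hKdinv).resolve_right hKdne
    intro u hu h0
    have : u ∈ Kd := Submodule.mem_inf.mpr ⟨hu, by simpa [LieAlgebra.ad_apply] using h0⟩
    simpa [hKdbot] using this
  -- commuting of ad z and ad sb for z ∈ s
  have hcomm : ∀ z ∈ s, ∀ x : 𝔤, ⁅z, ⁅sb, x⁆⁆ = ⁅sb, ⁅z, x⁆⁆ := by
    intro z hz x
    have : ⁅z, ⁅sb, x⁆⁆ = ⁅⁅z, sb⁆, x⁆ + ⁅sb, ⁅z, x⁆⁆ := leibniz_lie z sb x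
    rw [this, hcent z hz sb hsbk, zero_lie, zero_add]
  have hequivD : ∀ z ∈ s, ∀ c ∈ k, ∀ x : 𝔤, ⁅z, ⁅c, x⁆⁆ = ⁅c, ⁅z, x⁆⁆ := by
    intro z hz c hc x
    have : ⁅z, ⁅c, x⁆⁆ = ⁅⁅z, c⁆, x⁆ + ⁅c, ⁅z, x⁆⁆ := leibniz_lie z c x
    rw [this, hcent z hz c hc, zero_lie, zero_add]
  -- (ad sb)^2 is a negative scalar μ on m
  obtain ⟨μ, hμ⟩ : ∃ μ : ℝ, ∀ u ∈ m, ⁅sb, ⁅sb, u⁆⁆ = μ • u := by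
    obtain ⟨μ, hμ⟩ := exists_scalar hpos k m hirr
      ((LieAlgebra.ad ℝ 𝔤 sb) ∘ₗ (LieAlgebra.ad ℝ 𝔤 sb))
      (fun u hu => by simpa [LieAlgebra.ad_apply] using hDm _ (hDm u hu))
      (fun u hu v hv => by
        simp only [LinearMap.comp_apply, LieAlgebra.ad_apply]
        rw [κ', κ', hcomm sb hsb]  -- might need adjusting
        ring_nf
        rfl)
      (fun c hc u hu => by
        simp only [LinearMap.comp_apply, LieAlgebra.ad_apply]
        rw [hequivD sb hsb c hc, hequivD sb hsb c hc])
    exact ⟨μ, fun u hu => by simpa [LieAlgebra.ad_apply] using hμ u hu⟩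
  obtain ⟨u₀, hu₀, hu₀0⟩ := (Submodule.ne_bot_iff m).mp hirr.2.1
  have hDu₀ : ⁅sb, u₀⁆ ≠ 0 := fun h => hu₀0 (kerD u₀ hu₀ h)
  have hμneg : μ < 0 := by
    have h1 : K ⁅sb, u₀⁆ ⁅sb, u₀⁆ < 0 := hpos _ hDu₀
    have h2 : K ⁅sb, u₀⁆ ⁅sb, u₀⁆ = -(μ * K u₀ u₀) := by
      rw [κ', hμ u₀ hu₀]
      simp [mul_comm]
    have h3 : K u₀ u₀ < 0 := hpos _ hu₀0
    nlinarith
  set θ : ℝ := Real.sqrt (-μ) with hθ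
  have hθpos : 0 < θ := Real.sqrt_pos.mpr (by linarith)
  have hθsq : θ * θ = -μ := Real.mul_self_sqrt (by linarith)
  refine ⟨θ⁻¹ • (LieAlgebra.ad ℝ 𝔤 sb), ?_, ?_, ?_⟩
  · intro u hu
    simpa [LieAlgebra.ad_apply] using Submodule.smul_mem m θ⁻¹ (hDm u hu)
  · intro u hu
    have : θ⁻¹ * (θ⁻¹ * μ) = -1 := by
      field_simp
      nlinarith
    simp only [LinearMap.smul_apply, LieAlgebra.ad_apply, lie_smul, hμ u hu, smul_smul]
    rw [this]
    simp
  · intro z hz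
    have hzk : z ∈ k := hsk hz
    have hθinv : θ⁻¹ * (θ⁻¹ * μ) = -1 := by
      field_simp
      nlinarith
    -- (ad z) ∘ J is symmetric and equivariant, hence scalar lam; then ⁅z,u⁆ = -lam • J u
    obtain ⟨lam, hlam⟩ := exists_scalar hpos k m hirr
      (θ⁻¹ • ((LieAlgebra.ad ℝ 𝔤 z) ∘ₗ (LieAlgebra.ad ℝ 𝔤 sb)))
      (fun u hu => by
        have : ⁅z, ⁅sb, u⁆⁆ ∈ m := hirr.1 z hzk _ (hDm u hu)
        simpa [LieAlgebra.ad_apply] using Submodule.smul_mem m θ⁻¹ this)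
      (fun u hu v hv => by
        have key : K ⁅z, ⁅sb, u⁆⁆ v = K u ⁅z, ⁅sb, v⁆⁆ := by
          rw [κ' z, κ' sb, hcomm z hz v]
          ring
        simp only [LinearMap.smul_apply, LinearMap.comp_apply, LieAlgebra.ad_apply, map_smul,
          smul_eq_mul, LinearMap.smul_apply]
        rw [key])
      (fun c hc u hu => by
        simp only [LinearMap.smul_apply, LinearMap.comp_apply, LieAlgebra.ad_apply, lie_smul]
        rw [hequivD sb hsb c hc, hequivD z hz c hc])
    refine ⟨-lam, fun u hu => ?_⟩
    have hJu : (θ⁻¹ • (LieAlgebra.ad ℝ 𝔤 sb)) u = θ⁻¹ • ⁅sb, u⁆ := by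
      simp [LieAlgebra.ad_apply]
    rw [hJu]
    have hJum : θ⁻¹ • ⁅sb, u⁆ ∈ m := Submodule.smul_mem m θ⁻¹ (hDm u hu)
    have h1 := hlam _ hJum
    have h2 : (θ⁻¹ • ((LieAlgebra.ad ℝ 𝔤 z) ∘ₗ (LieAlgebra.ad ℝ 𝔤 sb))) (θ⁻¹ • ⁅sb, u⁆)
        = -⁅z, u⁆ := by
      simp only [LinearMap.smul_apply, LinearMap.comp_apply, LieAlgebra.ad_apply, map_smul,
        lie_smul, smul_smul]
      rw [hμ u hu, lie_smul, smul_smul, mul_assoc, hθinv, neg_one_smul]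
    rw [h2] at h1
    rw [neg_smul, ← h1, neg_neg]

set_option maxHeartbeats 1000000 in
/-- Key step: for a g.o. metric on the M-space, the metric endomorphism `Λ` is equivariant
under all of `𝔨` (not just `𝔨₁`) on `𝔫 = 𝔰 ⊕ 𝔪`. -/
lemma lambda_equivariant {𝔤 : Type*} [LieRing 𝔤] [LieAlgebra ℝ 𝔤] [FiniteDimensional ℝ 𝔤]
    (hcompact : ∀ x : 𝔤, x ≠ 0 → killingForm ℝ 𝔤 x x < 0)
    (𝔨 𝔨₁ 𝔰 : LieSubalgebra ℝ 𝔤)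
    (h𝔨cent : ∀ x : 𝔤, x ∈ 𝔨 ↔ ∀ s ∈ 𝔰, ⁅s, x⁆ = 0)
    (h𝔰𝔨 : 𝔰 ≤ 𝔨) (h𝔨₁𝔨 : 𝔨₁ ≤ 𝔨)
    (h𝔰𝔨₁ : ∀ s ∈ 𝔰, ∀ k ∈ 𝔨₁, ⁅s, k⁆ = (0 : 𝔤))
    (hder : ∀ x ∈ 𝔨, ∀ y ∈ 𝔨, ⁅x, y⁆ ∈ 𝔨₁)
    (𝔪 : Submodule ℝ 𝔤)
    (h𝔪orth : ∀ x ∈ 𝔨, ∀ y ∈ 𝔪, killingForm ℝ 𝔤 x y = 0)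
    (h𝔪inv : ∀ x ∈ 𝔨, ∀ w ∈ 𝔪, ⁅x, w⁆ ∈ 𝔪)
    (Λ : 𝔤 →ₗ[ℝ] 𝔤)
    (hΛ𝔫 : ∀ x ∈ 𝔰.toSubmodule ⊔ 𝔪, Λ x ∈ 𝔰.toSubmodule ⊔ 𝔪)
    (hΛsym : ∀ x ∈ 𝔰.toSubmodule ⊔ 𝔪, ∀ y ∈ 𝔰.toSubmodule ⊔ 𝔪,
      killingForm ℝ 𝔤 (Λ x) y = killingForm ℝ 𝔤 x (Λ y))
    (hΛequiv : ∀ k ∈ 𝔨₁, ∀ x ∈ 𝔰.toSubmodule ⊔ 𝔪, Λ ⁅k, x⁆ = ⁅k, Λ x⁆)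
    (hGO : ∀ x ∈ 𝔰.toSubmodule ⊔ 𝔪, ∃ a ∈ 𝔨₁, ⁅a + x, Λ x⁆ ∈ 𝔨₁.toSubmodule) :
    ∀ c ∈ 𝔨, ∀ x ∈ 𝔰.toSubmodule ⊔ 𝔪, Λ ⁅c, x⁆ = ⁅c, Λ x⁆ := by
  set K := killingForm ℝ 𝔤 with hKdef
  set n : Submodule ℝ 𝔤 := 𝔰.toSubmodule ⊔ 𝔪 with hn
  have κsymm : ∀ x y : 𝔤, K x y = K y x := fun x y => LieModule.traceForm_comm ℝ 𝔤 𝔤 x y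
  have κ' : ∀ a x y : 𝔤, K ⁅a, x⁆ y = -(K x ⁅a, y⁆) := fun a x y =>
    LieModule.traceForm_apply_lie_apply' ℝ 𝔤 𝔤 a x y
  have hcentk : ∀ s ∈ 𝔰, ∀ c ∈ 𝔨, ⁅s, c⁆ = (0 : 𝔤) := fun s hs c hc => (h𝔨cent c).mp hc s hs
  -- bracketing 𝔨 against n lands in 𝔪
  have hkn𝔪 : ∀ c ∈ 𝔨, ∀ x ∈ n, ⁅c, x⁆ ∈ 𝔪 := by
    intro c hc x hx
    obtain ⟨s, hs, w, hw, rfl⟩ := Submodule.mem_sup.mp hx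
    have h1 : ⁅c, s⁆ = 0 := by
      have := hcentk s hs c hc
      rw [← lie_skew, this, neg_zero]
    rw [lie_add, h1, zero_add]
    exact h𝔪inv c hc w hw
  -- the quadratic identity
  have hq : ∀ t ∈ 𝔨, (∀ a ∈ 𝔨₁, K t a = 0) → ∀ x ∈ n, K ⁅x, Λ x⁆ t = 0 := by
    intro t ht htorth x hx
    obtain ⟨a, ha, hbr⟩ := hGO x hx
    have h1 : K ⁅a + x, Λ x⁆ t = 0 := by
      rw [κsymm]
      exact htorth _ hbr
    have h2 : K ⁅a, Λ x⁆ t = 0 := by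
      have hm : ⁅a, Λ x⁆ ∈ 𝔪 := hkn𝔪 a (h𝔨₁𝔨 ha) _ (hΛ𝔫 x hx)
      rw [κsymm]
      exact h𝔪orth t ht _ hm
    have h3 : ⁅a + x, Λ x⁆ = ⁅a, Λ x⁆ + ⁅x, Λ x⁆ := add_lie a x (Λ x)
    rw [h3, map_add, LinearMap.add_apply, h2, zero_add] at h1
    exact h1
  -- polarization
  have hpol : ∀ t ∈ 𝔨, (∀ a ∈ 𝔨₁, K t a = 0) → ∀ x ∈ n, ∀ y ∈ n,
      K ⁅x, Λ y⁆ t + K ⁅y, Λ x⁆ t = 0 := by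
    intro t ht htorth x hx y hy
    have e1 := hq t ht htorth x hx
    have e2 := hq t ht htorth y hy
    have e3 := hq t ht htorth (x + y) (add_mem hx hy)
    have expand : ⁅x + y, Λ (x + y)⁆ =
        ⁅x, Λ x⁆ + ⁅x, Λ y⁆ + ⁅y, Λ x⁆ + ⁅y, Λ y⁆ := by
      rw [map_add, lie_add, add_lie, add_lie]
      abel
    rw [expand] at e3
    simp only [map_add, LinearMap.add_apply] at e3
    linarith
  -- equivariance w.r.t. B-orthogonal complement of 𝔨₁ in 𝔨
  have hadj : ∀ t ∈ 𝔨, (∀ a ∈ 𝔨₁, K t a = 0) → ∀ x ∈ n, Λ ⁅t, x⁆ = ⁅t, Λ x⁆ := by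
    intro t ht htorth x hx
    have htx : ⁅t, x⁆ ∈ 𝔪 := hkn𝔪 t ht x hx
    have htxn : ⁅t, x⁆ ∈ n := le_sup_right (α := Submodule ℝ 𝔤) htx
    have htΛx : ⁅t, Λ x⁆ ∈ 𝔪 := hkn𝔪 t ht _ (hΛ𝔫 x hx)
    have hwn : Λ ⁅t, x⁆ - ⁅t, Λ x⁆ ∈ n :=
      sub_mem (hΛ𝔫 _ htxn) (le_sup_right (α := Submodule ℝ 𝔤) htΛx)
    have hker : ∀ y ∈ n, K (Λ ⁅t, x⁆ - ⁅t, Λ x⁆) y = 0 := by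
      intro y hy
      have hp := hpol t ht htorth x hx y hy
      -- K ⁅x, Λ y⁆ t = K (Λ ⁅t,x⁆) y
      have id1 : K ⁅x, Λ y⁆ t = K (Λ ⁅t, x⁆) y := by
        rw [κ' x (Λ y) t]
        have : ⁅x, t⁆ = -⁅t, x⁆ := by rw [← lie_skew]
        rw [this, map_neg, neg_neg]
        rw [κsymm]
        exact (hΛsym _ htxn y hy).symm
      -- K ⁅y, Λ x⁆ t = -(K ⁅t, Λ x⁆ y)
      have id2 : K ⁅y, Λ x⁆ t = -(K ⁅t, Λ x⁆ y) := by
        rw [κ' y (Λ x) t]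
        have : ⁅y, t⁆ = -⁅t, y⁆ := by rw [← lie_skew]
        rw [this, map_neg, neg_neg]
        rw [κsymm]
        rw [κ' t y (Λ x)]
        rw [κsymm]
      rw [id1, id2] at hp
      rw [map_sub, LinearMap.sub_apply]
      linarith
    by_contra hne
    have : Λ ⁅t, x⁆ - ⁅t, Λ x⁆ ≠ 0 := sub_ne_zero.mpr hne
    exact absurd (hker _ hwn) (ne_of_lt (hcompact _ this))
  -- decomposition of 𝔨 into 𝔨₁ and its B-orthogonal complement inside 𝔨
  have hrefl : (killingForm ℝ 𝔤).IsRefl := (LieModule.traceForm_isSymm ℝ 𝔤 𝔤).isRefl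
  have hrestr : ((killingForm ℝ 𝔤).restrict 𝔨₁.toSubmodule).Nondegenerate := by
    refine (LinearMap.IsRefl.nondegenerate_iff_separatingLeft (fun a b h => ?_)).mpr ?_
    · exact hrefl _ _ h
    intro x hx
    by_contra h0
    have hx' : (x : 𝔤) ≠ 0 := fun h => h0 (Subtype.coe_injective (by simpa using h))
    have := hx x
    simp only [LinearMap.BilinForm.restrict_apply, LinearMap.domRestrict_apply] at this
    exact absurd this (ne_of_lt (hcompact _ hx'))
  have hisCompl := LinearMap.BilinForm.isCompl_orthogonal_of_restrict_nondegenerate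
    (B := killingForm ℝ 𝔤) (W := 𝔨₁.toSubmodule) hrefl hrestr
  have hkdec : ∀ c ∈ 𝔨, ∃ t k1, c = t + k1 ∧ t ∈ 𝔨 ∧ (∀ a ∈ 𝔨₁, K t a = 0) ∧ k1 ∈ 𝔨₁ := by
    intro c hc
    have : c ∈ (⊤ : Submodule ℝ 𝔤) := trivial
    rw [← hisCompl.sup_eq_top] at this
    obtain ⟨k1, hk1, o, ho, rfl⟩ := Submodule.mem_sup.mp this
    refine ⟨o, k1, by abel, ?_, ?_, hk1⟩
    · have h1 : k1 + o ∈ 𝔨.toSubmodule := hc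
      have h2 : k1 ∈ 𝔨.toSubmodule := h𝔨₁𝔨 hk1
      have ho' : o = (k1 + o) - k1 := by abel
      rw [ho']
      exact Submodule.sub_mem _ h1 h2
    · intro a ha
      have := (LinearMap.BilinForm.mem_orthogonal_iff).mp ho a ha
      rw [κsymm]
      exact this
  intro c hc x hx
  obtain ⟨t, k1, rfl, ht, htorth, hk1⟩ := hkdec c hc
  rw [add_lie, add_lie, map_add, hadj t ht htorth x hx, hΛequiv k1 hk1 x hx]

set_option maxHeartbeats 1000000 in
/-- If `Λ` is `𝔨`-equivariant then it preserves `𝔰`, `m₁` and `m₂`. -/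
lemma lambda_preserves {𝔤 : Type*} [LieRing 𝔤] [LieAlgebra ℝ 𝔤] [FiniteDimensional ℝ 𝔤]
    (hcompact : ∀ x : 𝔤, x ≠ 0 → killingForm ℝ 𝔤 x x < 0)
    (𝔨 𝔰 : LieSubalgebra ℝ 𝔤)
    (h𝔨cent : ∀ x : 𝔤, x ∈ 𝔨 ↔ ∀ s ∈ 𝔰, ⁅s, x⁆ = 0)
    (h𝔰𝔨 : 𝔰 ≤ 𝔨)
    (h𝔰ab : ∀ x ∈ 𝔰, ∀ y ∈ 𝔰, ⁅x, y⁆ = (0 : 𝔤))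
    (𝔪 : Submodule ℝ 𝔤)
    (h𝔪compl : IsCompl 𝔨.toSubmodule 𝔪)
    (h𝔪orth : ∀ x ∈ 𝔨, ∀ y ∈ 𝔪, killingForm ℝ 𝔤 x y = 0)
    (m₁ m₂ : Submodule ℝ 𝔤)
    (hmsub₁ : m₁ ≤ 𝔪) (hmsub₂ : m₂ ≤ 𝔪)
    (hmsum : m₁ ⊔ m₂ = 𝔪)
    (hmorth : ∀ x ∈ m₁, ∀ y ∈ m₂, killingForm ℝ 𝔤 x y = 0)
    (hmirr₁ : AdIrreducible 𝔨 m₁) (hmirr₂ : AdIrreducible 𝔨 m₂)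
    (hmineq : ¬ AdEquiv 𝔨 m₁ m₂)
    (Λ : 𝔤 →ₗ[ℝ] 𝔤)
    (hΛ𝔫 : ∀ x ∈ 𝔰.toSubmodule ⊔ 𝔪, Λ x ∈ 𝔰.toSubmodule ⊔ 𝔪)
    (hΛsym : ∀ x ∈ 𝔰.toSubmodule ⊔ 𝔪, ∀ y ∈ 𝔰.toSubmodule ⊔ 𝔪,
      killingForm ℝ 𝔤 (Λ x) y = killingForm ℝ 𝔤 x (Λ y))
    (hequivK : ∀ c ∈ 𝔨, ∀ x ∈ 𝔰.toSubmodule ⊔ 𝔪, Λ ⁅c, x⁆ = ⁅c, Λ x⁆) :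
    (∀ s ∈ 𝔰.toSubmodule, Λ s ∈ 𝔰.toSubmodule) ∧
    (∀ u ∈ m₁, Λ u ∈ m₁) ∧ (∀ u ∈ m₂, Λ u ∈ m₂) := by
  set K := killingForm ℝ 𝔤 with hKdef
  set n : Submodule ℝ 𝔤 := 𝔰.toSubmodule ⊔ 𝔪 with hn
  have κsymm : ∀ x y : 𝔤, K x y = K y x := fun x y => LieModule.traceForm_comm ℝ 𝔤 𝔤 x y
  have hkm0 : ∀ x, x ∈ 𝔨.toSubmodule → x ∈ 𝔪 → x = 0 := by
    intro x h1 h2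
    exact Submodule.disjoint_def.mp h𝔪compl.disjoint x h1 h2
  -- Λ preserves 𝔰
  have hΛs : ∀ s ∈ 𝔰.toSubmodule, Λ s ∈ 𝔰.toSubmodule := by
    intro s hs
    have hsn : s ∈ n := le_sup_left (α := Submodule ℝ 𝔤) hs
    have hΛsk : Λ s ∈ 𝔨 := by
      rw [h𝔨cent]
      intro z hz
      have h1 : Λ ⁅z, s⁆ = ⁅z, Λ s⁆ := hequivK z (h𝔰𝔨 hz) s hsn
      rw [h𝔰ab z hz s hs] at h1
      rw [← h1, map_zero]
    obtain ⟨s', hs', w, hw, hsum'⟩ := Submodule.mem_sup.mp (hΛ𝔫 s hsn)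
    have hwk : w ∈ 𝔨.toSubmodule := by
      have : w = Λ s - s' := by rw [← hsum']; abel
      rw [this]
      exact Submodule.sub_mem _ hΛsk (h𝔰𝔨 hs')
    have : w = 0 := hkm0 w hwk hw
    rw [← hsum', this, add_zero]
    exact hs'
  -- Λ maps 𝔪 to 𝔪
  have hΛ𝔪 : ∀ u ∈ 𝔪, Λ u ∈ 𝔪 := by
    intro u hu
    have hun : u ∈ n := le_sup_right (α := Submodule ℝ 𝔤) hu
    obtain ⟨s', hs', w, hw, hsum'⟩ := Submodule.mem_sup.mp (hΛ𝔫 u hun)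
    have hKs : ∀ s ∈ 𝔰.toSubmodule, K (Λ u) s = 0 := by
      intro s hs
      have h1 : K (Λ u) s = K u (Λ s) := hΛsym u hun s (le_sup_left (α := Submodule ℝ 𝔤) hs)
      rw [h1, κsymm]
      exact h𝔪orth _ (h𝔰𝔨 (hΛs s hs)) u hu
    have hs'0 : s' = 0 := by
      by_contra hne
      have h2 : K (Λ u) s' = 0 := hKs s' hs'
      rw [← hsum'] at h2
      rw [map_add, LinearMap.add_apply] at h2
      have h3 : K w s' = 0 := by
        rw [κsymm]
        exact h𝔪orth s' (h𝔰𝔨 hs') w hw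
      rw [h3, add_zero] at h2
      exact absurd h2 (ne_of_lt (hcompact s' hne))
    rw [← hsum', hs'0, zero_add]
    exact hw
  -- m₁ ⊓ m₂ trivial
  have hm12 : ∀ x, x ∈ m₁ → x ∈ m₂ → x = 0 := by
    intro x h1 h2
    by_contra hne
    exact absurd (hmorth x h1 x h2) (ne_of_lt (hcompact x hne))
  -- decomposition of elements of 𝔪
  have hdec𝔪 : ∀ u ∈ 𝔪, ∃ p ∈ m₁, ∃ q ∈ m₂, u = p + q := by
    intro u hu
    rw [← hmsum] at hu
    obtain ⟨p, hp, q, hq, h⟩ := Submodule.mem_sup.mp hu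
    exact ⟨p, hp, q, hq, h.symm⟩
  -- IsCompl m₂ (𝔨 ⊔ m₁) : projection P2
  have hdisj2 : Disjoint m₂ (𝔨.toSubmodule ⊔ m₁) := by
    rw [Submodule.disjoint_def]
    intro x hx2 hx
    obtain ⟨c, hc, p, hp, hcp⟩ := Submodule.mem_sup.mp hx
    have h1 : K x x = K x c + K x p := by rw [← hcp, map_add]
    have h2 : K x c = 0 := by rw [κsymm]; exact h𝔪orth c hc x (hmsub₂ hx2)
    have h3 : K x p = 0 := by rw [κsymm]; exact hmorth p hp x hx2
    by_contra hne
    rw [h2, h3, add_zero] at h1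
    exact absurd h1 (ne_of_lt (hcompact x hne))
  have hcod2 : m₂ ⊔ (𝔨.toSubmodule ⊔ m₁) = ⊤ := by
    rw [← sup_assoc, sup_comm m₂ 𝔨.toSubmodule, sup_assoc, sup_comm m₂ m₁, hmsum]
    exact h𝔪compl.sup_eq_top
  have hisc2 : IsCompl m₂ (𝔨.toSubmodule ⊔ m₁) := ⟨hdisj2, codisjoint_iff.mpr hcod2⟩
  set P2 : 𝔤 →ₗ[ℝ] 𝔤 := m₂.subtype ∘ₗ (m₂.projectionOnto _ hisc2) with hP2def
  have hP2add : ∀ q ∈ m₂, ∀ r ∈ 𝔨.toSubmodule ⊔ m₁, P2 (q + r) = q := by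
    intro q hq r hr
    have h1 : P2 q = q := by
      simp only [hP2def, LinearMap.comp_apply]
      rw [Submodule.projectionOnto_apply_left hisc2 ⟨q, hq⟩]
      rfl
    have h2 : P2 r = 0 := by
      simp only [hP2def, LinearMap.comp_apply]
      rw [Submodule.projectionOnto_apply_of_mem_right hisc2 hr]
      rfl
    rw [map_add, h1, h2, add_zero]
  -- P2 ∘ Λ on m₁ : equivariance on m₁
  have hfequiv : ∀ c ∈ 𝔨, ∀ u ∈ m₁, P2 (Λ ⁅c, u⁆) = ⁅c, P2 (Λ u)⁆ := by
    intro c hc u hu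
    have hun : u ∈ n := le_sup_right (α := Submodule ℝ 𝔤) (hmsub₁ hu)
    obtain ⟨p, hp, q, hq, hpq⟩ := hdec𝔪 (Λ u) (hΛ𝔪 u (hmsub₁ hu))
    have e1 : Λ ⁅c, u⁆ = ⁅c, Λ u⁆ := hequivK c hc u hun
    have e2 : ⁅c, Λ u⁆ = ⁅c, q⁆ + ⁅c, p⁆ := by rw [hpq, lie_add]; abel
    have e3 : P2 (Λ u) = q := by
      rw [hpq, add_comm]
      exact hP2add q hq p (le_sup_right (α := Submodule ℝ 𝔤) hp)
    rw [e1, e2, e3]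
    exact hP2add _ (hmirr₂.1 c hc q hq) _
      (le_sup_right (α := Submodule ℝ 𝔤) (hmirr₁.1 c hc p hp))
  -- kernel of P2 ∘ Λ on m₁
  set Kker : Submodule ℝ 𝔤 := m₁ ⊓ LinearMap.ker (P2 ∘ₗ Λ) with hKker
  have hKkerinv : AdInvariant 𝔨 Kker := by
    intro c hc w hw
    obtain ⟨hw1, hw2⟩ := Submodule.mem_inf.mp hw
    have hw2' : P2 (Λ w) = 0 := by simpa using hw2
    refine Submodule.mem_inf.mpr ⟨hmirr₁.1 c hc w hw1, ?_⟩
    have : P2 (Λ ⁅c, w⁆) = 0 := by rw [hfequiv c hc w hw1, hw2', lie_zero]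
    simpa using this
  have hΛm₁ : ∀ u ∈ m₁, Λ u ∈ m₁ := by
    rcases hmirr₁.2.2 Kker inf_le_left hKkerinv with hbot | htop
    · -- kernel trivial : build an AdEquiv, contradiction
      exfalso
      apply hmineq
      refine ⟨P2 ∘ₗ Λ, ?_, ?_, ?_⟩
      · -- image is m₂
        have hle : Submodule.map (P2 ∘ₗ Λ) m₁ ≤ m₂ := by
          rintro _ ⟨u, hu, rfl⟩
          simp only [LinearMap.comp_apply, hP2def]
          exact Subtype.coe_prop _
        have hinv : AdInvariant 𝔨 (Submodule.map (P2 ∘ₗ Λ) m₁) := by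
          intro c hc w hw
          obtain ⟨u, hu, rfl⟩ := hw
          refine ⟨⁅c, u⁆, hmirr₁.1 c hc u hu, ?_⟩
          simp only [LinearMap.comp_apply]
          exact hfequiv c hc u hu
        rcases hmirr₂.2.2 _ hle hinv with h | h
        · exfalso
          obtain ⟨u, hu, hune⟩ := (Submodule.ne_bot_iff m₁).mp hmirr₁.2.1
          have : (P2 ∘ₗ Λ) u ∈ Submodule.map (P2 ∘ₗ Λ) m₁ := ⟨u, hu, rfl⟩
          rw [h] at this
          have h0 : (P2 ∘ₗ Λ) u = 0 := by simpa using this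
          have : u ∈ Kker := Submodule.mem_inf.mpr ⟨hu, by simpa using h0⟩
          rw [hbot] at this
          exact hune (by simpa using this)
        · exact h
      · intro u hu h0
        have : u ∈ Kker := Submodule.mem_inf.mpr ⟨hu, by simpa using h0⟩
        rw [hbot] at this
        simpa using this
      · intro c hc u hu
        simp only [LinearMap.comp_apply]
        exact hfequiv c hc u hu
    · -- kernel is everything : Λ m₁ ⊆ m₁
      intro u hu
      have huK : u ∈ Kker := htop ▸ hu
      have h0 : P2 (Λ u) = 0 := by simpa using (Submodule.mem_inf.mp huK).2
      obtain ⟨p, hp, q, hq, hpq⟩ := hdec𝔪 (Λ u) (hΛ𝔪 u (hmsub₁ hu))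
      have e3 : P2 (Λ u) = q := by
        rw [hpq, add_comm]
        exact hP2add q hq p (le_sup_right (α := Submodule ℝ 𝔤) hp)
      rw [e3] at h0
      rw [hpq, h0, add_zero]
      exact hp
  -- Λ m₂ ⊆ m₂ by symmetry of Λ
  have hΛm₂ : ∀ v ∈ m₂, Λ v ∈ m₂ := by
    intro v hv
    have hvn : v ∈ n := le_sup_right (α := Submodule ℝ 𝔤) (hmsub₂ hv)
    obtain ⟨p, hp, q, hq, hpq⟩ := hdec𝔪 (Λ v) (hΛ𝔪 v (hmsub₂ hv))
    have hp0 : p = 0 := by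
      by_contra hne
      have h1 : K (Λ v) p = 0 := by
        rw [hΛsym v hvn p (le_sup_right (α := Submodule ℝ 𝔤) (hmsub₁ hp)), κsymm]
        exact hmorth _ (hΛm₁ p hp) v hv
      rw [hpq, map_add, LinearMap.add_apply] at h1
      have h2 : K q p = 0 := by rw [κsymm]; exact hmorth p hp q hq
      rw [h2, add_zero] at h1
      exact absurd h1 (ne_of_lt (hcompact p hne))
    rw [hpq, hp0, zero_add]
    exact hq
  exact ⟨hΛs, hΛm₁, hΛm₂⟩

set_option maxHeartbeats 2000000 in
/-- The center `𝔰` is one-dimensional: its elements are all multiples of a single nonzero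
vector. -/
lemma dim_s_one {𝔤 : Type*} [LieRing 𝔤] [LieAlgebra ℝ 𝔤] [FiniteDimensional ℝ 𝔤]
    [LieAlgebra.IsSimple ℝ 𝔤]
    (hcompact : ∀ x : 𝔤, x ≠ 0 → killingForm ℝ 𝔤 x x < 0)
    (𝔨 𝔰 : LieSubalgebra ℝ 𝔤)
    (h𝔨cent : ∀ x : 𝔤, x ∈ 𝔨 ↔ ∀ s ∈ 𝔰, ⁅s, x⁆ = 0)
    (h𝔰𝔨 : 𝔰 ≤ 𝔨)
    (𝔪 : Submodule ℝ 𝔤)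
    (h𝔪compl : IsCompl 𝔨.toSubmodule 𝔪)
    (h𝔪orth : ∀ x ∈ 𝔨, ∀ y ∈ 𝔪, killingForm ℝ 𝔤 x y = 0)
    (m₁ m₂ : Submodule ℝ 𝔤)
    (hmsub₁ : m₁ ≤ 𝔪) (hmsub₂ : m₂ ≤ 𝔪)
    (hmsum : m₁ ⊔ m₂ = 𝔪)
    (hmorth : ∀ x ∈ m₁, ∀ y ∈ m₂, killingForm ℝ 𝔤 x y = 0)
    (hmirr₁ : AdIrreducible 𝔨 m₁) (hmirr₂ : AdIrreducible 𝔨 m₂)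
    (hconv : ∀ x ∈ m₁, ∀ y ∈ m₁, ⁅x, y⁆ ∈ 𝔨.toSubmodule ⊔ m₂) :
    ∃ z ∈ 𝔰, z ≠ 0 ∧ ∀ s ∈ 𝔰, ∃ t : ℝ, s = t • z := by
  set K := killingForm ℝ 𝔤 with hKdef
  have κsymm : ∀ x y : 𝔤, K x y = K y x := fun x y => LieModule.traceForm_comm ℝ 𝔤 𝔤 x y
  have κinv : ∀ x y z : 𝔤, K ⁅x, y⁆ z = K x ⁅y, z⁆ := fun x y z =>
    LieModule.traceForm_apply_lie_apply ℝ 𝔤 𝔤 x y z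
  have κ' : ∀ a x y : 𝔤, K ⁅a, x⁆ y = -(K x ⁅a, y⁆) := fun a x y =>
    LieModule.traceForm_apply_lie_apply' ℝ 𝔤 𝔤 a x y
  have hcentk : ∀ s ∈ 𝔰, ∀ c ∈ 𝔨, ⁅s, c⁆ = (0 : 𝔤) := fun s hs c hc => (h𝔨cent c).mp hc s hs
  have hkm0 : ∀ x, x ∈ 𝔨.toSubmodule → x ∈ 𝔪 → x = 0 := fun x h1 h2 =>
    Submodule.disjoint_def.mp h𝔪compl.disjoint x h1 h2
  have hdec𝔤 : ∀ x : 𝔤, ∃ c ∈ 𝔨.toSubmodule, ∃ p ∈ m₁, ∃ q ∈ m₂, x = c + p + q := by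
    intro x
    have hx : x ∈ (⊤ : Submodule ℝ 𝔤) := trivial
    rw [← h𝔪compl.sup_eq_top] at hx
    obtain ⟨c, hc, w, hw, hcw⟩ := Submodule.mem_sup.mp hx
    rw [← hmsum] at hw
    obtain ⟨p, hp, q, hq, hpq⟩ := Submodule.mem_sup.mp hw
    exact ⟨c, hc, p, hp, q, hq, by rw [← hcw, ← hpq]; abel⟩
  -- the kernel-of-adjoint-action criterion : kills both summands → zero
  have hcenter : ∀ s0 ∈ 𝔰, (∀ u ∈ m₁, ⁅s0, u⁆ = 0) → (∀ u ∈ m₂, ⁅s0, u⁆ = 0) → s0 = 0 := by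
    intro s0 hs0 hb1 hb2
    have hall : ∀ x : 𝔤, ⁅s0, x⁆ = 0 := by
      intro x
      obtain ⟨c, hc, p, hp, q, hq, rfl⟩ := hdec𝔤 x
      rw [lie_add, lie_add, hcentk s0 hs0 c hc, hb1 p hp, hb2 q hq]
      simp
    set I : LieIdeal ℝ 𝔤 :=
      { Submodule.span ℝ {s0} with
        lie_mem := by
          intro x y hy
          have hy' : y ∈ Submodule.span ℝ {s0} := hy
          obtain ⟨t, rfl⟩ := Submodule.mem_span_singleton.mp hy'
          show ⁅x, t • s0⁆ ∈ Submodule.span ℝ {s0}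
          have h0 : ⁅x, s0⁆ = 0 := by rw [← lie_skew, hall x, neg_zero]
          rw [lie_smul, h0, smul_zero]
          exact Submodule.zero_mem _ } with hI
    rcases LieAlgebra.IsSimple.eq_bot_or_eq_top I with h | h
    · have : s0 ∈ I := Submodule.mem_span_singleton_self s0
      rw [h] at this
      exact (LieSubmodule.mem_bot _).mp this
    · exfalso
      have hmem : ∀ x : 𝔤, x ∈ Submodule.span ℝ {s0} := by
        intro x
        have : x ∈ I := h ▸ LieSubmodule.mem_top x
        exact this
      have habel : IsLieAbelian 𝔤 := by
        constructor
        intro x y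
        obtain ⟨t, rfl⟩ := Submodule.mem_span_singleton.mp (hmem x)
        obtain ⟨r, rfl⟩ := Submodule.mem_span_singleton.mp (hmem y)
        rw [smul_lie, lie_smul, lie_self, smul_zero, smul_zero]
      exact LieAlgebra.IsSimple.non_abelian (R := ℝ) (L := 𝔤) habel
  -- existence of nontrivial action of 𝔰 on each m i
  have hex : ∀ (m : Submodule ℝ 𝔤), m ≤ 𝔪 → m ≠ ⊥ → ∃ sb ∈ 𝔰, ∃ u ∈ m, ⁅sb, u⁆ ≠ 0 := by
    intro m hm hne
    by_contra h
    push_neg at h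
    apply hne
    rw [Submodule.eq_bot_iff]
    intro u hu
    have hu𝔨 : u ∈ 𝔨 := by
      rw [h𝔨cent]
      intro s hs
      exact h s hs u hu
    exact hkm0 u hu𝔨 (hm hu)
  obtain ⟨sb₁, hsb₁, hDne₁⟩ := hex m₁ hmsub₁ hmirr₁.2.1
  obtain ⟨sb₂, hsb₂, hDne₂⟩ := hex m₂ hmsub₂ hmirr₂.2.1
  obtain ⟨J₁, hJ₁m, hJ₁J, hrep₁⟩ :=
    s_action hcompact 𝔨 𝔰 h𝔰𝔨 hcentk m₁ hmirr₁ sb₁ hsb₁ hDne₁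
  obtain ⟨J₂, hJ₂m, hJ₂J, hrep₂⟩ :=
    s_action hcompact 𝔨 𝔰 h𝔰𝔨 hcentk m₂ hmirr₂ sb₂ hsb₂ hDne₂
  -- from injectivity of the action on one module, conclude
  have conclude : ∀ (J : 𝔤 →ₗ[ℝ] 𝔤) (m : Submodule ℝ 𝔤),
      (∀ z ∈ 𝔰, ∃ c : ℝ, ∀ u ∈ m, ⁅z, u⁆ = c • J u) →
      (∀ s ∈ 𝔰, (∀ u ∈ m, ⁅s, u⁆ = 0) → s = 0) →
      ∃ z ∈ 𝔰, z ≠ 0 ∧ ∀ s ∈ 𝔰, ∃ t : ℝ, s = t • z := by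
    intro J m hrep hinj
    -- 𝔰 has a nonzero element
    have hsne : ∃ z, z ∈ 𝔰 ∧ z ≠ 0 := by
      by_contra h
      push_neg at h
      obtain ⟨u, hu, hune⟩ := (Submodule.ne_bot_iff m₁).mp hmirr₁.2.1
      apply hune
      have hu𝔨 : u ∈ 𝔨 := by
        rw [h𝔨cent]
        intro s hs
        rw [h s hs, zero_lie]
      exact hkm0 u hu𝔨 (hmsub₁ hu)
    obtain ⟨z, hz, hzne⟩ := hsne
    obtain ⟨c₀, hc₀⟩ := hrep z hz
    have hc₀ne : c₀ ≠ 0 := by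
      intro h0
      apply hzne
      apply hinj z hz
      intro u hu
      rw [hc₀ u hu, h0, zero_smul]
    refine ⟨z, hz, hzne, ?_⟩
    intro s hs
    obtain ⟨cs, hcs⟩ := hrep s hs
    refine ⟨cs / c₀, ?_⟩
    have hdiff : s - (cs / c₀) • z = 0 := by
      apply hinj
      · have h1 : s ∈ 𝔰.toSubmodule := hs
        have h2 : z ∈ 𝔰.toSubmodule := hz
        exact Submodule.sub_mem _ h1 (Submodule.smul_mem _ _ h2)
      · intro u hu
        rw [sub_lie, smul_lie, hcs u hu, hc₀ u hu, smul_smul]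
        rw [div_mul_cancel₀ cs hc₀ne, sub_self]
    have := sub_eq_zero.mp hdiff
    exact this
  -- case analysis on the brackets
  by_cases h12 : ∀ u ∈ m₁, ∀ v ∈ m₁, ⁅u, v⁆ ∈ 𝔨.toSubmodule
  · by_cases h22 : ∀ u ∈ m₂, ∀ v ∈ m₂, ⁅u, v⁆ ∈ 𝔨.toSubmodule ⊔ m₂
    · -- impossible : gives a proper nonzero ideal 𝔠 ⊔ m₁
      exfalso
      -- first : [m₁, m₂] = 0
      have hm12z : ∀ u ∈ m₁, ∀ v ∈ m₂, ⁅u, v⁆ = 0 := by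
        intro u hu v hv
        have hK0 : ∀ x : 𝔤, K ⁅u, v⁆ x = 0 := by
          intro x
          obtain ⟨c, hc, p, hp, q, hq, rfl⟩ := hdec𝔤 x
          have t1 : K ⁅u, v⁆ c = 0 := by
            rw [κinv]
            have h1 : ⁅v, c⁆ ∈ m₂ := by
              have h2 : ⁅c, v⁆ ∈ m₂ := hmirr₂.1 c hc v hv
              rw [← lie_skew]
              exact Submodule.neg_mem _ h2
            exact hmorth u hu _ h1
          have t2 : K ⁅u, v⁆ p = 0 := by
            rw [κ' u v p]
            have h1 : ⁅u, p⁆ ∈ 𝔨.toSubmodule := h12 u hu p hp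
            have h2 : K v ⁅u, p⁆ = 0 := by
              rw [κsymm]
              exact h𝔪orth _ h1 v (hmsub₂ hv)
            rw [h2, neg_zero]
          have t3 : K ⁅u, v⁆ q = 0 := by
            rw [κinv]
            obtain ⟨k', hk', q', hq', h'⟩ := Submodule.mem_sup.mp (h22 v hv q hq)
            rw [← h', map_add]
            have e1 : K u k' = 0 := by rw [κsymm]; exact h𝔪orth k' hk' u (hmsub₁ hu)
            have e2 : K u q' = 0 := hmorth u hu q' hq'
            rw [e1, e2, add_zero]
          rw [map_add, map_add, t1, t2, t3]
          simp
        by_contra hne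
        exact absurd (hK0 ⁅u, v⁆) (ne_of_lt (hcompact _ hne))
      -- the ideal C ⊔ m₁
      set C : Submodule ℝ 𝔤 :=
        Submodule.span ℝ {x : 𝔤 | ∃ u ∈ m₁, ∃ v ∈ m₁, x = ⁅u, v⁆} with hC
      have hCk : C ≤ 𝔨.toSubmodule := by
        rw [Submodule.span_le]
        rintro x ⟨u, hu, v, hv, rfl⟩
        exact h12 u hu v hv
      set Isub : Submodule ℝ 𝔤 := C ⊔ m₁ with hIsub
      have hm1I : m₁ ≤ Isub := le_sup_right
      have hCI : C ≤ Isub := le_sup_left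
      -- bracketing x against a generator of C stays in Isub
      have hgen : ∀ (x : 𝔤), ∀ u ∈ m₁, ∀ v ∈ m₁, ⁅x, ⁅u, v⁆⁆ ∈ Isub := by
        intro x u hu v hv
        obtain ⟨c, hc, p, hp, q, hq, rfl⟩ := hdec𝔤 x
        rw [add_lie, add_lie]
        refine Submodule.add_mem _ (Submodule.add_mem _ ?_ ?_) ?_
        · rw [leibniz_lie]
          refine Submodule.add_mem _ (hCI ?_) (hCI ?_)
          · exact Submodule.subset_span ⟨⁅c, u⁆, hmirr₁.1 c hc u hu, v, hv, rfl⟩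
          · exact Submodule.subset_span ⟨u, hu, ⁅c, v⁆, hmirr₁.1 c hc v hv, rfl⟩
        · rw [leibniz_lie]
          refine Submodule.add_mem _ (hm1I ?_) (hm1I ?_)
          · exact hmirr₁.1 _ (h12 p hp u hu) v hv
          · have h1 : ⁅p, v⁆ ∈ 𝔨.toSubmodule := h12 p hp v hv
            have h2 : ⁅⁅p, v⁆, u⁆ ∈ m₁ := hmirr₁.1 _ h1 u hu
            rw [← lie_skew]
            exact Submodule.neg_mem _ h2
        · rw [leibniz_lie]
          have e1 : ⁅q, u⁆ = 0 := by rw [← lie_skew, hm12z u hu q hq, neg_zero]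
          have e2 : ⁅q, v⁆ = 0 := by rw [← lie_skew, hm12z v hv q hq, neg_zero]
          rw [e1, e2, zero_lie, lie_zero, add_zero]
          exact Submodule.zero_mem _
      have hlie : ∀ (x : 𝔤), ∀ y ∈ Isub, ⁅x, y⁆ ∈ Isub := by
        intro x y hy
        obtain ⟨yc, hyc, y1, hy1, rfl⟩ := Submodule.mem_sup.mp hy
        rw [lie_add]
        refine Submodule.add_mem _ ?_ ?_
        · refine Submodule.span_induction ?_ ?_ ?_ ?_ hyc
          · rintro g ⟨u, hu, v, hv, rfl⟩
            exact hgen x u hu v hv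
          · rw [lie_zero]; exact Submodule.zero_mem _
          · intro a b _ _ ha hb
            rw [lie_add]; exact Submodule.add_mem _ ha hb
          · intro r a _ ha
            rw [lie_smul]; exact Submodule.smul_mem _ r ha
        · obtain ⟨c, hc, p, hp, q, hq, rfl⟩ := hdec𝔤 x
          rw [add_lie, add_lie]
          refine Submodule.add_mem _ (Submodule.add_mem _ ?_ ?_) ?_
          · exact hm1I (hmirr₁.1 c hc y1 hy1)
          · exact hCI (Submodule.subset_span ⟨p, hp, y1, hy1, rfl⟩)
          · have e1 : ⁅q, y1⁆ = 0 := by rw [← lie_skew, hm12z y1 hy1 q hq, neg_zero]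
            rw [e1]; exact Submodule.zero_mem _
      set I : LieIdeal ℝ 𝔤 := { Isub with lie_mem := fun {x y} hy => hlie x y hy } with hIdef
      have hmemI : ∀ x, x ∈ I ↔ x ∈ Isub := fun x => Iff.rfl
      rcases LieAlgebra.IsSimple.eq_bot_or_eq_top I with h | h
      · obtain ⟨u, hu, hune⟩ := (Submodule.ne_bot_iff m₁).mp hmirr₁.2.1
        have : u ∈ I := hm1I hu
        rw [h] at this
        exact hune ((LieSubmodule.mem_bot _).mp this)
      · obtain ⟨w, hw, hwne⟩ := (Submodule.ne_bot_iff m₂).mp hmirr₂.2.1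
        have hwI : w ∈ Isub := by
          have : w ∈ I := h ▸ LieSubmodule.mem_top w
          exact this
        obtain ⟨yc, hyc, y1, hy1, hsum'⟩ := Submodule.mem_sup.mp hwI
        have h1 : K w w = K w yc + K w y1 := by rw [← hsum', map_add]
        have h2 : K w yc = 0 := by
          rw [κsymm]
          exact h𝔪orth yc (hCk hyc) w (hmsub₂ hw)
        have h3 : K w y1 = 0 := by
          rw [κsymm]
          exact hmorth y1 hy1 w hw
        rw [h2, h3, add_zero] at h1
        exact absurd h1 (ne_of_lt (hcompact w hwne))
    · -- [m₂,m₂] has a nonzero m₁-component : action on m₂ is injective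
      push_neg at h22
      obtain ⟨u, hu, v, hv, hne⟩ := h22
      obtain ⟨c, hc, p, hp, q, hq, hdecuv⟩ := hdec𝔤 ⁅u, v⁆
      have hpne : p ≠ 0 := by
        intro h0
        apply hne
        rw [hdecuv, h0, add_zero]
        exact Submodule.mem_sup.mpr ⟨c, hc, q, hq, rfl⟩
      apply conclude J₂ m₂ hrep₂
      intro s hs hsu
      apply hcenter s hs ?_ hsu
      -- show s kills m₁ : use that ⁅s, ⁅u,v⁆⁆ = 0 and p ≠ 0
      obtain ⟨c1, hc1⟩ := hrep₁ s hs
      have hz1 : ⁅s, ⁅u, v⁆⁆ = 0 := by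
        rw [leibniz_lie, hsu u hu, hsu v hv, zero_lie, lie_zero, add_zero]
      have hz2 : ⁅s, ⁅u, v⁆⁆ = c1 • J₁ p := by
        rw [hdecuv, lie_add, lie_add, hcentk s hs c hc, hsu q hq, hc1 p hp]
        simp
      have hJp : J₁ p ≠ 0 := by
        intro h0
        apply hpne
        have := hJ₁J p hp
        rw [h0, map_zero] at this
        exact neg_eq_zero.mp this.symm
      have hc10 : c1 = 0 := by
        rcases smul_eq_zero.mp (hz2.symm.trans hz1) with h | h
        · exact h
        · exact absurd h hJp
      intro w hw
      rw [hc1 w hw, hc10, zero_smul]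
  · -- [m₁,m₁] has a nonzero m₂-component : action on m₁ is injective
    push_neg at h12
    obtain ⟨u, hu, v, hv, hne⟩ := h12
    obtain ⟨k', hk', w₂, hw₂, hdecuv⟩ := Submodule.mem_sup.mp (hconv u hu v hv)
    have hw₂ne : w₂ ≠ 0 := by
      intro h0
      apply hne
      rw [← hdecuv, h0, add_zero]
      exact hk'
    apply conclude J₁ m₁ hrep₁
    intro s hs hsu
    apply hcenter s hs hsu
    obtain ⟨c2, hc2⟩ := hrep₂ s hs
    have hz1 : ⁅s, ⁅u, v⁆⁆ = 0 := by
      rw [leibniz_lie, hsu u hu, hsu v hv, zero_lie, lie_zero, add_zero]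
    have hz2 : ⁅s, ⁅u, v⁆⁆ = c2 • J₂ w₂ := by
      rw [← hdecuv, lie_add, hcentk s hs k' hk', hc2 w₂ hw₂]
      simp
    have hJw : J₂ w₂ ≠ 0 := by
      intro h0
      apply hw₂ne
      have := hJ₂J w₂ hw₂
      rw [h0, map_zero] at this
      exact neg_eq_zero.mp this.symm
    have hc20 : c2 = 0 := by
      rcases smul_eq_zero.mp (hz2.symm.trans hz1) with h | h
      · exact h
      · exact absurd h hJw
    intro w hw
    rw [hc2 w hw, hc20, zero_smul]

set_option maxHeartbeats 2000000 in
/-- **Theorem 2, part 3)** (Arvanitoyeorgos–Wang–Zhao).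
Let `G/K` be a generalized flag manifold with two isotropy summands `𝔪 = 𝔪₁ ⊕ 𝔪₂`
(with `[𝔪₁, 𝔪₁] ⊆ 𝔨 ⊕ 𝔪₂`) and `G/K₁` the corresponding `M`-space.  If both `𝔪₁` and
`𝔪₂` are reducible as `Ad(K₁)`-modules, then `(G/K₁, g)` is a g.o. space if and only if
`g` is the standard metric (generated by `B(·,·)`, up to a positive scale). -/
theorem goMetric_iff_standard_of_two_summands_both_reducible
    {𝔤 : Type*} [LieRing 𝔤] [LieAlgebra ℝ 𝔤] [FiniteDimensional ℝ 𝔤]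
    -- `G` is a compact simple Lie group: `𝔤` is simple with negative definite Killing form
    [LieAlgebra.IsSimple ℝ 𝔤]
    (hcompact : ∀ x : 𝔤, x ≠ 0 → killingForm ℝ 𝔤 x x < 0)
    (𝔨 𝔨₁ 𝔰 : LieSubalgebra ℝ 𝔤)
    -- `S` is a torus in `G` and `K = C(S)` is its centralizer
    (h𝔰ab : ∀ x ∈ 𝔰, ∀ y ∈ 𝔰, ⁅x, y⁆ = (0 : 𝔤))
    (h𝔨cent : ∀ x : 𝔤, x ∈ 𝔨 ↔ ∀ s ∈ 𝔰, ⁅s, x⁆ = 0)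
    -- `K = S × K₁`, `K₁` being the semisimple part of `K`
    (h𝔰𝔨 : 𝔰 ≤ 𝔨) (h𝔨₁𝔨 : 𝔨₁ ≤ 𝔨)
    (h𝔨sum : 𝔰.toSubmodule ⊔ 𝔨₁.toSubmodule = 𝔨.toSubmodule)
    (h𝔨disj : Disjoint 𝔰.toSubmodule 𝔨₁.toSubmodule)
    (h𝔰𝔨₁ : ∀ s ∈ 𝔰, ∀ k ∈ 𝔨₁, ⁅s, k⁆ = (0 : 𝔤))
    (hder : ∀ x ∈ 𝔨, ∀ y ∈ 𝔨, ⁅x, y⁆ ∈ 𝔨₁)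
    -- the `B`-orthogonal reductive decomposition `𝔤 = 𝔨 ⊕ 𝔪`, where `B = -Killing form`
    (𝔪 : Submodule ℝ 𝔤)
    (h𝔪compl : IsCompl 𝔨.toSubmodule 𝔪)
    (h𝔪orth : ∀ x ∈ 𝔨, ∀ y ∈ 𝔪, killingForm ℝ 𝔤 x y = 0)
    (h𝔪inv : AdInvariant 𝔨 𝔪)
    -- the decomposition `𝔪 = 𝔪₁ ⊕ 𝔪₂`, `B`-orthogonal, into two pairwise inequivalent
    -- irreducible `Ad(K)`-submodules, with the convention `[𝔪₁, 𝔪₁] ⊆ 𝔨 ⊕ 𝔪₂`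
    (m₁ m₂ : Submodule ℝ 𝔤)
    (hmsub₁ : m₁ ≤ 𝔪) (hmsub₂ : m₂ ≤ 𝔪)
    (hmsum : m₁ ⊔ m₂ = 𝔪)
    (hmorth : ∀ x ∈ m₁, ∀ y ∈ m₂, killingForm ℝ 𝔤 x y = 0)
    (hmirr₁ : AdIrreducible 𝔨 m₁) (hmirr₂ : AdIrreducible 𝔨 m₂)
    (hmineq : ¬ AdEquiv 𝔨 m₁ m₂)
    (hconv : ∀ x ∈ m₁, ∀ y ∈ m₁, ⁅x, y⁆ ∈ 𝔨.toSubmodule ⊔ m₂)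
    -- both `𝔪₁` and `𝔪₂` are reducible as `Ad(K₁)`-modules
    (hred₁ : AdReducible 𝔨₁ m₁) (hred₂ : AdReducible 𝔨₁ m₂)
    -- `Λ` is the associated operator of the `G`-invariant metric `g` on the `M`-space
    -- `G/K₁`, whose tangent space at the origin is `𝔫 = 𝔰 ⊕ 𝔪`:
    -- positive definite, symmetric w.r.t. `B = -Killing`, and `Ad(K₁)`-equivariant
    (Λ : 𝔤 →ₗ[ℝ] 𝔤)
    (hΛ𝔫 : ∀ x ∈ 𝔰.toSubmodule ⊔ 𝔪, Λ x ∈ 𝔰.toSubmodule ⊔ 𝔪)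
    (hΛsym : ∀ x ∈ 𝔰.toSubmodule ⊔ 𝔪, ∀ y ∈ 𝔰.toSubmodule ⊔ 𝔪,
      killingForm ℝ 𝔤 (Λ x) y = killingForm ℝ 𝔤 x (Λ y))
    (hΛpos : ∀ x ∈ 𝔰.toSubmodule ⊔ 𝔪, x ≠ 0 → 0 < -(killingForm ℝ 𝔤 (Λ x) x))
    (hΛequiv : ∀ k ∈ 𝔨₁, ∀ x ∈ 𝔰.toSubmodule ⊔ 𝔪, Λ ⁅k, x⁆ = ⁅k, Λ x⁆)
    :
    IsGOMetric 𝔨₁ (𝔰.toSubmodule ⊔ 𝔪) Λ ↔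
      ∃ c : ℝ, 0 < c ∧ ∀ x ∈ 𝔰.toSubmodule ⊔ 𝔪, Λ x = c • x := by
  constructor
  · -- forward direction: a g.o. metric is standard
    intro hGO
    set K := killingForm ℝ 𝔤 with hKdef
    set n : Submodule ℝ 𝔤 := 𝔰.toSubmodule ⊔ 𝔪 with hn
    have κsymm : ∀ x y : 𝔤, K x y = K y x := fun x y => LieModule.traceForm_comm ℝ 𝔤 𝔤 x y
    have hkm0 : ∀ x, x ∈ 𝔨.toSubmodule → x ∈ 𝔪 → x = 0 := fun x h1 h2 =>
      Submodule.disjoint_def.mp h𝔪compl.disjoint x h1 h2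
    -- Step 1 : Λ is 𝔨-equivariant on n
    have hequivK : ∀ c ∈ 𝔨, ∀ x ∈ n, Λ ⁅c, x⁆ = ⁅c, Λ x⁆ :=
      lambda_equivariant hcompact 𝔨 𝔨₁ 𝔰 h𝔨cent h𝔰𝔨 h𝔨₁𝔨 h𝔰𝔨₁ hder 𝔪 h𝔪orth h𝔪inv Λ
        hΛ𝔫 hΛsym hΛequiv hGO
    -- Step 2 : Λ preserves 𝔰, m₁ and m₂
    obtain ⟨hΛs, hΛm₁, hΛm₂⟩ :=
      lambda_preserves hcompact 𝔨 𝔰 h𝔨cent h𝔰𝔨 h𝔰ab 𝔪 h𝔪compl h𝔪orth m₁ m₂ hmsub₁ hmsub₂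
        hmsum hmorth hmirr₁ hmirr₂ hmineq Λ hΛ𝔫 hΛsym hequivK
    -- Step 3 : Λ is a scalar c₁ on m₁ and c₂ on m₂
    obtain ⟨c₁, hc₁⟩ := exists_scalar hcompact 𝔨 m₁ hmirr₁ Λ hΛm₁
      (fun u hu v hv => hΛsym u (le_sup_right (α := Submodule ℝ 𝔤) (hmsub₁ hu))
        v (le_sup_right (α := Submodule ℝ 𝔤) (hmsub₁ hv)))
      (fun c hc u hu => hequivK c hc u (le_sup_right (α := Submodule ℝ 𝔤) (hmsub₁ hu)))
    obtain ⟨c₂, hc₂⟩ := exists_scalar hcompact 𝔨 m₂ hmirr₂ Λ hΛm₂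
      (fun u hu v hv => hΛsym u (le_sup_right (α := Submodule ℝ 𝔤) (hmsub₂ hu))
        v (le_sup_right (α := Submodule ℝ 𝔤) (hmsub₂ hv)))
      (fun c hc u hu => hequivK c hc u (le_sup_right (α := Submodule ℝ 𝔤) (hmsub₂ hu)))
    -- Step 4 : 𝔰 is one-dimensional, spanned by z
    obtain ⟨z, hz, hzne, hspan⟩ :=
      dim_s_one hcompact 𝔨 𝔰 h𝔨cent h𝔰𝔨 𝔪 h𝔪compl h𝔪orth m₁ m₂ hmsub₁ hmsub₂ hmsum hmorth
        hmirr₁ hmirr₂ hconv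
    have hzn : z ∈ n := le_sup_left (α := Submodule ℝ 𝔤) hz
    -- Λ z = σ • z
    obtain ⟨σ, hσ⟩ := hspan (Λ z) (hΛs z hz)
    -- Step 5 : the g.o. condition forces σ = c₁ = c₂
    have hstep : ∀ (m : Submodule ℝ 𝔤) (cm : ℝ), m ≤ 𝔪 → AdIrreducible 𝔨 m →
        AdReducible 𝔨₁ m → (∀ u ∈ m, Λ u = cm • u) → σ = cm := by
      intro m cm hmsub hirr hred hcm
      by_contra hne
      obtain ⟨-, U, hUle, hUinv, hUbot, hUnem⟩ := hred
      -- ad z preserves U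
      have hzu : ∀ u ∈ U, ⁅z, u⁆ ∈ U := by
        intro u hu
        have hum : u ∈ m := hUle hu
        have hun : z + u ∈ n := add_mem hzn (le_sup_right (α := Submodule ℝ 𝔤) (hmsub hum))
        obtain ⟨a, ha, hbr⟩ := hGO _ hun
        have hΛzu : Λ (z + u) = σ • z + cm • u := by rw [map_add, hσ, hcm u hum]
        have haz : ⁅a, z⁆ = 0 := by
          rw [← lie_skew, h𝔰𝔨₁ z hz a ha, neg_zero]
        have hexp : ⁅a + (z + u), Λ (z + u)⁆ = cm • ⁅a, u⁆ + (cm - σ) • ⁅z, u⁆ := by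
          rw [hΛzu, lie_add, add_lie, add_lie, add_lie, add_lie, lie_smul, lie_smul, lie_smul,
            lie_smul, lie_smul, lie_smul, haz, lie_self, lie_self]
          have huz : ⁅u, z⁆ = -⁅z, u⁆ := by rw [← lie_skew]
          rw [huz, sub_smul]
          simp only [smul_zero, smul_neg, zero_add, add_zero]
          abel
        have hbm : cm • ⁅a, u⁆ + (cm - σ) • ⁅z, u⁆ ∈ 𝔪 := by
          have h1 : ⁅a, u⁆ ∈ m := hirr.1 a (h𝔨₁𝔨 ha) u hum
          have h2 : ⁅z, u⁆ ∈ m := hirr.1 z (h𝔰𝔨 hz) u hum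
          exact hmsub (Submodule.add_mem _ (Submodule.smul_mem _ _ h1)
            (Submodule.smul_mem _ _ h2))
        have hbk : cm • ⁅a, u⁆ + (cm - σ) • ⁅z, u⁆ ∈ 𝔨.toSubmodule := by
          rw [← hexp]
          exact h𝔨₁𝔨 hbr
        have h0 : cm • ⁅a, u⁆ + (cm - σ) • ⁅z, u⁆ = 0 := hkm0 _ hbk hbm
        have hnz : (cm - σ) ≠ 0 := sub_ne_zero.mpr (fun h => hne h.symm)
        have h1 : (cm - σ) • ⁅z, u⁆ = -(cm • ⁅a, u⁆) := by
          rw [eq_neg_iff_add_eq_zero, add_comm]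
          exact h0
        have h2 : ⁅z, u⁆ = (cm - σ)⁻¹ • (-(cm • ⁅a, u⁆)) := by
          rw [← h1, smul_smul, inv_mul_cancel₀ hnz, one_smul]
        rw [h2]
        exact Submodule.smul_mem _ _ (Submodule.neg_mem _
          (Submodule.smul_mem _ _ (hUinv a ha u hu)))
      -- hence U is 𝔨-invariant, contradicting irreducibility
      have hUK : AdInvariant 𝔨 U := by
        intro c hc w hw
        have hc' : c ∈ 𝔰.toSubmodule ⊔ 𝔨₁.toSubmodule := by
          rw [h𝔨sum]
          exact hc
        obtain ⟨s, hs, k1, hk1, rfl⟩ := Submodule.mem_sup.mp hc'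
        obtain ⟨t, rfl⟩ := hspan s hs
        rw [add_lie, smul_lie]
        exact Submodule.add_mem _ (Submodule.smul_mem _ _ (hzu w hw)) (hUinv k1 hk1 w hw)
      rcases hirr.2.2 U hUle hUK with h | h
      · exact hUbot h
      · exact hUnem h
    have hσ₁ : σ = c₁ := hstep m₁ c₁ hmsub₁ hmirr₁ hred₁ hc₁
    have hσ₂ : σ = c₂ := hstep m₂ c₂ hmsub₂ hmirr₂ hred₂ hc₂
    -- positivity of σ
    have hσpos : 0 < σ := by
      have h1 := hΛpos z hzn hzne
      rw [hσ] at h1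
      have h2 : K (σ • z) z = σ * K z z := by
        rw [map_smul]
        rfl
      rw [h2] at h1
      have h3 : K z z < 0 := hcompact z hzne
      nlinarith
    refine ⟨σ, hσpos, ?_⟩
    intro x hx
    obtain ⟨s, hs, w, hw, rfl⟩ := Submodule.mem_sup.mp hx
    rw [← hmsum] at hw
    obtain ⟨p, hp, q, hq, rfl⟩ := Submodule.mem_sup.mp hw
    obtain ⟨t, rfl⟩ := hspan s hs
    rw [map_add, map_add, map_smul, hσ, hc₁ p hp, hc₂ q hq, ← hσ₁, ← hσ₂]
    rw [smul_add, smul_add, smul_smul, smul_smul, mul_comm]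
  · -- easy direction : the standard metric is g.o.
    rintro ⟨c, -, hc⟩ x hx
    refine ⟨0, 𝔨₁.zero_mem, ?_⟩
    rw [zero_add, hc x hx, lie_smul, lie_self, smul_zero]
    exact Submodule.zero_mem _
end

section
/- Let G/K be a generalized flag manifold with exactly two isotropy summands 𝔪 = 𝔪₁ ⊕ 𝔪₂ and dim 𝔪₂ = 2. Then the corresponding M-space (G/K₁, g), where g = ⟨·,·⟩ = μ B(·,·)|_{𝔰 ⊕ 𝔪₂} + μ₁ B(·,·)|_{𝔪₁}, is a g.o. space for every μ ≠ μ₁ if and only if for every V ∈ 𝔰, every X₁ ∈ 𝔪₁ and every X₂ ∈ 𝔪₂ there exists k ∈ 𝔨₁ such that [k + V + X₂, X₁] = 0. -/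
open Module

section Aux
variable {𝔤 : Type*} [LieRing 𝔤] [LieAlgebra ℝ 𝔤] [FiniteDimensional ℝ 𝔤]
set_option linter.unusedSectionVars false
set_option maxHeartbeats 1000000

local notation "κ" => killingForm ℝ 𝔤

lemma aux_kil_symm (x y : 𝔤) : κ x y = κ y x := LieModule.traceForm_comm ℝ 𝔤 𝔤 x y

lemma aux_kil_lie (x y z : 𝔤) : κ ⁅x, y⁆ z = κ x ⁅y, z⁆ :=
  LieModule.traceForm_apply_lie_apply ℝ 𝔤 𝔤 x y z

lemma aux_kil_skew (b u v : 𝔤) : κ ⁅b, u⁆ v = -κ u ⁅b, v⁆ := by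
  have h1 : κ ⁅u, b⁆ v = κ u ⁅b, v⁆ := aux_kil_lie u b v
  have h2 : ⁅b, u⁆ = -⁅u, b⁆ := (lie_skew b u).symm
  rw [h2]; simp only [map_neg, LinearMap.neg_apply, h1]

lemma aux_kil_zero (hcompact : ∀ x : 𝔤, x ≠ 0 → κ x x < 0) {x : 𝔤}
    (h : κ x x = 0) : x = 0 := by
  by_contra hx
  exact absurd h (ne_of_lt (hcompact x hx))

lemma aux_basis (hcompact : ∀ x : 𝔤, x ≠ 0 → κ x x < 0) (m₂ : Submodule ℝ 𝔤)
    (hdim : Module.finrank ℝ m₂ = 2) :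
    ∃ e₁ e₂ : 𝔤, e₁ ∈ m₂ ∧ e₂ ∈ m₂ ∧ κ e₁ e₂ = 0 ∧ κ e₁ e₁ < 0 ∧ κ e₂ e₂ < 0 ∧
      ∀ x ∈ m₂, ∃ c₁ c₂ : ℝ, x = c₁ • e₁ + c₂ • e₂ := by
  have B := Module.finBasisOfFinrankEq ℝ m₂ hdim
  set f₁ : 𝔤 := ((B 0 : m₂) : 𝔤) with hf₁
  set f₂ : 𝔤 := ((B 1 : m₂) : 𝔤) with hf₂
  have hf₁m : f₁ ∈ m₂ := (B 0).2
  have hf₂m : f₂ ∈ m₂ := (B 1).2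
  have hf₁0 : f₁ ≠ 0 := by
    simpa [hf₁, Submodule.coe_eq_zero] using B.ne_zero 0
  have hg₁ : κ f₁ f₁ < 0 := hcompact f₁ hf₁0
  set c : ℝ := κ f₁ f₂ / κ f₁ f₁ with hc
  set e₂ : 𝔤 := f₂ - c • f₁ with he₂
  have he₂m : e₂ ∈ m₂ := sub_mem hf₂m (Submodule.smul_mem _ _ hf₁m)
  have horth : κ f₁ e₂ = 0 := by
    simp only [he₂, map_sub, map_smul, LinearMap.sub_apply, LinearMap.smul_apply]
    rw [hc, smul_eq_mul, div_mul_cancel₀ _ (ne_of_lt hg₁), sub_self]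
  have he₂0 : e₂ ≠ 0 := by
    intro h
    have : (B 1 : m₂) = c • (B 0 : m₂) := by
      apply Subtype.ext
      push_cast [← hf₁, ← hf₂]
      rw [← sub_eq_zero]; exact h
    have h1 := congrArg (fun v => B.repr v 1) this
    simp [Basis.repr_self, Finsupp.single_apply] at h1
  refine ⟨f₁, e₂, hf₁m, he₂m, horth, hg₁, hcompact e₂ he₂0, ?_⟩
  intro x hx
  obtain ⟨r₁, r₂, hx'⟩ : ∃ r₁ r₂ : ℝ, x = r₁ • f₁ + r₂ • f₂ := by
    have hrepr := B.sum_repr ⟨x, hx⟩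
    rw [Fin.sum_univ_two] at hrepr
    refine ⟨B.repr ⟨x, hx⟩ 0, B.repr ⟨x, hx⟩ 1, ?_⟩
    have := congrArg (Subtype.val) hrepr
    simpa [hf₁, hf₂] using this.symm
  refine ⟨r₁ + r₂ * c, r₂, ?_⟩
  rw [hx', he₂]
  module

lemma aux_decomp (𝔨 : LieSubalgebra ℝ 𝔤) (𝔪 m₁ m₂ : Submodule ℝ 𝔤)
    (h𝔪compl : IsCompl 𝔨.toSubmodule 𝔪) (hmsum : m₁ ⊔ m₂ = 𝔪) (x : 𝔤) :
    ∃ b x₁ x₂ : 𝔤, b ∈ 𝔨 ∧ x₁ ∈ m₁ ∧ x₂ ∈ m₂ ∧ x = b + x₁ + x₂ := by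
  have htop : 𝔨.toSubmodule ⊔ 𝔪 = ⊤ := h𝔪compl.sup_eq_top
  have hx : x ∈ 𝔨.toSubmodule ⊔ 𝔪 := htop ▸ Submodule.mem_top
  obtain ⟨b, hb, m, hm, hsum⟩ := Submodule.mem_sup.mp hx
  rw [← hmsum] at hm
  obtain ⟨x₁, hx₁, x₂, hx₂, hsum2⟩ := Submodule.mem_sup.mp hm
  exact ⟨b, x₁, x₂, hb, hx₁, hx₂, by rw [← hsum, ← hsum2, add_assoc]⟩

lemma aux_key [LieAlgebra.IsSimple ℝ 𝔤]
    (hcompact : ∀ x : 𝔤, x ≠ 0 → κ x x < 0)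
    (𝔨 𝔨₁ 𝔰 : LieSubalgebra ℝ 𝔤)
    (h𝔨cent : ∀ x : 𝔤, x ∈ 𝔨 ↔ ∀ s ∈ 𝔰, ⁅s, x⁆ = 0)
    (h𝔰𝔨 : 𝔰 ≤ 𝔨) (h𝔨₁𝔨 : 𝔨₁ ≤ 𝔨)
    (h𝔨disj : Disjoint 𝔰.toSubmodule 𝔨₁.toSubmodule)
    (hder : ∀ x ∈ 𝔨, ∀ y ∈ 𝔨, ⁅x, y⁆ ∈ 𝔨₁)
    (𝔪 : Submodule ℝ 𝔤)
    (h𝔪compl : IsCompl 𝔨.toSubmodule 𝔪)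
    (h𝔪orth : ∀ x ∈ 𝔨, ∀ y ∈ 𝔪, κ x y = 0)
    (m₁ m₂ : Submodule ℝ 𝔤)
    (hmsub₁ : m₁ ≤ 𝔪) (hmsub₂ : m₂ ≤ 𝔪)
    (hmsum : m₁ ⊔ m₂ = 𝔪)
    (hmorth : ∀ x ∈ m₁, ∀ y ∈ m₂, κ x y = 0)
    (hmirr₁ : AdIrreducible 𝔨 m₁) (hmirr₂ : AdIrreducible 𝔨 m₂)
    (hdim : Module.finrank ℝ m₂ = 2) :
    (∀ x₁ ∈ m₁, ∀ x₂ ∈ m₂, ⁅x₁, x₂⁆ ∈ m₁) ∧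
      (∀ a ∈ 𝔨₁, ∀ x₂ ∈ m₂, ⁅a, x₂⁆ = (0 : 𝔤)) := by
  obtain ⟨e₁, e₂, he₁, he₂, heo, hg₁, hg₂, hspan⟩ := aux_basis hcompact m₂ hdim
  set h₀ : 𝔤 := ⁅e₁, e₂⁆ with hh₀
  have hm₁bot : m₁ ≠ ⊥ := hmirr₁.2.1
  have hm₂bot : m₂ ≠ ⊥ := hmirr₂.2.1
  have hadm₁ : ∀ b ∈ 𝔨, ∀ x ∈ m₁, ⁅b, x⁆ ∈ m₁ := hmirr₁.1
  have hadm₂ : ∀ b ∈ 𝔨, ∀ x ∈ m₂, ⁅b, x⁆ ∈ m₂ := hmirr₂.1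
  have heo' : κ e₂ e₁ = 0 := by rw [aux_kil_symm]; exact heo
  -- coordinates on m₂
  have hcoord : ∀ y ∈ m₂, y = (κ y e₁ / κ e₁ e₁) • e₁ + (κ y e₂ / κ e₂ e₂) • e₂ := by
    intro y hy
    obtain ⟨c₁, c₂, hc⟩ := hspan y hy
    have h1 : κ y e₁ = c₁ * κ e₁ e₁ := by
      rw [hc]; simp only [map_add, map_smul, LinearMap.add_apply, LinearMap.smul_apply,
        smul_eq_mul, heo']; ring
    have h2 : κ y e₂ = c₂ * κ e₂ e₂ := by
      rw [hc]; simp only [map_add, map_smul, LinearMap.add_apply, LinearMap.smul_apply,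
        smul_eq_mul, heo]; ring
    rw [h1, h2, mul_div_cancel_right₀ _ (ne_of_lt hg₁), mul_div_cancel_right₀ _ (ne_of_lt hg₂)]
    exact hc
  -- F1/F2 : action of 𝔨 on m₂ in coordinates
  have hF1 : ∀ b ∈ 𝔨, ⁅b, e₁⁆ = (κ b h₀ / κ e₂ e₂) • e₂ := by
    intro b hb
    have h1 : κ ⁅b, e₁⁆ e₁ = 0 := by rw [aux_kil_lie, lie_self, map_zero]
    have h2 : κ ⁅b, e₁⁆ e₂ = κ b h₀ := by rw [aux_kil_lie]
    have := hcoord ⁅b, e₁⁆ (hadm₂ b hb e₁ he₁)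
    rw [h1, h2, zero_div, zero_smul, zero_add] at this
    exact this
  have hF2 : ∀ b ∈ 𝔨, ⁅b, e₂⁆ = (-(κ b h₀) / κ e₁ e₁) • e₁ := by
    intro b hb
    have h1 : κ ⁅b, e₂⁆ e₂ = 0 := by rw [aux_kil_lie, lie_self, map_zero]
    have h2 : κ ⁅b, e₂⁆ e₁ = -(κ b h₀) := by
      rw [aux_kil_lie]
      rw [show ⁅e₂, e₁⁆ = -⁅e₁, e₂⁆ from (lie_skew e₂ e₁).symm, map_neg]
    have := hcoord ⁅b, e₂⁆ (hadm₂ b hb e₂ he₂)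
    rw [h1, h2, zero_div, zero_smul, add_zero] at this
    exact this
  -- action of 𝔨 on a general element of m₂
  have hFgen : ∀ b ∈ 𝔨, κ b h₀ = 0 → ∀ x ∈ m₂, ⁅b, x⁆ = 0 := by
    intro b hb hbh x hx
    obtain ⟨c₁, c₂, hc⟩ := hspan x hx
    rw [hc, lie_add, lie_smul, lie_smul, hF1 b hb, hF2 b hb, hbh]
    simp
  -- F4 : m₁ ⊥ h₀
  have hF4 : ∀ x ∈ m₁, κ x h₀ = 0 := by
    -- the span of brackets ⁅𝔨, m₁⁆ is all of m₁
    set M : Submodule ℝ 𝔤 := Submodule.span ℝ {x | ∃ b ∈ 𝔨, ∃ y ∈ m₁, x = ⁅b, y⁆} with hM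
    have hMle : M ≤ m₁ := by
      rw [hM, Submodule.span_le]
      rintro x ⟨b, hb, y, hy, rfl⟩
      exact hadm₁ b hb y hy
    have hMinv : AdInvariant 𝔨 M := by
      intro b' hb' w hw
      induction hw using Submodule.span_induction with
      | mem x hx =>
        obtain ⟨b, hb, y, hy, rfl⟩ := hx
        have : ⁅b', ⁅b, y⁆⁆ = ⁅⁅b', b⁆, y⁆ + ⁅b, ⁅b', y⁆⁆ := leibniz_lie b' b y
        rw [this]
        exact add_mem (Submodule.subset_span ⟨⁅b', b⁆, 𝔨.lie_mem hb' hb, y, hy, rfl⟩)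
          (Submodule.subset_span ⟨b, hb, ⁅b', y⁆, hadm₁ b' hb' y hy, rfl⟩)
      | zero => simp
      | add x y _ _ hx hy => rw [lie_add]; exact add_mem hx hy
      | smul c x _ hx => rw [lie_smul]; exact Submodule.smul_mem _ _ hx
    have hMne : M ≠ ⊥ := by
      intro hbot
      obtain ⟨v, hv, hv0⟩ := (Submodule.ne_bot_iff m₁).mp hm₁bot
      have hvk : v ∈ 𝔨 := by
        rw [h𝔨cent]
        intro s hs
        have : ⁅s, v⁆ ∈ M := Submodule.subset_span ⟨s, h𝔰𝔨 hs, v, hv, rfl⟩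
        rw [hbot] at this
        exact (Submodule.mem_bot ℝ).mp this
      have : v ∈ 𝔨.toSubmodule ⊓ 𝔪 := ⟨hvk, hmsub₁ hv⟩
      rw [h𝔪compl.inf_eq_bot] at this
      exact hv0 ((Submodule.mem_bot ℝ).mp this)
    have hMeq : M = m₁ := (hmirr₁.2.2 M hMle hMinv).resolve_left hMne
    -- κ(⁅b,y⁆, h₀) = 0 for generators
    have hgen : ∀ b ∈ 𝔨, ∀ y ∈ m₁, κ ⁅b, y⁆ h₀ = 0 := by
      intro b hb y hy
      have e1 : κ ⁅b, y⁆ h₀ = κ ⁅⁅b, y⁆, e₁⁆ e₂ := (aux_kil_lie ⁅b, y⁆ e₁ e₂).symm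
      have e2 : ⁅⁅b, y⁆, e₁⁆ = ⁅b, ⁅y, e₁⁆⁆ - ⁅y, ⁅b, e₁⁆⁆ := by
        rw [lie_lie]
      have t1 : κ ⁅b, ⁅y, e₁⁆⁆ e₂ = 0 := by
        rw [aux_kil_skew, hF2 b hb]
        simp only [map_smul, smul_eq_mul]
        rw [show κ ⁅y, e₁⁆ e₁ = 0 by rw [aux_kil_lie, lie_self, map_zero]]
        ring
      have t2 : κ ⁅y, ⁅b, e₁⁆⁆ e₂ = 0 := by
        rw [hF1 b hb, lie_smul]
        simp only [map_smul, LinearMap.smul_apply, smul_eq_mul]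
        rw [show κ ⁅y, e₂⁆ e₂ = 0 by rw [aux_kil_lie, lie_self, map_zero]]
        ring
      rw [e1, e2, map_sub, LinearMap.sub_apply, t1, t2, sub_self]
    intro x hx
    rw [← hMeq] at hx
    induction hx using Submodule.span_induction with
    | mem x hx => obtain ⟨b, hb, y, hy, rfl⟩ := hx; exact hgen b hb y hy
    | zero => simp
    | add x y _ _ hx hy => rw [map_add, LinearMap.add_apply, hx, hy, add_zero]
    | smul c x _ hx => rw [map_smul, LinearMap.smul_apply, hx, smul_zero]
  -- F7 : ⁅m₁, m₂⁆ ⊆ m₁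
  have hF7 : ∀ x₁ ∈ m₁, ∀ x₂ ∈ m₂, ⁅x₁, x₂⁆ ∈ m₁ := by
    intro x₁ hx₁ x₂ hx₂
    obtain ⟨b, p₁, p₂, hb, hp₁, hp₂, hdec⟩ := aux_decomp 𝔨 𝔪 m₁ m₂ h𝔪compl hmsum ⁅x₁, x₂⁆
    -- ⁅x₁,x₂⁆ is κ-orthogonal to 𝔨
    have hok : ∀ u ∈ 𝔨, κ ⁅x₁, x₂⁆ u = 0 := by
      intro u hu
      rw [aux_kil_lie]
      have : ⁅x₂, u⁆ = -⁅u, x₂⁆ := (lie_skew x₂ u).symm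
      rw [this, map_neg]
      rw [hmorth x₁ hx₁ ⁅u, x₂⁆ (hadm₂ u hu x₂ hx₂)]
      exact neg_zero
    -- ⁅x₁,x₂⁆ is κ-orthogonal to m₂
    have hom2 : ∀ u ∈ m₂, κ ⁅x₁, x₂⁆ u = 0 := by
      intro u hu
      obtain ⟨a₁, a₂, hau⟩ := hspan u hu
      obtain ⟨b₁, b₂, hax⟩ := hspan x₂ hx₂
      have key : ∀ i j : 𝔤, i ∈ ({e₁, e₂} : Set 𝔤) → j ∈ ({e₁, e₂} : Set 𝔤) →
          True := fun _ _ _ _ => trivial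
      have k11 : κ ⁅x₁, e₁⁆ e₁ = 0 := by rw [aux_kil_lie, lie_self, map_zero]
      have k22 : κ ⁅x₁, e₂⁆ e₂ = 0 := by rw [aux_kil_lie, lie_self, map_zero]
      have k12 : κ ⁅x₁, e₁⁆ e₂ = 0 := by rw [aux_kil_lie]; exact hF4 x₁ hx₁
      have k21 : κ ⁅x₁, e₂⁆ e₁ = 0 := by
        rw [aux_kil_lie, show ⁅e₂, e₁⁆ = -⁅e₁, e₂⁆ from (lie_skew e₂ e₁).symm, map_neg]
        rw [hF4 x₁ hx₁]; exact neg_zero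
      rw [hax, hau]
      simp only [lie_add, lie_smul, map_add, map_smul, LinearMap.add_apply,
        LinearMap.smul_apply, smul_eq_mul, k11, k12, k21, k22]
      ring
    -- conclude : the 𝔨 and m₂ components vanish
    have hb0 : b = 0 := by
      apply aux_kil_zero hcompact
      have h1 : κ ⁅x₁, x₂⁆ b = 0 := hok b hb
      rw [hdec] at h1
      simp only [map_add, LinearMap.add_apply] at h1
      rw [aux_kil_symm p₁ b, h𝔪orth b hb p₁ (hmsub₁ hp₁)] at h1
      rw [aux_kil_symm p₂ b, h𝔪orth b hb p₂ (hmsub₂ hp₂)] at h1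
      simpa using h1
    have hp₂0 : p₂ = 0 := by
      apply aux_kil_zero hcompact
      have h1 : κ ⁅x₁, x₂⁆ p₂ = 0 := hom2 p₂ hp₂
      rw [hdec] at h1
      simp only [map_add, LinearMap.add_apply] at h1
      rw [h𝔪orth b hb p₂ (hmsub₂ hp₂)] at h1
      rw [hmorth p₁ hp₁ p₂ hp₂] at h1
      simpa using h1
    rw [hdec, hb0, hp₂0, add_zero, zero_add]
    exact hp₁
  refine ⟨hF7, ?_⟩
  -- h₀ is κ-orthogonal to m₂
  have hh₀e₁ : κ h₀ e₁ = 0 := by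
    have h1 : κ h₀ e₁ = κ e₁ ⁅e₂, e₁⁆ := aux_kil_lie e₁ e₂ e₁
    have h2 : ⁅e₂, e₁⁆ = -⁅e₁, e₂⁆ := (lie_skew e₂ e₁).symm
    have h3 : κ e₁ h₀ = κ h₀ e₁ := aux_kil_symm e₁ h₀
    rw [h2, map_neg] at h1
    rw [← hh₀, h3] at h1
    linarith
  have hh₀e₂ : κ h₀ e₂ = 0 := by
    have h1 : κ h₀ e₂ = κ e₁ ⁅e₂, e₂⁆ := aux_kil_lie e₁ e₂ e₂
    rw [lie_self, map_zero] at h1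
    exact h1
  have hh₀m₂ : ∀ x ∈ m₂, κ h₀ x = 0 := by
    intro x hx
    obtain ⟨c₁, c₂, rfl⟩ := hspan x hx
    simp [hh₀e₁, hh₀e₂]
  -- h₀ belongs to 𝔨
  have hh₀k : h₀ ∈ 𝔨 := by
    obtain ⟨b, p₁, p₂, hb, hp₁, hp₂, hdec⟩ := aux_decomp 𝔨 𝔪 m₁ m₂ h𝔪compl hmsum h₀
    have hp₁0 : p₁ = 0 := by
      apply aux_kil_zero hcompact
      have h1 : κ h₀ p₁ = 0 := by rw [aux_kil_symm]; exact hF4 p₁ hp₁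
      rw [hdec] at h1
      simp only [map_add, LinearMap.add_apply] at h1
      rw [h𝔪orth b hb p₁ (hmsub₁ hp₁), aux_kil_symm p₂ p₁,
        hmorth p₁ hp₁ p₂ hp₂] at h1
      linarith
    have hp₂0 : p₂ = 0 := by
      apply aux_kil_zero hcompact
      have h1 : κ h₀ p₂ = 0 := hh₀m₂ p₂ hp₂
      rw [hdec] at h1
      simp only [map_add, LinearMap.add_apply] at h1
      rw [h𝔪orth b hb p₂ (hmsub₂ hp₂), hmorth p₁ hp₁ p₂ hp₂] at h1
      linarith
    rw [hdec, hp₁0, hp₂0, add_zero, add_zero]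
    exact hb
  -- h₀ is central in 𝔨
  have hF6 : ∀ b ∈ 𝔨, ⁅b, h₀⁆ = 0 := by
    intro b hb
    have h1 : ⁅b, h₀⁆ = ⁅⁅b, e₁⁆, e₂⁆ + ⁅e₁, ⁅b, e₂⁆⁆ := leibniz_lie b e₁ e₂
    rw [h1, hF1 b hb, hF2 b hb, smul_lie, lie_self, smul_zero, lie_smul, lie_self,
      smul_zero, add_zero]
  -- (*) : a 𝔨-central element killing a nonzero vector of m₁ is zero
  have hstar : ∀ ξ, ξ ∈ 𝔨 → (∀ b ∈ 𝔨, ⁅ξ, b⁆ = 0) →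
      ∀ v, v ∈ m₁ → v ≠ 0 → ⁅ξ, v⁆ = 0 → ξ = 0 := by
    intro ξ hξk hξc v hv hv0 hξv
    set U : Submodule ℝ 𝔤 := m₁ ⊓ LinearMap.ker (LieAlgebra.ad ℝ 𝔤 ξ) with hU
    have hUmem : ∀ x : 𝔤, x ∈ U ↔ x ∈ m₁ ∧ ⁅ξ, x⁆ = 0 := by
      intro x
      rw [hU, Submodule.mem_inf, LinearMap.mem_ker, LieAlgebra.ad_apply]
    have hUinv : AdInvariant 𝔨 U := by
      intro b hb w hw
      rw [hUmem] at hw ⊢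
      refine ⟨hadm₁ b hb w hw.1, ?_⟩
      rw [leibniz_lie ξ b w, hξc b hb, hw.2, zero_lie, lie_zero, add_zero]
    have hUne : U ≠ ⊥ := by
      intro hbot
      have : v ∈ U := (hUmem v).mpr ⟨hv, hξv⟩
      rw [hbot] at this
      exact hv0 ((Submodule.mem_bot ℝ).mp this)
    have hUeq : U = m₁ := (hmirr₁.2.2 U inf_le_left hUinv).resolve_left hUne
    have hkill1 : ∀ x ∈ m₁, ⁅ξ, x⁆ = 0 := by
      intro x hx
      exact ((hUmem x).mp (by rw [hUeq]; exact hx)).2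
    by_cases hr : κ ξ h₀ = 0
    · -- ξ is central in 𝔤, hence zero by simplicity
      have hcent : ∀ y : 𝔤, ⁅ξ, y⁆ = 0 := by
        intro y
        obtain ⟨b, x₁, x₂, hb, hx₁, hx₂, rfl⟩ := aux_decomp 𝔨 𝔪 m₁ m₂ h𝔪compl hmsum y
        rw [lie_add, lie_add, hξc b hb, hkill1 x₁ hx₁, hFgen ξ hξk hr x₂ hx₂]
        simp
      set I : LieIdeal ℝ 𝔤 :=
        ⟨Submodule.span ℝ {ξ}, by
          intro x m hm
          obtain ⟨c, rfl⟩ := Submodule.mem_span_singleton.mp hm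
          have : ⁅x, c • ξ⁆ = -(c • ⁅ξ, x⁆) := by
            rw [lie_smul, show ⁅x, ξ⁆ = -⁅ξ, x⁆ from (lie_skew x ξ).symm, smul_neg]
          rw [this, hcent x]
          simp⟩ with hI
      rcases LieAlgebra.IsSimple.eq_bot_or_eq_top I with hbot | htop
      · have hmem : ξ ∈ I := Submodule.mem_span_singleton_self ξ
        rw [hbot] at hmem
        exact (LieSubmodule.mem_bot _).mp hmem
      · exfalso
        refine LieAlgebra.IsSimple.non_abelian ℝ (L := 𝔤) ⟨fun x y => ?_⟩
        have hx : x ∈ I := htop ▸ LieSubmodule.mem_top x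
        obtain ⟨c, rfl⟩ := Submodule.mem_span_singleton.mp hx
        rw [smul_lie, hcent y, smul_zero]
    · -- m₂ commutes with m₁, giving a proper ideal : contradiction
      exfalso
      have h2m1 : ∀ x ∈ m₁, ⁅e₂, x⁆ = 0 := by
        intro x hx
        have hm : ⁅e₁, x⁆ ∈ m₁ := by
          have h1 := hF7 x hx e₁ he₁
          rw [show ⁅e₁, x⁆ = -⁅x, e₁⁆ from (lie_skew e₁ x).symm]
          exact neg_mem h1
        have h0 : ⁅ξ, ⁅e₁, x⁆⁆ = 0 := hkill1 _ hm
        rw [leibniz_lie, hkill1 x hx, lie_zero, add_zero, hF1 ξ hξk, smul_lie] at h0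
        rcases smul_eq_zero.mp h0 with hc | hz
        · exact absurd hc (div_ne_zero hr (ne_of_lt hg₂))
        · exact hz
      have h1m1 : ∀ x ∈ m₁, ⁅e₁, x⁆ = 0 := by
        intro x hx
        have hm : ⁅e₂, x⁆ ∈ m₁ := by
          have h1 := hF7 x hx e₂ he₂
          rw [show ⁅e₂, x⁆ = -⁅x, e₂⁆ from (lie_skew e₂ x).symm]
          exact neg_mem h1
        have h0 : ⁅ξ, ⁅e₂, x⁆⁆ = 0 := hkill1 _ hm
        rw [leibniz_lie, hkill1 x hx, lie_zero, add_zero, hF2 ξ hξk, smul_lie] at h0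
        rcases smul_eq_zero.mp h0 with hc | hz
        · exact absurd hc (div_ne_zero (neg_ne_zero.mpr hr) (ne_of_lt hg₁))
        · exact hz
      have h2m : ∀ x₂ ∈ m₂, ∀ x ∈ m₁, ⁅x₂, x⁆ = 0 := by
        intro x₂ hx₂ x hx
        obtain ⟨c₁, c₂, rfl⟩ := hspan x₂ hx₂
        rw [add_lie, smul_lie, smul_lie, h1m1 x hx, h2m1 x hx, smul_zero, smul_zero,
          add_zero]
      have hh₀m₁ : ∀ x ∈ m₁, ⁅h₀, x⁆ = 0 := by
        intro x hx
        rw [hh₀, lie_lie, h2m1 x hx, h1m1 x hx, lie_zero, lie_zero, sub_self]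
      -- the ideal (ℝ ∙ h₀) ⊔ m₂
      set P : Submodule ℝ 𝔤 := (Submodule.span ℝ {h₀}) ⊔ m₂ with hP
      have hPlie : ∀ y w : 𝔤, w ∈ P → ⁅y, w⁆ ∈ P := by
        intro y w hw
        obtain ⟨u, hu, w₂, hw₂, rfl⟩ := Submodule.mem_sup.mp hw
        obtain ⟨c, rfl⟩ := Submodule.mem_span_singleton.mp hu
        obtain ⟨b, y₁, y₂, hb, hy₁, hy₂, rfl⟩ := aux_decomp 𝔨 𝔪 m₁ m₂ h𝔪compl hmsum y
        rw [lie_add, add_lie, add_lie]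
        refine add_mem (add_mem (add_mem ?_ ?_) ?_) ?_
        · rw [lie_smul, hF6 b hb, smul_zero]
          exact Submodule.zero_mem P
        · rw [lie_smul, show ⁅y₁, h₀⁆ = -⁅h₀, y₁⁆ from (lie_skew y₁ h₀).symm,
            hh₀m₁ y₁ hy₁, neg_zero, smul_zero]
          exact Submodule.zero_mem P
        · rw [lie_smul, show ⁅y₂, h₀⁆ = -⁅h₀, y₂⁆ from (lie_skew y₂ h₀).symm]
          refine Submodule.smul_mem _ _ (Submodule.mem_sup_right (neg_mem ?_))
          exact hadm₂ h₀ hh₀k y₂ hy₂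
        · rw [add_lie, add_lie]
          refine add_mem (add_mem ?_ ?_) ?_
          · exact Submodule.mem_sup_right (hadm₂ b hb w₂ hw₂)
          · rw [show ⁅y₁, w₂⁆ = -⁅w₂, y₁⁆ from (lie_skew y₁ w₂).symm,
              h2m w₂ hw₂ y₁ hy₁, neg_zero]
            exact Submodule.zero_mem P
          · obtain ⟨a₁, a₂, rfl⟩ := hspan y₂ hy₂
            obtain ⟨b₁, b₂, rfl⟩ := hspan w₂ hw₂
            refine Submodule.mem_sup_left (Submodule.mem_span_singleton.mpr
              ⟨a₁ * b₂ - a₂ * b₁, ?_⟩)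
            have hskew : ⁅e₂, e₁⁆ = -h₀ := by
              rw [hh₀]; exact (lie_skew e₂ e₁).symm
            simp only [add_lie, lie_add, smul_lie, lie_smul, lie_self, smul_zero,
              zero_add, add_zero, hskew, hh₀, smul_neg, smul_smul]
            rw [sub_smul]
            module
      set I₂ : LieIdeal ℝ 𝔤 := ⟨P, fun {x m} hm => hPlie x m hm⟩ with hI₂
      rcases LieAlgebra.IsSimple.eq_bot_or_eq_top I₂ with hbot | htop
      · have hmem : e₁ ∈ I₂ := Submodule.mem_sup_right he₁
        rw [hbot] at hmem
        have := (LieSubmodule.mem_bot _).mp hmem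
        rw [this] at hg₁
        simp at hg₁
      · have hmem : v ∈ I₂ := htop ▸ LieSubmodule.mem_top v
        have hvP : v ∈ P := hmem
        obtain ⟨u, hu, w₂, hw₂, hvw⟩ := Submodule.mem_sup.mp hvP
        obtain ⟨c, rfl⟩ := Submodule.mem_span_singleton.mp hu
        have : κ v v = 0 := by
          nth_rewrite 2 [← hvw]
          simp only [map_add, map_smul, smul_eq_mul]
          rw [hF4 v hv, hmorth v hv w₂ hw₂]
          simp
        exact hv0 (aux_kil_zero hcompact this)
  -- a nonzero element of 𝔰
  obtain ⟨s₀, hs₀s, hs₀0⟩ : ∃ s₀, s₀ ∈ 𝔰 ∧ s₀ ≠ (0 : 𝔤) := by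
    by_contra h
    push_neg at h
    have hk : ∀ x : 𝔤, x ∈ 𝔨 := by
      intro x
      rw [h𝔨cent]
      intro s hs
      rw [h s hs, zero_lie]
    have he : e₁ ∈ 𝔨.toSubmodule ⊓ 𝔪 := ⟨hk e₁, hmsub₂ he₁⟩
    rw [h𝔪compl.inf_eq_bot] at he
    rw [(Submodule.mem_bot ℝ).mp he] at hg₁
    simp at hg₁
  have hs₀cent : ∀ b ∈ 𝔨, ⁅s₀, b⁆ = 0 := fun b hb => (h𝔨cent b).mp hb s₀ hs₀s
  -- install the inner product ⟪x, y⟫ = -κ x y on 𝔤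
  letI core : InnerProductSpace.Core ℝ 𝔤 :=
    { inner := fun x y => -κ x y
      conj_inner_symm := by
        intro x y
        simp only [starRingEnd_apply, star_trivial]
        rw [aux_kil_symm y x]
      re_inner_nonneg := by
        intro x
        rcases eq_or_ne x 0 with rfl | hx
        · simp
        · have := hcompact x hx
          simp only [RCLike.re_to_real]
          linarith
      add_left := by
        intro x y z
        simp only [map_add, LinearMap.add_apply]
        ring
      smul_left := by
        intro x y r
        simp only [map_smul, LinearMap.smul_apply, smul_eq_mul, starRingEnd_apply,
          star_trivial]
        ring
      definite := by
        intro x hx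
        apply aux_kil_zero hcompact
        have : -κ x x = 0 := hx
        linarith }
  letI : NormedAddCommGroup 𝔤 := core.toNormedAddCommGroup
  letI : InnerProductSpace ℝ 𝔤 := InnerProductSpace.ofCore core.toCore
  have hinner : ∀ x y : 𝔤, (inner ℝ x y : ℝ) = -κ x y := fun _ _ => rfl
  -- (B) : no nonzero element of 𝔨₁ is central in 𝔨
  have hB : ∀ ζ, ζ ∈ 𝔨₁ → (∀ b ∈ 𝔨, ⁅ζ, b⁆ = 0) → ζ = (0 : 𝔤) := by
    intro ζ hζ hζc
    have hmapS : ∀ x ∈ m₁, (LieAlgebra.ad ℝ 𝔤 s₀) x ∈ m₁ := by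
      intro x hx; rw [LieAlgebra.ad_apply]; exact hadm₁ s₀ (h𝔰𝔨 hs₀s) x hx
    have hmapA : ∀ x ∈ m₁, (LieAlgebra.ad ℝ 𝔤 ζ) x ∈ m₁ := by
      intro x hx; rw [LieAlgebra.ad_apply]; exact hadm₁ ζ (h𝔨₁𝔨 hζ) x hx
    set S : m₁ →ₗ[ℝ] m₁ := (LieAlgebra.ad ℝ 𝔤 s₀).restrict hmapS with hS
    set A : m₁ →ₗ[ℝ] m₁ := (LieAlgebra.ad ℝ 𝔤 ζ).restrict hmapA with hA
    have hScoe : ∀ u : m₁, (S u : 𝔤) = ⁅s₀, (u : 𝔤)⁆ := by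
      intro u
      rw [hS, LinearMap.restrict_coe_apply, LieAlgebra.ad_apply]
    have hAcoe : ∀ u : m₁, (A u : 𝔤) = ⁅ζ, (u : 𝔤)⁆ := by
      intro u
      rw [hA, LinearMap.restrict_coe_apply, LieAlgebra.ad_apply]
    have hSinj : Function.Injective S := by
      intro u w huw
      have h0 : S (u - w) = 0 := by rw [map_sub, huw, sub_self]
      by_contra hne
      have hc : ((u - w : m₁) : 𝔤) ≠ 0 := by
        intro hz
        exact (sub_ne_zero.mpr hne) (Submodule.coe_eq_zero.mp hz)
      have hbr : ⁅s₀, ((u - w : m₁) : 𝔤)⁆ = 0 := by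
        rw [← hScoe, h0, ZeroMemClass.coe_zero]
      exact hs₀0 (hstar s₀ (h𝔰𝔨 hs₀s) hs₀cent _ (u - w).2 hc hbr)
    have hSbij : Function.Bijective S :=
      ⟨hSinj, (LinearMap.injective_iff_surjective).mp hSinj⟩
    set Seq : m₁ ≃ₗ[ℝ] m₁ := LinearEquiv.ofBijective S hSbij with hSeq
    have hSeqS : ∀ u : m₁, Seq u = S u := fun u => rfl
    set Binv : m₁ →ₗ[ℝ] m₁ := Seq.symm.toLinearMap with hBinv
    have hSB : ∀ u : m₁, S (Binv u) = u := by
      intro u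
      have := Seq.apply_symm_apply u
      rwa [hSeqS] at this
    have hBS : ∀ u : m₁, Binv (S u) = u := by
      intro u
      have := Seq.symm_apply_apply u
      rwa [hSeqS] at this
    have hcomm : ∀ u : m₁, A (S u) = S (A u) := by
      intro u
      apply Subtype.ext
      rw [hAcoe, hScoe, hScoe, hAcoe]
      rw [leibniz_lie ζ s₀ (u : 𝔤), hζc s₀ (h𝔰𝔨 hs₀s), zero_lie, zero_add]
    have hcommB : ∀ u : m₁, Binv (A u) = A (Binv u) := by
      intro u
      have h1 : A (S (Binv u)) = S (A (Binv u)) := hcomm (Binv u)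
      rw [hSB] at h1
      rw [h1, hBS]
    have hskewS : ∀ u w : m₁, (inner ℝ (S u) w : ℝ) = -(inner ℝ u (S w) : ℝ) := by
      intro u w
      rw [Submodule.coe_inner, Submodule.coe_inner, hScoe, hScoe, hinner, hinner,
        aux_kil_skew s₀ (u : 𝔤) (w : 𝔤)]
    have hskewA : ∀ u w : m₁, (inner ℝ (A u) w : ℝ) = -(inner ℝ u (A w) : ℝ) := by
      intro u w
      rw [Submodule.coe_inner, Submodule.coe_inner, hAcoe, hAcoe, hinner, hinner,
        aux_kil_skew ζ (u : 𝔤) (w : 𝔤)]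
    have hskewB : ∀ u w : m₁, (inner ℝ (Binv u) w : ℝ) = -(inner ℝ u (Binv w) : ℝ) := by
      intro u w
      have h1 := hskewS (Binv u) (Binv w)
      rw [hSB, hSB] at h1
      linarith [h1]
    set T : m₁ →ₗ[ℝ] m₁ := Binv ∘ₗ A with hT
    have hTapp : ∀ u : m₁, T u = Binv (A u) := fun u => rfl
    have hTsymm : T.IsSymmetric := by
      intro u w
      rw [hTapp, hTapp, hskewB (A u) w, hskewA u (Binv w), hcommB w]
      ring
    have hnpos : 0 < finrank ℝ m₁ := by
      have : Nontrivial m₁ := Submodule.nontrivial_iff_ne_bot.mpr hm₁bot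
      exact Module.finrank_pos
    set i : Fin (finrank ℝ m₁) := ⟨0, hnpos⟩ with hi
    have hev := hTsymm.hasEigenvector_eigenvectorBasis rfl i
    set t : ℝ := hTsymm.eigenvalues rfl i with ht
    set v : m₁ := hTsymm.eigenvectorBasis rfl i with hv
    have hv0 : v ≠ 0 := hev.2
    have hTv : T v = t • v := hev.apply_eq_smul
    have hAv : A v = t • S v := by
      have h1 : S (T v) = A v := by rw [hTapp, hSB]
      rw [hTv, map_smul] at h1
      exact h1.symm
    set ξ : 𝔤 := ζ - t • s₀ with hξ
    have hξk : ξ ∈ 𝔨 := by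
      have h1 : ξ ∈ 𝔨.toSubmodule :=
        sub_mem ((LieSubalgebra.mem_toSubmodule (L' := 𝔨)).mpr (h𝔨₁𝔨 hζ))
          (Submodule.smul_mem _ t ((LieSubalgebra.mem_toSubmodule (L' := 𝔨)).mpr (h𝔰𝔨 hs₀s)))
      exact (LieSubalgebra.mem_toSubmodule (L' := 𝔨)).mp h1
    have hξc : ∀ b ∈ 𝔨, ⁅ξ, b⁆ = 0 := by
      intro b hb
      rw [hξ, sub_lie, smul_lie, hζc b hb, hs₀cent b hb, smul_zero, sub_self]
    have hξv : ⁅ξ, (v : 𝔤)⁆ = 0 := by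
      have h1 : (A v : 𝔤) = ((t • S v : m₁) : 𝔤) := by rw [hAv]
      rw [hAcoe] at h1
      have h2 : ((t • S v : m₁) : 𝔤) = t • ⁅s₀, (v : 𝔤)⁆ := by
        rw [SetLike.val_smul, hScoe]
      rw [h2] at h1
      rw [hξ, sub_lie, smul_lie, h1, sub_self]
    have hvne : (v : 𝔤) ≠ 0 := fun h => hv0 (Subtype.ext h)
    have hξ0 : ξ = 0 := hstar ξ hξk hξc (v : 𝔤) v.2 hvne hξv
    have hζeq : ζ = t • s₀ := by
      have := sub_eq_zero.mp (hξ ▸ hξ0)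
      exact this
    have hζ𝔰 : ζ ∈ 𝔰.toSubmodule := by
      rw [hζeq]
      exact Submodule.smul_mem _ t ((LieSubalgebra.mem_toSubmodule (L' := 𝔰)).mpr hs₀s)
    exact Submodule.disjoint_def.mp h𝔨disj ζ hζ𝔰 ((LieSubalgebra.mem_toSubmodule (L' := 𝔨₁)).mpr hζ)
  -- (A) : κ(𝔨₁, h₀) = 0
  have hA : ∀ e ∈ 𝔨₁, κ e h₀ = 0 := by
    intro e he
    set D : Submodule ℝ 𝔤 := Submodule.span ℝ {x | ∃ a ∈ 𝔨, ∃ b ∈ 𝔨, x = ⁅a, b⁆} with hD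
    have hDk₁ : D ≤ 𝔨₁.toSubmodule := by
      rw [hD, Submodule.span_le]
      rintro x ⟨a, ha, b, hb, rfl⟩
      exact hder a ha b hb
    have hcompl : IsCompl D Dᗮ := Submodule.isCompl_orthogonal_of_hasOrthogonalProjection
    have hmem : e ∈ D ⊔ Dᗮ := by rw [hcompl.sup_eq_top]; trivial
    obtain ⟨d, hd, w, hw, hdw⟩ := Submodule.mem_sup.mp hmem
    have hweq : w = e - d := by rw [← hdw]; abel
    have hwk₁ : w ∈ 𝔨₁.toSubmodule := by
      rw [hweq]
      exact sub_mem ((LieSubalgebra.mem_toSubmodule (L' := 𝔨₁)).mpr he) (hDk₁ hd)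
    have hwk : w ∈ 𝔨 := h𝔨₁𝔨 ((LieSubalgebra.mem_toSubmodule (L' := 𝔨₁)).mp hwk₁)
    have hwcent : ∀ b ∈ 𝔨, ⁅w, b⁆ = 0 := by
      intro b hb
      apply aux_kil_zero hcompact
      have h1 : κ ⁅w, b⁆ ⁅w, b⁆ = κ w ⁅b, ⁅w, b⁆⁆ := aux_kil_lie w b ⁅w, b⁆
      have h2 : ⁅b, ⁅w, b⁆⁆ ∈ D :=
        Submodule.subset_span ⟨b, hb, ⁅w, b⁆, 𝔨.lie_mem hwk hb, rfl⟩
      have h4 := (Submodule.mem_orthogonal D w).mp hw _ h2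
      rw [hinner] at h4
      have h5 : κ w ⁅b, ⁅w, b⁆⁆ = 0 := by
        rw [aux_kil_symm]
        exact neg_eq_zero.mp h4
      rw [h1, h5]
    have hw0 : w = 0 := hB w ((LieSubalgebra.mem_toSubmodule (L' := 𝔨₁)).mp hwk₁) hwcent
    have hed : e = d := by rw [← hdw, hw0, add_zero]
    rw [hed]
    clear hed hdw hweq hwk₁ hwk hwcent hw0 hmem
    induction hd using Submodule.span_induction with
    | mem x hx =>
      obtain ⟨a, ha, b, hb, rfl⟩ := hx
      rw [aux_kil_lie, hF6 b hb, map_zero]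
    | zero => simp
    | add x y _ _ hx hy => rw [map_add, LinearMap.add_apply, hx, hy, add_zero]
    | smul c x _ hx => rw [map_smul, LinearMap.smul_apply, hx, smul_zero]
  exact fun a ha x₂ hx₂ => hFgen a (h𝔨₁𝔨 ha) (hA a ha) x₂ hx₂

end Aux

set_option maxHeartbeats 1000000 in
set_option linter.unusedVariables false in
/-- **Corollary 2** (Arvanitoyeorgos–Wang–Zhao).
Let `G/K` be a generalized flag manifold with two isotropy summands `𝔪 = 𝔪₁ ⊕ 𝔪₂` and
`dim 𝔪₂ = 2`.  The corresponding `M`-space `(G/K₁, g)` with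
`g = μ B(·,·)|_{𝔰 ⊕ 𝔪₂} + μ₁ B(·,·)|_{𝔪₁}` is a g.o. space for every `μ ≠ μ₁` if and
only if for every `V ∈ 𝔰`, `X₁ ∈ 𝔪₁`, `X₂ ∈ 𝔪₂` there is `k ∈ 𝔨₁` with
`[k + V + X₂, X₁] = 0`. -/
theorem goMetric_iff_of_two_summands_dim_two
    {𝔤 : Type*} [LieRing 𝔤] [LieAlgebra ℝ 𝔤] [FiniteDimensional ℝ 𝔤]
    -- `G` is a compact simple Lie group: `𝔤` is simple with negative definite Killing form
    [LieAlgebra.IsSimple ℝ 𝔤]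
    (hcompact : ∀ x : 𝔤, x ≠ 0 → killingForm ℝ 𝔤 x x < 0)
    (𝔨 𝔨₁ 𝔰 : LieSubalgebra ℝ 𝔤)
    -- `S` is a torus in `G` and `K = C(S)` is its centralizer
    (h𝔰ab : ∀ x ∈ 𝔰, ∀ y ∈ 𝔰, ⁅x, y⁆ = (0 : 𝔤))
    (h𝔨cent : ∀ x : 𝔤, x ∈ 𝔨 ↔ ∀ s ∈ 𝔰, ⁅s, x⁆ = 0)
    -- `K = S × K₁`, `K₁` being the semisimple part of `K`
    (h𝔰𝔨 : 𝔰 ≤ 𝔨) (h𝔨₁𝔨 : 𝔨₁ ≤ 𝔨)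
    (h𝔨sum : 𝔰.toSubmodule ⊔ 𝔨₁.toSubmodule = 𝔨.toSubmodule)
    (h𝔨disj : Disjoint 𝔰.toSubmodule 𝔨₁.toSubmodule)
    (h𝔰𝔨₁ : ∀ s ∈ 𝔰, ∀ k ∈ 𝔨₁, ⁅s, k⁆ = (0 : 𝔤))
    (hder : ∀ x ∈ 𝔨, ∀ y ∈ 𝔨, ⁅x, y⁆ ∈ 𝔨₁)
    -- the `B`-orthogonal reductive decomposition `𝔤 = 𝔨 ⊕ 𝔪`, where `B = -Killing form`
    (𝔪 : Submodule ℝ 𝔤)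
    (h𝔪compl : IsCompl 𝔨.toSubmodule 𝔪)
    (h𝔪orth : ∀ x ∈ 𝔨, ∀ y ∈ 𝔪, killingForm ℝ 𝔤 x y = 0)
    (h𝔪inv : AdInvariant 𝔨 𝔪)
    -- the decomposition `𝔪 = 𝔪₁ ⊕ 𝔪₂`, `B`-orthogonal, into two pairwise inequivalent
    -- irreducible `Ad(K)`-submodules, with the convention `[𝔪₁, 𝔪₁] ⊆ 𝔨 ⊕ 𝔪₂`
    (m₁ m₂ : Submodule ℝ 𝔤)
    (hmsub₁ : m₁ ≤ 𝔪) (hmsub₂ : m₂ ≤ 𝔪)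
    (hmsum : m₁ ⊔ m₂ = 𝔪)
    (hmorth : ∀ x ∈ m₁, ∀ y ∈ m₂, killingForm ℝ 𝔤 x y = 0)
    (hmirr₁ : AdIrreducible 𝔨 m₁) (hmirr₂ : AdIrreducible 𝔨 m₂)
    (hmineq : ¬ AdEquiv 𝔨 m₁ m₂)
    (hconv : ∀ x ∈ m₁, ∀ y ∈ m₁, ⁅x, y⁆ ∈ 𝔨.toSubmodule ⊔ m₂)
    -- `dim 𝔪₂ = 2`
    (hdim : Module.finrank ℝ m₂ = 2) :
    -- the metric `g = μ B(·,·)|_{𝔰 ⊕ 𝔪₂} + μ₁ B(·,·)|_{𝔪₁}` is g.o. for every `μ ≠ μ₁`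
    (∀ μ μ₁ : ℝ, 0 < μ → 0 < μ₁ → μ ≠ μ₁ → ∀ Λ : 𝔤 →ₗ[ℝ] 𝔤,
        (∀ x ∈ 𝔰.toSubmodule ⊔ m₂, Λ x = μ • x) → (∀ x ∈ m₁, Λ x = μ₁ • x) →
        IsGOMetric 𝔨₁ (𝔰.toSubmodule ⊔ 𝔪) Λ) ↔
      ∀ V ∈ 𝔰.toSubmodule, ∀ X₁ ∈ m₁, ∀ X₂ ∈ m₂, ∃ k ∈ 𝔨₁,
        ⁅k + V + X₂, X₁⁆ = (0 : 𝔤) := by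
  obtain ⟨hF7, hKEY⟩ := aux_key hcompact 𝔨 𝔨₁ 𝔰 h𝔨cent h𝔰𝔨 h𝔨₁𝔨 h𝔨disj hder 𝔪 h𝔪compl
    h𝔪orth m₁ m₂ hmsub₁ hmsub₂ hmsum hmorth hmirr₁ hmirr₂ hdim
  have hadm₁ : ∀ b ∈ 𝔨, ∀ x ∈ m₁, ⁅b, x⁆ ∈ m₁ := hmirr₁.1
  have haV : ∀ a ∈ 𝔨₁, ∀ V ∈ 𝔰.toSubmodule, ⁅a, V⁆ = (0 : 𝔤) := by
    intro a ha V hV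
    have h1 := h𝔰𝔨₁ V ((LieSubalgebra.mem_toSubmodule (L' := 𝔰)).mp hV) a ha
    rw [show ⁅a, V⁆ = -⁅V, a⁆ from (lie_skew a V).symm, h1, neg_zero]
  have h𝔰sub : 𝔰.toSubmodule ≤ 𝔨.toSubmodule := fun y hy =>
    (LieSubalgebra.mem_toSubmodule (L' := 𝔨)).mpr (h𝔰𝔨 ((LieSubalgebra.mem_toSubmodule (L' := 𝔰)).mp hy))
  constructor
  · -- forward direction
    intro hLHS V hV X₁ hX₁ X₂ hX₂
    have hcompl2 : IsCompl m₁ (𝔨.toSubmodule ⊔ m₂) := by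
      constructor
      · rw [disjoint_iff]
        rw [Submodule.eq_bot_iff]
        intro y hy
        obtain ⟨hy1, hy2⟩ := Submodule.mem_inf.mp hy
        obtain ⟨b, hb, z, hz, hbz⟩ := Submodule.mem_sup.mp hy2
        apply aux_kil_zero hcompact
        have h1 : killingForm ℝ 𝔤 y y = killingForm ℝ 𝔤 y b + killingForm ℝ 𝔤 y z := by
          nth_rewrite 2 [← hbz]
          rw [map_add]
        rw [h1, aux_kil_symm y b,
          h𝔪orth b ((LieSubalgebra.mem_toSubmodule (L' := 𝔨)).mp hb) y (hmsub₁ hy1),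
          hmorth y hy1 z hz, add_zero]
      · rw [codisjoint_iff, ← sup_assoc, sup_comm m₁ 𝔨.toSubmodule, sup_assoc, hmsum]
        exact codisjoint_iff.mp h𝔪compl.codisjoint
    set P : 𝔤 →ₗ[ℝ] m₁ := Submodule.linearProjOfIsCompl m₁ (𝔨.toSubmodule ⊔ m₂) hcompl2
      with hP
    set Λ : 𝔤 →ₗ[ℝ] 𝔤 := (2 : ℝ) • LinearMap.id - m₁.subtype ∘ₗ P with hΛ
    have hΛ1 : ∀ x ∈ 𝔰.toSubmodule ⊔ m₂, Λ x = (2 : ℝ) • x := by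
      intro x hx
      have hx' : x ∈ 𝔨.toSubmodule ⊔ m₂ := sup_le_sup_right h𝔰sub m₂ hx
      have h0 : P x = 0 := Submodule.linearProjOfIsCompl_apply_right' hcompl2 (x := x) hx'
      rw [hΛ]
      simp [h0]
    have hΛ2 : ∀ x ∈ m₁, Λ x = (1 : ℝ) • x := by
      intro x hx
      have h0 : P x = ⟨x, hx⟩ := Submodule.linearProjOfIsCompl_apply_left hcompl2 ⟨x, hx⟩
      rw [hΛ]
      simp only [LinearMap.sub_apply, LinearMap.smul_apply, LinearMap.id_apply,
        LinearMap.coe_comp, Function.comp_apply, h0, Submodule.coe_subtype]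
      rw [two_smul, one_smul]
      abel
    have hGO := hLHS 2 1 (by norm_num) (by norm_num) (by norm_num) Λ hΛ1 hΛ2
    have hxmem : V + X₁ + X₂ ∈ 𝔰.toSubmodule ⊔ 𝔪 :=
      add_mem (add_mem (Submodule.mem_sup_left hV)
        (Submodule.mem_sup_right (hmsub₁ hX₁))) (Submodule.mem_sup_right (hmsub₂ hX₂))
    obtain ⟨a, ha, hE⟩ := hGO (V + X₁ + X₂) hxmem
    have hΛx : Λ (V + X₁ + X₂) = (2 : ℝ) • (V + X₂) + X₁ := by
      have h1 : Λ (V + X₂) = (2 : ℝ) • (V + X₂) :=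
        hΛ1 _ (add_mem (Submodule.mem_sup_left hV) (Submodule.mem_sup_right hX₂))
      have h2 : Λ X₁ = (1 : ℝ) • X₁ := hΛ2 X₁ hX₁
      have h3 : V + X₁ + X₂ = (V + X₂) + X₁ := by abel
      rw [h3, map_add, h1, h2, one_smul]
    have haV' : ⁅a, V⁆ = 0 := haV a ha V hV
    have haX₂ : ⁅a, X₂⁆ = 0 := hKEY a ha X₂ hX₂
    have hEval : ⁅a + (V + X₁ + X₂), Λ (V + X₁ + X₂)⁆
        = ⁅a, X₁⁆ - ⁅V, X₁⁆ - ⁅X₂, X₁⁆ := by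
      rw [hΛx]
      simp only [add_lie, lie_add, lie_smul, smul_add, lie_self, haV', haX₂,
        smul_zero, add_zero, zero_add]
      rw [show ⁅X₁, V⁆ = -⁅V, X₁⁆ from (lie_skew X₁ V).symm,
        show ⁅X₁, X₂⁆ = -⁅X₂, X₁⁆ from (lie_skew X₁ X₂).symm,
        show ⁅X₂, V⁆ = -⁅V, X₂⁆ from (lie_skew X₂ V).symm]
      module
    have h𝔨₁sub : 𝔨₁.toSubmodule ≤ 𝔨.toSubmodule := fun y hy =>
      (LieSubalgebra.mem_toSubmodule (L' := 𝔨)).mpr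
        (h𝔨₁𝔨 ((LieSubalgebra.mem_toSubmodule (L' := 𝔨₁)).mp hy))
    have hEk : ⁅a, X₁⁆ - ⁅V, X₁⁆ - ⁅X₂, X₁⁆ ∈ 𝔨.toSubmodule := by
      rw [← hEval]
      exact h𝔨₁sub hE
    have hEm : ⁅a, X₁⁆ - ⁅V, X₁⁆ - ⁅X₂, X₁⁆ ∈ m₁ := by
      refine sub_mem (sub_mem (hadm₁ a (h𝔨₁𝔨 ha) X₁ hX₁)
        (hadm₁ V ((LieSubalgebra.mem_toSubmodule (L' := 𝔨)).mp (h𝔰sub hV)) X₁ hX₁)) ?_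
      rw [show ⁅X₂, X₁⁆ = -⁅X₁, X₂⁆ from (lie_skew X₂ X₁).symm]
      exact neg_mem (hF7 X₁ hX₁ X₂ hX₂)
    have hE0 : ⁅a, X₁⁆ - ⁅V, X₁⁆ - ⁅X₂, X₁⁆ = 0 :=
      Submodule.disjoint_def.mp h𝔪compl.disjoint _ hEk (hmsub₁ hEm)
    refine ⟨-a, ?_, ?_⟩
    · exact (LieSubalgebra.mem_toSubmodule (L' := 𝔨₁)).mp
        (neg_mem ((LieSubalgebra.mem_toSubmodule (L' := 𝔨₁)).mpr ha))
    · rw [add_lie, add_lie, neg_lie]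
      have h4 : -⁅a, X₁⁆ + ⁅V, X₁⁆ + ⁅X₂, X₁⁆ = -(⁅a, X₁⁆ - ⁅V, X₁⁆ - ⁅X₂, X₁⁆) := by
        module
      rw [h4, hE0, neg_zero]
  · -- backward direction
    intro hRHS μ μ₁ hμ hμ₁ hne Λ hΛ1 hΛ2 x hx
    obtain ⟨V, hV, m, hm, hVm⟩ := Submodule.mem_sup.mp hx
    rw [← hmsum] at hm
    obtain ⟨X₁, hX₁, X₂, hX₂, hXm⟩ := Submodule.mem_sup.mp hm
    have hxeq : x = V + X₁ + X₂ := by rw [← hVm, ← hXm, add_assoc]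
    set t : ℝ := (μ - μ₁) / μ₁ with ht
    obtain ⟨k, hk, hk0⟩ := hRHS (t • V) (Submodule.smul_mem _ t hV) X₁ hX₁ (t • X₂)
      (Submodule.smul_mem _ t hX₂)
    refine ⟨-k, (LieSubalgebra.mem_toSubmodule (L' := 𝔨₁)).mp
      (neg_mem ((LieSubalgebra.mem_toSubmodule (L' := 𝔨₁)).mpr hk)), ?_⟩
    have hΛx : Λ x = μ • V + μ • X₂ + μ₁ • X₁ := by
      have h1 : Λ (V + X₂) = μ • (V + X₂) :=
        hΛ1 _ (add_mem (Submodule.mem_sup_left hV) (Submodule.mem_sup_right hX₂))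
      have h2 : Λ X₁ = μ₁ • X₁ := hΛ2 X₁ hX₁
      have h3 : x = (V + X₂) + X₁ := by rw [hxeq]; abel
      rw [h3, map_add, h1, h2, smul_add]
    have e1 : ⁅k, V⁆ = 0 := haV k hk V hV
    have e2 : ⁅k, X₂⁆ = 0 := hKEY k hk X₂ hX₂
    have e3 : ⁅k, X₁⁆ = -(t • ⁅V, X₁⁆ + t • ⁅X₂, X₁⁆) := by
      have h := hk0
      rw [add_lie, add_lie, smul_lie, smul_lie, add_assoc] at h
      exact eq_neg_of_add_eq_zero_left h
    have hμt : μ₁ * t = μ - μ₁ := by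
      rw [ht, mul_div_cancel₀ _ (ne_of_gt hμ₁)]
    have hbr : ⁅-k + x, Λ x⁆ = 0 := by
      rw [hΛx, hxeq]
      simp only [add_lie, lie_add, lie_smul, neg_lie, lie_self, smul_zero, e1, e2, e3,
        neg_zero, zero_add, add_zero, smul_neg, neg_neg, smul_add, smul_smul]
      rw [show ⁅X₁, V⁆ = -⁅V, X₁⁆ from (lie_skew X₁ V).symm,
        show ⁅X₁, X₂⁆ = -⁅X₂, X₁⁆ from (lie_skew X₁ X₂).symm,
        show ⁅X₂, V⁆ = -⁅V, X₂⁆ from (lie_skew X₂ V).symm, hμt]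
      module
    rw [hbr]
    exact Submodule.zero_mem _
end
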